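/- arXiv:1806.08754 — 8 statements merged into one kernel-verified Lean document; each statement's English description precedes it below -/
import Mathlib

section
/- For all ℓ, m, n ≥ 1, the map (σ, τ) ↦ τ·(1_{ℓ+1}∘_{ℓ+1}σ) is a bijection from S_{m,n} × S_{ℓ,m+n} onto S_{ℓ,m,n}, where · denotes the product in the symmetric group S_{ℓ+m+n}. -/
open Equiv

/-- The equivalence between the lexicographically ordered sigma of `Fin (m i)` over `Fin n`
and `Fin (∑ i, m i)`, identifying the `i`-th block with the positions
`m 0 + ⋯ + m (i-1) + 1, …, m 0 + ⋯ + m i`. -/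
def sigmaFinSucc {n : ℕ} (β : Fin (n + 1) → Type*) :
    (Σ i : Fin (n + 1), β i) ≃ β 0 ⊕ (Σ i : Fin n, β i.succ) where
  toFun p :=
    Fin.cases (motive := fun i => β i → β 0 ⊕ (Σ i : Fin n, β i.succ))
      Sum.inl (fun i j => Sum.inr ⟨i, j⟩) p.1 p.2
  invFun x := Sum.elim (fun j => ⟨0, j⟩) (fun p => ⟨p.1.succ, p.2⟩) x
  left_inv := by
    rintro ⟨i, j⟩
    induction i using Fin.cases with
    | zero => simp
    | succ i => simp
  right_inv := by rintro (j | ⟨i, j⟩) <;> simp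

def finSigmaEquiv : ∀ (n : ℕ) (m : Fin n → ℕ), (Σ i, Fin (m i)) ≃ Fin (∑ i, m i)
  | 0, m =>
    haveI h1 : IsEmpty (Σ i : Fin 0, Fin (m i)) := ⟨fun p => p.1.elim0⟩
    haveI h2 : IsEmpty (Fin (∑ i, m i)) := by
      rw [show (∑ i, m i) = 0 by simp]
      infer_instance
    Equiv.equivOfIsEmpty _ _
  | n + 1, m =>
    ((sigmaFinSucc fun i => Fin (m i)).trans <|
      ((Equiv.refl (Fin (m 0))).sumCongr (finSigmaEquiv n fun i => m i.succ)).trans <|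
        finSumFinEquiv.trans (finCongr (Fin.sum_univ_succ m).symm))

/-- The operadic composition of permutations `σ(τ_1,…,τ_n) ∈ S_{m_1 + ⋯ + m_n}`:
the element in the `i`-th block at position `j` is sent to position `τ_i(j)` of the
block placed at slot `σ(i)`, the blocks being rearranged according to `σ` (so that the
new `k`-th block has size `m (σ⁻¹ k)`). -/
def permCompose {n : ℕ} {m : Fin n → ℕ} (σ : Equiv.Perm (Fin n))
    (τ : ∀ i, Equiv.Perm (Fin (m i))) : Equiv.Perm (Fin (∑ i, m i)) :=
  ((finSigmaEquiv n m).symm.trans <|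
    (Equiv.sigmaCongr σ fun i =>
      (τ i).trans (finCongr (congrArg m (σ.symm_apply_apply i).symm))).trans <|
    (finSigmaEquiv n fun k => m (σ.symm k)).trans (finCongr (Equiv.sum_comp σ.symm m)))

lemma circ_sum {n m : ℕ} (i : Fin n) :
    (∑ j : Fin n, if j = i then m else 1) = n + m - 1 := by
  classical
  rw [← Finset.add_sum_erase Finset.univ _ (Finset.mem_univ i), if_pos rfl]
  rw [Finset.sum_congr rfl (fun j hj => if_neg (Finset.ne_of_mem_erase hj)),
    Finset.sum_const, smul_eq_mul, mul_one,
    Finset.card_erase_of_mem (Finset.mem_univ i), Finset.card_univ, Fintype.card_fin]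
  have := i.isLt
  omega

/-- The `∘_i`-product of permutations: `β ∘_i α := β(1,…,1,α,1,…,1) ∈ S_{n+m-1}`
with `α` inserted in the `i`-th slot (`0`-indexed). -/
def circ {n m : ℕ} (β : Equiv.Perm (Fin n)) (i : Fin n) (α : Equiv.Perm (Fin m)) :
    Equiv.Perm (Fin (n + m - 1)) :=
  (finCongr (circ_sum i)).permCongr
    (permCompose (m := fun j => if j = i then m else 1) β
      (fun j => if h : j = i then (finCongr (if_pos h).symm).permCongr α else 1))

/-- `(m,n)`-shuffle condition for `σ ∈ S_N` with split point `m` (`0`-indexed):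
`σ 0 < σ 1 < ⋯ < σ (m-1)` and `σ m < σ (m+1) < ⋯`. -/
def IsShuffle {N : ℕ} (m : ℕ) (σ : Equiv.Perm (Fin N)) : Prop :=
  (∀ i j : Fin N, i < j → (j : ℕ) < m → σ i < σ j) ∧
  (∀ i j : Fin N, i < j → m ≤ (i : ℕ) → σ i < σ j)

/-- `(l,m,n)`-shuffle condition for `σ ∈ S_N` with split points `l` and `l + m`. -/
def IsShuffle3 {N : ℕ} (l m : ℕ) (σ : Equiv.Perm (Fin N)) : Prop :=
  (∀ i j : Fin N, i < j → (j : ℕ) < l → σ i < σ j) ∧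
  (∀ i j : Fin N, i < j → l ≤ (i : ℕ) → (j : ℕ) < l + m → σ i < σ j) ∧
  (∀ i j : Fin N, i < j → l + m ≤ (i : ℕ) → σ i < σ j)

section Aux
open Finset in
lemma finSigmaEquiv_coe : ∀ (n : ℕ) (m : Fin n → ℕ) (i : Fin n) (j : Fin (m i)),
    ((finSigmaEquiv n m ⟨i, j⟩ : Fin (∑ i, m i)) : ℕ)
      = (∑ k : Fin n, if (k : ℕ) < (i : ℕ) then m k else 0) + j
  | 0, m, i, j => i.elim0
  | n + 1, m, i, j => by
    induction i using Fin.cases with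
    | zero =>
      simp [finSigmaEquiv, sigmaFinSucc]
    | succ i =>
      simp only [finSigmaEquiv, sigmaFinSucc, Equiv.trans_apply, Equiv.coe_fn_mk,
        Fin.cases_succ, Equiv.sumCongr_apply, Sum.map_inr, finSumFinEquiv_apply_right,
        finCongr_apply, Fin.coe_cast, Fin.coe_natAdd]
      rw [finSigmaEquiv_coe n (fun k => m k.succ) i j]
      rw [Fin.sum_univ_succ (f := fun k : Fin (n+1) => if (k : ℕ) < ((i.succ : Fin (n+1)) : ℕ) then m k else 0)]
      simp [Fin.succ_lt_succ_iff]
      omega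

lemma permCompose_one_coe {n : ℕ} {m : Fin n → ℕ} (τ : ∀ i, Equiv.Perm (Fin (m i)))
    (i : Fin n) (j : Fin (m i)) :
    ((permCompose (1 : Equiv.Perm (Fin n)) τ (finSigmaEquiv n m ⟨i, j⟩) : Fin (∑ i, m i)) : ℕ)
      = ((finSigmaEquiv n m ⟨i, τ i j⟩ : Fin (∑ i, m i)) : ℕ) := by
  simp only [permCompose, Equiv.trans_apply, Equiv.symm_apply_apply, Equiv.sigmaCongr,
    Equiv.coe_fn_mk, Sigma.map, finCongr_apply, Fin.coe_cast]
  rfl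

lemma sum_indicator_lt (N k : ℕ) (h : k ≤ N) :
    ∑ j ∈ Finset.range N, (if j < k then 1 else 0) = k := by
  induction N with
  | zero => simpa using h.antisymm (Nat.zero_le k) |>.symm
  | succ N ih =>
    rw [Finset.sum_range_succ]
    by_cases hk : k = N + 1
    · subst hk
      rw [if_pos (Nat.lt_succ_self N)]
      rw [Finset.sum_congr rfl (fun j hj => if_pos (by
        simp only [Finset.mem_range] at hj; omega))]
      simp
    · rw [ih (by omega), if_neg (by omega)]; omega

lemma inner_coe (l m n : ℕ) (σ : Equiv.Perm (Fin (m + n))) (x : Fin (l + m + n)) :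
    (((finCongr (show l + 1 + (m + n) - 1 = l + m + n by omega)).permCongr
        (circ (1 : Equiv.Perm (Fin (l + 1))) ⟨l, by omega⟩ σ)) x : ℕ) =
      if h : (x : ℕ) < l then (x : ℕ)
      else l + σ ⟨(x : ℕ) - l, by have := x.isLt; omega⟩ := by
  have hx := x.isLt
  simp only [circ, Equiv.permCongr_apply, finCongr_symm, finCongr_apply, Fin.coe_cast]
  set b : Fin (l + 1) → ℕ := fun j => if j = ⟨l, by omega⟩ then m + n else 1 with hb
  have hsum : ∀ k : ℕ, k ≤ l →
      (∑ j : Fin (l + 1), if (j : ℕ) < k then b j else 0) = k := by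
    intro k hk
    have : ∀ j : Fin (l + 1), (if (j : ℕ) < k then b j else 0)
        = (if (j : ℕ) < k then 1 else 0) := by
      intro j
      by_cases h : (j : ℕ) < k
      · simp only [if_pos h, hb]
        rw [if_neg (by intro hje; rw [hje] at h; simp at h; omega)]
      · simp [h]
    rw [Finset.sum_congr rfl fun j _ => this j,
      Fin.sum_univ_eq_sum_range (fun j => if j < k then 1 else 0),
      sum_indicator_lt _ _ (by omega)]
  by_cases hxl : (x : ℕ) < l
  · rw [dif_pos hxl]
    have hne : (⟨(x : ℕ), by omega⟩ : Fin (l + 1)) ≠ ⟨l, by omega⟩ := by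
      intro hje; have := congrArg Fin.val hje; simp at this; omega
    have hy : (Fin.cast (circ_sum (m := m + n) ⟨l, by omega⟩).symm
        (Fin.cast (show l + m + n = l + 1 + (m + n) - 1 by omega) x))
        = finSigmaEquiv (l + 1) b ⟨⟨(x : ℕ), by omega⟩, ⟨0, by simp [hb]; split <;> omega⟩⟩ := by
      apply Fin.ext
      rw [Fin.coe_cast, Fin.coe_cast, finSigmaEquiv_coe]
      simp [hsum (x : ℕ) (by omega)]
    rw [hy, permCompose_one_coe, finSigmaEquiv_coe, hsum (x : ℕ) (by omega)]
    rw [dif_neg hne, Equiv.Perm.one_apply]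
    simp
  · rw [dif_neg hxl]
    have hjlt : (x : ℕ) - l < b ⟨l, by omega⟩ := by simp [hb]; omega
    have hy : (Fin.cast (circ_sum (m := m + n) ⟨l, by omega⟩).symm
        (Fin.cast (show l + m + n = l + 1 + (m + n) - 1 by omega) x))
        = finSigmaEquiv (l + 1) b ⟨⟨l, by omega⟩, ⟨(x : ℕ) - l, hjlt⟩⟩ := by
      apply Fin.ext
      rw [Fin.coe_cast, Fin.coe_cast, finSigmaEquiv_coe]
      simp only []
      rw [hsum l (by omega)]
      omega
    rw [hy, permCompose_one_coe, finSigmaEquiv_coe, hsum l (by omega)]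
    congr 1
    rw [dif_pos rfl]
    simp only [Equiv.permCongr_apply, finCongr_symm, finCongr_apply, Fin.coe_cast]
    have : (Fin.cast (if_pos rfl) (⟨(x : ℕ) - l, hjlt⟩ : Fin (b ⟨l, by omega⟩)) : Fin (m + n))
        = ⟨(x : ℕ) - l, by have := x.isLt; omega⟩ := by
      apply Fin.ext; simp
    rw [this]

lemma inner_apply_lt (l m n : ℕ) (σ : Equiv.Perm (Fin (m + n))) (x : Fin (l + m + n))
    (hxl : (x : ℕ) < l) :
    ((finCongr (show l + 1 + (m + n) - 1 = l + m + n by omega)).permCongr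
        (circ (1 : Equiv.Perm (Fin (l + 1))) ⟨l, by omega⟩ σ)) x = x := by
  apply Fin.ext
  rw [inner_coe, dif_pos hxl]

lemma inner_apply_ge (l m n : ℕ) (σ : Equiv.Perm (Fin (m + n))) (x : Fin (l + m + n))
    (hxl : ¬ (x : ℕ) < l) :
    ((finCongr (show l + 1 + (m + n) - 1 = l + m + n by omega)).permCongr
        (circ (1 : Equiv.Perm (Fin (l + 1))) ⟨l, by omega⟩ σ)) x
      = ⟨l + σ ⟨(x : ℕ) - l, by have := x.isLt; omega⟩,
          by have := (σ ⟨(x : ℕ) - l, by have := x.isLt; omega⟩).isLt; have := x.isLt; omega⟩ := by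
  apply Fin.ext
  rw [inner_coe, dif_neg hxl]

lemma card_filter_lt (N l : ℕ) (h : l ≤ N) :
    (Finset.univ.filter (fun i : Fin N => (i : ℕ) < l)).card = l := by
  classical
  rw [Finset.card_filter, Fin.sum_univ_eq_sum_range (fun j => if j < l then 1 else 0),
    sum_indicator_lt N l h]

lemma shuffle_unique {N l : ℕ} (hlN : l ≤ N) (τ1 τ2 : Equiv.Perm (Fin N))
    (h1 : IsShuffle l τ1) (h2 : IsShuffle l τ2)
    (hagree : ∀ i : Fin N, (i : ℕ) < l → τ1 i = τ2 i) : τ1 = τ2 := by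
  classical
  set S : Finset (Fin N) := (Finset.univ.filter (fun i : Fin N => (i : ℕ) < l)).image τ1 with hS
  have hcard : S.card = l := by
    rw [hS, Finset.card_image_of_injective _ τ1.injective, card_filter_lt N l hlN]
  have hcardc : Sᶜ.card = N - l := by
    rw [Finset.card_compl, hcard, Fintype.card_fin]
  set g1 : Fin (N - l) → Fin N :=
    fun k => τ1 ⟨l + (k : ℕ), by have := k.isLt; omega⟩ with hg1
  set g2 : Fin (N - l) → Fin N :=
    fun k => τ2 ⟨l + (k : ℕ), by have := k.isLt; omega⟩ with hg2
  have hmem1 : ∀ k, g1 k ∈ Sᶜ := by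
    intro k
    rw [Finset.mem_compl, hS, Finset.mem_image]
    rintro ⟨i, hi, hie⟩
    rw [Finset.mem_filter] at hi
    have := τ1.injective hie
    have := congrArg Fin.val this
    simp at this
    omega
  have hmem2 : ∀ k, g2 k ∈ Sᶜ := by
    intro k
    rw [Finset.mem_compl, hS, Finset.mem_image]
    rintro ⟨i, hi, hie⟩
    rw [Finset.mem_filter] at hi
    simp only [hg2] at hie
    rw [hagree i hi.2] at hie
    have := τ2.injective hie
    have := congrArg Fin.val this
    simp at this
    omega
  have hmono1 : StrictMono g1 := by
    intro k k' hk
    have hkk := Fin.lt_def.mp hk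
    exact h1.2 _ _ (by rw [Fin.mk_lt_mk]; omega) (Nat.le_add_right _ _)
  have hmono2 : StrictMono g2 := by
    intro k k' hk
    have hkk := Fin.lt_def.mp hk
    exact h2.2 _ _ (by rw [Fin.mk_lt_mk]; omega) (Nat.le_add_right _ _)
  have he1 : g1 = Sᶜ.orderEmbOfFin hcardc := Finset.orderEmbOfFin_unique hcardc hmem1 hmono1
  have he2 : g2 = Sᶜ.orderEmbOfFin hcardc := Finset.orderEmbOfFin_unique hcardc hmem2 hmono2
  apply Equiv.ext
  intro i
  by_cases hi : (i : ℕ) < l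
  · exact hagree i hi
  · have hival : i = ⟨l + ((i : ℕ) - l), by have := i.isLt; omega⟩ := by
      apply Fin.ext; simp; omega
    rw [hival]
    have hk : ((i : ℕ) - l) < N - l := by have := i.isLt; omega
    calc τ1 ⟨l + ((i:ℕ) - l), _⟩ = g1 ⟨(i:ℕ) - l, hk⟩ := rfl
      _ = g2 ⟨(i:ℕ) - l, hk⟩ := by rw [he1, he2]
      _ = τ2 ⟨l + ((i:ℕ) - l), _⟩ := rfl

def innerPerm (l m n : ℕ) (σ : Equiv.Perm (Fin (m + n))) : Equiv.Perm (Fin (l + m + n)) :=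
  (finCongr (show l + 1 + (m + n) - 1 = l + m + n by omega)).permCongr
    (circ (1 : Equiv.Perm (Fin (l + 1))) ⟨l, by omega⟩ σ)

lemma innerPerm_apply_lt (l m n : ℕ) (σ : Equiv.Perm (Fin (m + n))) (x : Fin (l + m + n))
    (hxl : (x : ℕ) < l) : innerPerm l m n σ x = x :=
  inner_apply_lt l m n σ x hxl

lemma innerPerm_apply_ge (l m n : ℕ) (σ : Equiv.Perm (Fin (m + n))) (x : Fin (l + m + n))
    (hxl : ¬ (x : ℕ) < l) :
    innerPerm l m n σ x
      = ⟨l + σ ⟨(x : ℕ) - l, by have := x.isLt; omega⟩,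
          by have := (σ ⟨(x : ℕ) - l, by have := x.isLt; omega⟩).isLt; have := x.isLt; omega⟩ :=
  inner_apply_ge l m n σ x hxl



set_option maxHeartbeats 2000000

/-- **Proposition 2.6(c)** of Bakalov–De Sole–Heluani–Kac: for `l, m, n ≥ 1`, the map
`(σ, τ) ↦ τ · (1_{l+1} ∘_{l+1} σ)` is a bijection from `S_{m,n} × S_{l,m+n}` onto
`S_{l,m,n}`. -/
theorem shuffle_decomposition_c (l m n : ℕ) (hl : 1 ≤ l) (hm : 1 ≤ m) (hn : 1 ≤ n) :
    Set.BijOn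
      (fun p : Equiv.Perm (Fin (m + n)) × Equiv.Perm (Fin (l + m + n)) =>
        p.2 *
          (finCongr (show l + 1 + (m + n) - 1 = l + m + n by omega)).permCongr
            (circ (1 : Equiv.Perm (Fin (l + 1))) ⟨l, by omega⟩ p.1))
      ({σ : Equiv.Perm (Fin (m + n)) | IsShuffle m σ} ×ˢ
        {τ : Equiv.Perm (Fin (l + m + n)) | IsShuffle l τ})
      {σ : Equiv.Perm (Fin (l + m + n)) | IsShuffle3 l m σ} := by
  classical
  have hmap : (fun p : Equiv.Perm (Fin (m + n)) × Equiv.Perm (Fin (l + m + n)) =>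
        p.2 *
          (finCongr (show l + 1 + (m + n) - 1 = l + m + n by omega)).permCongr
            (circ (1 : Equiv.Perm (Fin (l + 1))) ⟨l, by omega⟩ p.1))
      = fun p => p.2 * innerPerm l m n p.1 := rfl
  rw [hmap]
  refine ⟨?_, ?_, ?_⟩
  · -- MapsTo
    rintro ⟨σ, τ⟩ ⟨hσ, hτ⟩
    simp only [Set.mem_setOf_eq] at hσ hτ ⊢
    refine ⟨?_, ?_, ?_⟩
    · intro i j hij hjl
      simp only [Equiv.Perm.mul_apply]
      have hij' := Fin.lt_def.mp hij
      rw [innerPerm_apply_lt l m n σ i (by omega), innerPerm_apply_lt l m n σ j hjl]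
      exact hτ.1 i j hij hjl
    · intro i j hij hli hjlm
      simp only [Equiv.Perm.mul_apply]
      have hij' := Fin.lt_def.mp hij
      rw [innerPerm_apply_ge l m n σ i (by omega),
        innerPerm_apply_ge l m n σ j (by omega)]
      have hσlt : σ ⟨(i : ℕ) - l, by have := i.isLt; omega⟩
          < σ ⟨(j : ℕ) - l, by have := j.isLt; omega⟩ := by
        apply hσ.1
        · rw [Fin.mk_lt_mk]; omega
        · show (j : ℕ) - l < m; omega
      have hσlt' := Fin.lt_def.mp hσlt
      exact hτ.2 _ _ (by rw [Fin.mk_lt_mk]; omega) (Nat.le_add_right _ _)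
    · intro i j hij hli
      simp only [Equiv.Perm.mul_apply]
      have hij' := Fin.lt_def.mp hij
      rw [innerPerm_apply_ge l m n σ i (by omega),
        innerPerm_apply_ge l m n σ j (by omega)]
      have hσlt : σ ⟨(i : ℕ) - l, by have := i.isLt; omega⟩
          < σ ⟨(j : ℕ) - l, by have := j.isLt; omega⟩ := by
        apply hσ.2
        · rw [Fin.mk_lt_mk]; omega
        · show m ≤ (i : ℕ) - l; omega
      have hσlt' := Fin.lt_def.mp hσlt
      exact hτ.2 _ _ (by rw [Fin.mk_lt_mk]; omega) (Nat.le_add_right _ _)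
  · -- InjOn
    rintro ⟨σ1, τ1⟩ ⟨hσ1, hτ1⟩ ⟨σ2, τ2⟩ ⟨hσ2, hτ2⟩ heq
    simp only [Set.mem_setOf_eq] at hσ1 hτ1 hσ2 hτ2
    simp only at heq
    have hτ : τ1 = τ2 := by
      apply shuffle_unique (show l ≤ l + m + n by omega) τ1 τ2 hτ1 hτ2
      intro i hi
      have h := DFunLike.congr_fun heq i
      rw [Equiv.Perm.mul_apply, Equiv.Perm.mul_apply,
        innerPerm_apply_lt l m n σ1 i hi, innerPerm_apply_lt l m n σ2 i hi] at h
      exact h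
    rw [hτ] at heq
    have hI : innerPerm l m n σ1 = innerPerm l m n σ2 := mul_left_cancel heq
    have hσ : σ1 = σ2 := by
      apply Equiv.ext
      intro k
      have hk := k.isLt
      have hX : l + (k : ℕ) < l + m + n := by omega
      have hgeX : ¬ ((⟨l + (k : ℕ), hX⟩ : Fin (l + m + n)) : ℕ) < l := by simp
      have h := DFunLike.congr_fun hI ⟨l + (k : ℕ), hX⟩
      have e1 := innerPerm_apply_ge l m n σ1 ⟨l + (k : ℕ), hX⟩ hgeX
      have e2 := innerPerm_apply_ge l m n σ2 ⟨l + (k : ℕ), hX⟩ hgeX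
      have h2 := e1.symm.trans (h.trans e2)
      rw [Fin.mk_eq_mk] at h2
      have hkk : (⟨l + (k : ℕ) - l, show l + (k : ℕ) - l < m + n by omega⟩
          : Fin (m + n)) = k := Fin.ext (show l + (k : ℕ) - l = (k : ℕ) by omega)
      rw [hkk] at h2
      apply Fin.ext
      omega
    exact Prod.ext hσ hτ
  · -- SurjOn
    intro ρ hρ
    simp only [Set.mem_setOf_eq] at hρ
    obtain ⟨hρ1, hρ2, hρ3⟩ := hρ
    set S : Finset (Fin (l + m + n)) :=
      (Finset.univ.filter (fun i : Fin (l + m + n) => (i : ℕ) < l)).image ρ with hS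
    have hcard : S.card = l := by
      rw [hS, Finset.card_image_of_injective _ ρ.injective, card_filter_lt _ l (by omega)]
    have hcardc : Sᶜ.card = m + n := by
      rw [Finset.card_compl, hcard, Fintype.card_fin]; omega
    have hnotmem : ∀ x : Fin (l + m + n), l ≤ (x : ℕ) → ρ x ∉ S := by
      intro x hx hmem
      rw [hS, Finset.mem_image] at hmem
      obtain ⟨i, hi, hie⟩ := hmem
      rw [Finset.mem_filter] at hi
      have := congrArg Fin.val (ρ.injective hie)
      omega
    set emb := Sᶜ.orderEmbOfFin hcardc with hemb
    set iso := Sᶜ.orderIsoOfFin hcardc with hiso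
    set f : Fin (l + m + n) → Fin (l + m + n) :=
      fun x => if h : (x : ℕ) < l then ρ x
        else emb ⟨(x : ℕ) - l, by have := x.isLt; omega⟩ with hf
    have hfinj : Function.Injective f := by
      intro a b hab
      have ha' := a.isLt; have hb' := b.isLt
      rw [hf] at hab
      simp only at hab
      by_cases ha : (a : ℕ) < l <;> by_cases hb : (b : ℕ) < l
      · rw [dif_pos ha, dif_pos hb] at hab
        exact ρ.injective hab
      · rw [dif_pos ha, dif_neg hb] at hab
        exfalso
        have h1 : ρ a ∈ S := by
          rw [hS, Finset.mem_image]
          exact ⟨a, Finset.mem_filter.mpr ⟨Finset.mem_univ a, ha⟩, rfl⟩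
        have h2 := Finset.mem_compl.mp (Finset.orderEmbOfFin_mem Sᶜ hcardc
          ⟨(b : ℕ) - l, by omega⟩)
        rw [← hemb, ← hab] at h2
        exact h2 h1
      · rw [dif_neg ha, dif_pos hb] at hab
        exfalso
        have h1 : ρ b ∈ S := by
          rw [hS, Finset.mem_image]
          exact ⟨b, Finset.mem_filter.mpr ⟨Finset.mem_univ b, hb⟩, rfl⟩
        have h2 := Finset.mem_compl.mp (Finset.orderEmbOfFin_mem Sᶜ hcardc
          ⟨(a : ℕ) - l, by omega⟩)
        rw [← hemb, hab] at h2
        exact h2 h1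
      · rw [dif_neg ha, dif_neg hb] at hab
        have := congrArg Fin.val (emb.injective hab)
        simp only [Fin.mk.injEq] at this
        apply Fin.ext
        omega
    set τ : Equiv.Perm (Fin (l + m + n)) :=
      Equiv.ofBijective f (Finite.injective_iff_bijective.mp hfinj) with hτdef
    have hτapp : ∀ x, τ x = f x := fun _ => rfl
    set g : Fin (m + n) → Fin (m + n) :=
      fun k => iso.symm ⟨ρ ⟨l + (k : ℕ), by have := k.isLt; omega⟩,
        Finset.mem_compl.mpr (hnotmem _ (Nat.le_add_right _ _))⟩ with hg
    have hginj : Function.Injective g := by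
      intro a b hab
      rw [hg] at hab
      have h3 := congrArg Subtype.val (iso.symm.injective hab)
      have h4 := congrArg Fin.val (ρ.injective h3)
      have h5 : l + (a : ℕ) = l + (b : ℕ) := h4
      exact Fin.ext (by omega)
    set σ : Equiv.Perm (Fin (m + n)) :=
      Equiv.ofBijective g (Finite.injective_iff_bijective.mp hginj) with hσdef
    have hσapp : ∀ k, σ k = g k := fun _ => rfl
    have hglt : ∀ k k' : Fin (m + n), (ρ ⟨l + (k : ℕ), by have := k.isLt; omega⟩
        < ρ ⟨l + (k' : ℕ), by have := k'.isLt; omega⟩) → g k < g k' := by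
      intro k k' hr
      rw [hg]
      exact iso.symm.lt_iff_lt.mpr (Subtype.mk_lt_mk.mpr hr)
    have hσshuffle : IsShuffle m σ := by
      constructor
      · intro k k' hkk' hk'm
        have hkk := Fin.lt_def.mp hkk'
        apply hglt
        exact hρ2 _ _ (by rw [Fin.mk_lt_mk]; omega) (Nat.le_add_right _ _) (by simp; omega)
      · intro k k' hkk' hmk
        have hkk := Fin.lt_def.mp hkk'
        apply hglt
        exact hρ3 _ _ (by rw [Fin.mk_lt_mk]; omega) (by simp; omega)
    have hτshuffle : IsShuffle l τ := by
      constructor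
      · intro i j hij hjl
        have hij' := Fin.lt_def.mp hij
        rw [hτapp, hτapp, hf]
        simp only
        rw [dif_pos (by omega : (i : ℕ) < l), dif_pos hjl]
        exact hρ1 i j hij hjl
      · intro i j hij hli
        have hij' := Fin.lt_def.mp hij
        rw [hτapp, hτapp, hf]
        simp only
        rw [dif_neg (by omega : ¬ (i : ℕ) < l), dif_neg (by omega : ¬ (j : ℕ) < l)]
        exact emb.strictMono (by rw [Fin.mk_lt_mk]; omega)
    refine ⟨(σ, τ), ⟨hσshuffle, hτshuffle⟩, ?_⟩
    simp only
    apply Equiv.ext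
    intro x
    have hx' := x.isLt
    rw [Equiv.Perm.mul_apply]
    by_cases hx : (x : ℕ) < l
    · rw [innerPerm_apply_lt l m n σ x hx, hτapp, hf]
      simp only
      rw [dif_pos hx]
    · rw [innerPerm_apply_ge l m n σ x hx, hτapp, hf]
      simp only
      rw [dif_neg (by simp : ¬ (l + (σ ⟨(x : ℕ) - l, by omega⟩ : Fin (m + n)) : ℕ) < l)]
      have hidx : (⟨(l + ((σ : Equiv.Perm (Fin (m+n))) ⟨(x : ℕ) - l, by omega⟩ : ℕ)) - l,
          by have := (σ ⟨(x : ℕ) - l, by omega⟩).isLt; omega⟩ : Fin (m + n))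
          = σ ⟨(x : ℕ) - l, by omega⟩ := by apply Fin.ext; simp
      rw [hidx, hσapp, hg]
      have hembiso : ∀ i, emb i = ↑(iso i) :=
        fun i => (Finset.coe_orderIsoOfFin_apply Sᶜ hcardc i).symm
      rw [hembiso]
      simp only [OrderIso.apply_symm_apply]
      congr 1
      apply Fin.ext
      simp
      omega
end Aux
end

section
/- For all m, n ≥ 1, the map σ ↦ σ·(1_n∘_1(1,2)∘_1 1_m) is a bijection from {σ ∈ S_{m+1,n−1} : σ(1) = 1} onto {σ ∈ S_{m,n} : σ(m+1) = 1}; here 1_n∘_1(1,2)∘_1 1_m ∈ S_{m+n} equals the cyclic permutation (1,2,…,m+1), sending 1 ↦ 2 ↦ ⋯ ↦ m+1 ↦ 1 and fixing m+2,…,m+n, and · denotes the product in S_{m+n}. -/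
open Equiv

/-- **Proposition 2.7(b)** of Bakalov–De Sole–Heluani–Kac: for `m, n ≥ 1`, right
multiplication by the cyclic permutation `1_n ∘_1 (1,2) ∘_1 1_m = (1,2,…,m+1) ∈ S_{m+n}`
(which sends `1 ↦ 2 ↦ ⋯ ↦ m+1 ↦ 1` and fixes `m+2,…,m+n`; written here `0`-indexed)
is a bijection from `{σ ∈ S_{m+1,n-1} | σ(1) = 1}` onto `{σ ∈ S_{m,n} | σ(m+1) = 1}`. -/
theorem shuffle_cycle_bijOn (m n : ℕ) (hm : 1 ≤ m) (hn : 1 ≤ n)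
    (c : Equiv.Perm (Fin (m + n)))
    (hc : ∀ i : Fin (m + n),
      ((i : ℕ) < m → (c i : ℕ) = (i : ℕ) + 1) ∧
      ((i : ℕ) = m → (c i : ℕ) = 0) ∧
      (m < (i : ℕ) → c i = i)) :
    Set.BijOn (fun σ => σ * c)
      {σ : Equiv.Perm (Fin (m + n)) | IsShuffle (m + 1) σ ∧ σ ⟨0, by omega⟩ = ⟨0, by omega⟩}
      {σ : Equiv.Perm (Fin (m + n)) | IsShuffle m σ ∧ σ ⟨m, by omega⟩ = ⟨0, by omega⟩} := by
  have hNm : m < m + n := by omega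
  have hN0 : 0 < m + n := by omega
  have hcm : c ⟨m, hNm⟩ = ⟨0, hN0⟩ := Fin.ext ((hc _).2.1 rfl)
  have hclt : ∀ i : Fin (m+n), (i:ℕ) < m → (c i : ℕ) = i + 1 := fun i h => (hc i).1 h
  have hcgt : ∀ i : Fin (m+n), m < (i:ℕ) → c i = i := fun i h => (hc i).2.2 h
  refine ⟨?_, fun a _ b _ h => mul_right_cancel h, ?_⟩
  · rintro σ ⟨⟨h1, h2⟩, h0⟩
    refine ⟨⟨?_, ?_⟩, ?_⟩
    · intro i j hij hj
      simp only [Equiv.Perm.mul_apply]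
      have hi : (i:ℕ) < m := by rw [Fin.lt_def] at hij; omega
      have hci := hclt i hi
      have hcj := hclt j hj
      exact h1 (c i) (c j) (by rw [Fin.lt_def] at *; omega) (by omega)
    · intro i j hij hi
      simp only [Equiv.Perm.mul_apply]
      rcases eq_or_lt_of_le hi with hi | hi
      · have : i = ⟨m, hNm⟩ := Fin.ext hi.symm
        subst this
        rw [hcm, h0]
        have hj : m < (j:ℕ) := by rwa [Fin.lt_def] at hij
        rw [hcgt j hj]
        have hne : σ j ≠ ⟨0, hN0⟩ := fun h => by
          have := σ.injective (h.trans h0.symm)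
          rw [Fin.ext_iff] at this
          simp only [Fin.val_mk] at this
          omega
        rw [ne_eq, Fin.ext_iff] at hne
        rw [Fin.lt_def]
        simp only [Fin.val_mk] at hne ⊢
        omega
      · have hj : m < (j:ℕ) := by rw [Fin.lt_def] at hij; omega
        rw [hcgt i hi, hcgt j hj]
        exact h2 i j hij (by omega)
    · show σ (c ⟨m, hNm⟩) = _
      rw [hcm, h0]
  · rintro τ ⟨⟨h1, h2⟩, h0⟩
    have hsym0 : c.symm ⟨0, hN0⟩ = ⟨m, hNm⟩ := by
      rw [Equiv.symm_apply_eq, hcm]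
    have hsymle : ∀ i : Fin (m+n), 1 ≤ (i:ℕ) → (i:ℕ) ≤ m →
        c.symm i = ⟨(i:ℕ) - 1, by omega⟩ := by
      intro i h1i him
      rw [Equiv.symm_apply_eq]
      exact (Fin.ext (by rw [hclt _ (by simp; omega)]; simp; omega)).symm
    have hsymgt : ∀ i : Fin (m+n), m < (i:ℕ) → c.symm i = i := by
      intro i h
      rw [Equiv.symm_apply_eq, hcgt i h]
    refine ⟨τ * c⁻¹, ⟨⟨?_, ?_⟩, ?_⟩, by group⟩
    · intro i j hij hj
      simp only [Equiv.Perm.mul_apply, Equiv.Perm.inv_def]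
      rcases Nat.eq_zero_or_pos (i:ℕ) with hi | hi
      · have : i = ⟨0, hN0⟩ := Fin.ext hi
        subst this
        rw [hsym0, h0]
        have hj1 : 1 ≤ (j:ℕ) := by rw [Fin.lt_def] at hij; omega
        rw [hsymle j hj1 (by omega)]
        have hne : τ ⟨(j:ℕ) - 1, by omega⟩ ≠ ⟨0, hN0⟩ := fun h => by
          have := τ.injective (h.trans h0.symm)
          rw [Fin.ext_iff] at this
          simp only [Fin.val_mk] at this
          omega
        rw [ne_eq, Fin.ext_iff] at hne
        rw [Fin.lt_def]
        simp only [Fin.val_mk] at hne ⊢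
        omega
      · have hj1 : 1 ≤ (j:ℕ) := by rw [Fin.lt_def] at hij; omega
        rw [hsymle i hi (by rw [Fin.lt_def] at hij; omega), hsymle j hj1 (by omega)]
        exact h1 _ _ (by rw [Fin.lt_def] at *; simp; omega) (by simp; omega)
    · intro i j hij hi
      simp only [Equiv.Perm.mul_apply, Equiv.Perm.inv_def]
      rw [hsymgt i (by omega), hsymgt j (by rw [Fin.lt_def] at hij; omega)]
      exact h2 i j hij (by omega)
    · show τ (c.symm ⟨0, hN0⟩) = _
      rw [hsym0, h0]
end

section
/- Equivariance of ∘_i-products of permutations: for all β, σ ∈ S_n, α, τ ∈ S_m and 1 ≤ i ≤ n, one has (βσ)∘_i(ατ) = (β∘_{σ(i)}α)·(σ∘_iτ) in S_{n+m−1}, where · denotes the product in the symmetric group. -/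
open Equiv

def V {n : ℕ} (m : Fin n → ℕ) (j : Fin n) : ℕ := ∑ k : Fin n, if k < j then m k else 0

lemma finSigmaEquiv_val : ∀ (n : ℕ) (m : Fin n → ℕ) (p : Σ i, Fin (m i)),
    ((finSigmaEquiv n m p : Fin _) : ℕ) = V m p.1 + p.2 := by
  intro n
  induction n with
  | zero => intro m p; exact p.1.elim0
  | succ n ih =>
    rintro m ⟨j, a⟩
    induction j using Fin.cases with
    | zero =>
      simp [finSigmaEquiv, sigmaFinSucc, V]
    | succ j =>
      have : ((finSigmaEquiv (n+1) m ⟨j.succ, a⟩ : Fin _) : ℕ)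
          = m 0 + ((finSigmaEquiv n (fun k => m k.succ) ⟨j, a⟩ : Fin _) : ℕ) := by
        simp [finSigmaEquiv, sigmaFinSucc]
      rw [this, ih]
      have : V m j.succ = m 0 + V (fun k => m k.succ) j := by
        simp [V, Fin.sum_univ_succ, Fin.succ_lt_succ_iff, Fin.succ_pos]
      rw [this]; ring

lemma V_add_lt {n m : ℕ} (i j : Fin n) (a : ℕ) (ha : a < if j = i then m else 1) :
    V (fun k => if k = i then m else 1) j + a < n + m - 1 := by
  have h1 : V (fun k => if k = i then m else 1) j + a
      < ∑ k : Fin n, (if k = i then m else 1) := by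
    have : V (fun k => if k = i then m else 1) j + (if j = i then m else 1)
        ≤ ∑ k : Fin n, (if k = i then m else 1) := by
      classical
      have hj : (if j = i then m else 1) = ∑ k : Fin n, if k = j then (if k = i then m else 1) else 0 := by
        simp
      rw [V, hj, ← Finset.sum_add_distrib]
      refine Finset.sum_le_sum fun k _ => ?_
      rcases lt_trichotomy k j with h | h | h
      · simp [h, h.ne]
      · simp [h]
      · simp [h.ne', not_lt_of_gt h]
    omega
  rwa [circ_sum i] at h1

lemma circ_val {n m : ℕ} (β : Equiv.Perm (Fin n)) (i : Fin n) (α : Equiv.Perm (Fin m))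
    (j : Fin n) (a : ℕ) (ha : a < if j = i then m else 1)
    (hlt : V (fun k => if k = i then m else 1) j + a < n + m - 1) :
    ((circ β i α ⟨V (fun k => if k = i then m else 1) j + a, hlt⟩ : Fin _) : ℕ) =
      V (fun k => if k = β i then m else 1) (β j) +
        (if h : j = i then (α ⟨a, by simpa [h] using ha⟩ : ℕ) else a) := by
  classical
  have hx : (⟨V (fun k => if k = i then m else 1) j + a, hlt⟩ : Fin (n + m - 1))
      = finCongr (circ_sum i) (finSigmaEquiv n _ (⟨j, ⟨a, ha⟩⟩ :
          Σ k : Fin n, Fin (if k = i then m else 1))) := by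
    apply Fin.ext
    simp [finSigmaEquiv_val]
  rw [hx]
  show ((finCongr (circ_sum i)).permCongr _ (finCongr (circ_sum i) _) : Fin _).1 = _
  rw [Equiv.permCongr_apply, Equiv.symm_apply_apply]
  show ((finCongr (circ_sum i)) (permCompose β _ (finSigmaEquiv n _ ⟨j, ⟨a, ha⟩⟩)) : Fin _).1 = _
  rw [finCongr_apply, Fin.coe_cast]
  rw [permCompose]
  simp only [Equiv.trans_apply, Equiv.symm_apply_apply, finCongr_apply, Fin.coe_cast]
  rw [finSigmaEquiv_val]
  simp only [Equiv.sigmaCongr, Equiv.sigmaCongrRight, Equiv.sigmaCongrLeft,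
    Equiv.sigmaCongrLeft', Equiv.coe_fn_mk, Equiv.trans_apply, Equiv.symm_symm]
  congr 1
  · simp [V, Equiv.symm_apply_eq]
  · by_cases h : j = i
    · subst h
      show ((finCongr _ ((if h : j = j then (finCongr (if_pos h).symm).permCongr α else 1) ⟨a, ha⟩) : Fin _) : ℕ) = _
      simp [finCongr_apply]
      rfl
    · show ((finCongr _ ((if h : j = i then (finCongr (if_pos h).symm).permCongr α else 1) ⟨a, ha⟩) : Fin _) : ℕ) = _
      simp [h, finCongr_apply]
      rfl

lemma exists_decomp {n m : ℕ} (i : Fin n) (x : Fin (n + m - 1)) :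
    ∃ (j : Fin n) (a : ℕ) (ha : a < if j = i then m else 1),
      (x : ℕ) = V (fun k => if k = i then m else 1) j + a := by
  obtain ⟨p, hp⟩ := ((finSigmaEquiv n _).trans (finCongr (circ_sum i))).surjective x
  exact ⟨p.1, p.2, p.2.isLt, by rw [← hp]; simp [finSigmaEquiv_val]⟩


/-- **Equivariance of `∘_i`-products of permutations** (equation (2.9b) of
Bakalov–De Sole–Heluani–Kac): for all `β, σ ∈ S_n`, `α, τ ∈ S_m` and `i ∈ {1,…,n}`,
`(βσ) ∘_i (ατ) = (β ∘_{σ(i)} α) · (σ ∘_i τ)` in `S_{n+m-1}`. -/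
theorem circ_equivariance (n m : ℕ) (β σ : Equiv.Perm (Fin n)) (α τ : Equiv.Perm (Fin m))
    (i : Fin n) :
    circ (β * σ) i (α * τ) = circ β (σ i) α * circ σ i τ := by
  refine Equiv.ext fun x => ?_
  obtain ⟨j, a, ha, hx⟩ := exists_decomp i x
  have hxe : x = ⟨V (fun k => if k = i then m else 1) j + a, hx ▸ x.isLt⟩ := Fin.ext hx
  rw [hxe]
  -- the intermediate offset
  set a' : ℕ := if h : j = i then (τ ⟨a, by simpa [h] using ha⟩ : ℕ) else a with ha'def
  have ha' : a' < if σ j = σ i then m else 1 := by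
    by_cases h : j = i
    · subst h; simpa [ha'def] using (τ ⟨a, by simpa using ha⟩).isLt
    · have : σ j ≠ σ i := fun hc => h (σ.injective hc)
      simpa [ha'def, h, this] using ha
  have hmid : circ σ i τ ⟨V (fun k => if k = i then m else 1) j + a, hx ▸ x.isLt⟩
      = ⟨V (fun k => if k = σ i then m else 1) (σ j) + a', V_add_lt (σ i) (σ j) a' ha'⟩ := by
    apply Fin.ext
    rw [circ_val σ i τ j a ha]
  have hL := circ_val (β * σ) i (α * τ) j a ha (hx ▸ x.isLt)
  apply Fin.ext
  rw [hL]
  simp only [Equiv.Perm.mul_apply]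
  rw [hmid, circ_val β (σ i) α (σ j) a' ha']
  congr 1
  by_cases h : j = i
  · subst h
    simp only [dif_pos rfl, eq_self_iff_true, dite_true, Equiv.Perm.mul_apply]
    apply congrArg
    apply congrArg
    apply Fin.ext
    simp [ha'def]
  · have hσ : σ j ≠ σ i := fun hc => h (σ.injective hc)
    simp [h, hσ, ha'def]
end

section
/- Let F be a field of characteristic 0, n ≥ 1, and K = F(z_1,…,z_n). Let f := ∏_{1 ≤ i < j ≤ n} (z_i − z_j)^{−1} ∈ K, and let O*_n ⊂ K be the subring F[z_1,…,z_n][(z_i − z_j)^{−1} : 1 ≤ i < j ≤ n] (the localization of the polynomial ring at the diagonals). Then the smallest F-linear subspace of K containing f and stable under multiplication by each variable z_i (1 ≤ i ≤ n) and under each partial derivation ∂_{z_i} (1 ≤ i ≤ n) equals O*_n. Equivalently, f is a cyclic vector of O*_n regarded as a module over the algebra of polynomial-coefficient differential operators in z_1,…,z_n. -/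
open Finset

namespace DiagCyclic
variable {F K : Type*} [Field F] [Field K] [Algebra F K]
variable {n : ℕ}

def pairsP (n : ℕ) : Finset (Fin n × Fin n) := Finset.univ.filter (fun p => p.1 < p.2)
lemma mem_pairsP {p : Fin n × Fin n} : p ∈ pairsP n ↔ p.1 < p.2 := by simp [pairsP]
def uu (z : Fin n → K) (p : Fin n × Fin n) : K := z p.1 - z p.2
def gg (z : Fin n → K) (m : Fin n × Fin n → ℕ) : K :=
  ∏ p ∈ pairsP n, uu z p ^ (-(m p : ℤ))
def chi (a : Fin n) (p : Fin n × Fin n) : ℤ :=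
  (if a = p.1 then 1 else 0) - (if a = p.2 then 1 else 0)
def Forest (m : Fin n × Fin n → ℕ) : Prop :=
  ∀ p q : Fin n × Fin n, p.1 < p.2 → q.1 < q.2 → p.2 = q.2 → 0 < m p → 0 < m q → p = q
def phiW (n : ℕ) (m : Fin n × Fin n → ℕ) : ℕ := ∑ p ∈ pairsP n, m p * (2*n + 1 - (p.2 : ℕ))
def psiW (n : ℕ) (m : Fin n × Fin n → ℕ) : ℕ := ∑ p ∈ pairsP n, m p * 4 ^ ((p.2 : Fin n) : ℕ)

variable {z : Fin n → K}

lemma gg_zero : gg z (fun _ => 0) = 1 := by simp [gg]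


lemma d_zpow (d : Derivation F K K) (x : K) (hx : x ≠ 0) (k : ℤ) :
    d (x ^ k) = (k : K) * x ^ (k - 1) * d x := by
  have key : ∀ k : ℤ, d (x ^ k) * x = (k : K) * x ^ k * d x := by
    intro k
    induction k using Int.induction_on with
    | zero => simp
    | succ k ih =>
        rw [zpow_add_one₀ hx, d.leibniz]
        push_cast at ih ⊢
        rw [smul_eq_mul, smul_eq_mul]
        calc (x ^ (k:ℤ) * d x + x * d (x ^ (k:ℤ))) * x
            = x ^ (k:ℤ) * x * d x + x * (d (x ^ (k:ℤ)) * x) := by ring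
          _ = ((k:K) + 1) * (x ^ (k:ℤ) * x) * d x := by rw [ih]; ring
    | pred k ih =>
        rw [zpow_sub_one₀ hx, d.leibniz]
        push_cast at ih ⊢
        rw [smul_eq_mul, smul_eq_mul]
        have hd : d x⁻¹ = -x⁻¹ ^ 2 • d x := d.leibniz_inv x
        rw [hd, smul_eq_mul]
        have hxinv : x⁻¹ * x = 1 := inv_mul_cancel₀ hx
        calc (x ^ (-(k:ℤ)) * (-x⁻¹ ^ 2 * d x) + x⁻¹ * d (x ^ (-(k:ℤ)))) * x
            = -(x ^ (-(k:ℤ)) * (x⁻¹ * (x⁻¹ * x)) * d x) + x⁻¹ * (d (x ^ (-(k:ℤ))) * x) := by ring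
          _ = -(x ^ (-(k:ℤ)) * x⁻¹ * d x) + x⁻¹ * (-(k:K) * x ^ (-(k:ℤ)) * d x) := by rw [ih, hxinv]; ring
          _ = (-(k:K) - 1) * (x ^ (-(k:ℤ)) * x⁻¹) * d x := by ring
  have hthis := key k
  have h2 : x ^ (k-1) = x ^ k * x⁻¹ := zpow_sub_one₀ hx k
  rw [h2]
  field_simp at hthis ⊢
  linear_combination hthis

lemma d_prod_zpow (d : Derivation F K K) {ι : Type*} [DecidableEq ι] (s : Finset ι)
    (h : ι → K) (e : ι → ℤ) (hne : ∀ i ∈ s, h i ≠ 0) :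
    d (∏ i ∈ s, h i ^ e i) =
      ∑ i ∈ s, ((e i : K) * h i ^ (e i - 1) * d (h i)) * ∏ q ∈ s.erase i, h q ^ e q := by
  induction s using Finset.induction_on with
  | empty => simp
  | @insert a s ha ih =>
      have hda : d (h a ^ e a) = (e a : K) * h a ^ (e a - 1) * d (h a) :=
        d_zpow d (h a) (hne a (Finset.mem_insert_self a s)) (e a)
      have h1 : ∀ i ∈ s,
          h a ^ e a * (((e i : K) * h i ^ (e i - 1) * d (h i)) * ∏ q ∈ s.erase i, h q ^ e q)
          = ((e i : K) * h i ^ (e i - 1) * d (h i)) * ∏ q ∈ (insert a s).erase i, h q ^ e q := by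
        intro i hi
        have hia : i ≠ a := fun hh => ha (hh ▸ hi)
        rw [Finset.erase_insert_of_ne hia.symm,
          Finset.prod_insert (fun hh => ha (Finset.mem_of_mem_erase hh))]
        ring
      rw [Finset.prod_insert ha, d.leibniz, smul_eq_mul, smul_eq_mul,
        ih (fun i hi => hne i (Finset.mem_insert_of_mem hi)),
        Finset.sum_insert ha, hda, Finset.erase_insert ha, Finset.mul_sum,
        Finset.sum_congr rfl h1]
      ring

lemma gg_congr {m₁ m₂ : Fin n × Fin n → ℕ} (h : ∀ p ∈ pairsP n, m₁ p = m₂ p) :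
    gg z m₁ = gg z m₂ :=
  Finset.prod_congr rfl (fun p hp => by rw [h p hp])
section s1
variable (hne : ∀ p ∈ pairsP n, uu z p ≠ 0)
include hne
lemma gg_add (m₁ m₂ : Fin n × Fin n → ℕ) : gg z (m₁ + m₂) = gg z m₁ * gg z m₂ := by
  rw [gg, gg, gg, ← Finset.prod_mul_distrib]
  apply Finset.prod_congr rfl
  intro p hp
  rw [← zpow_add₀ (hne p hp)]
  congr 1
  push_cast [Pi.add_apply]
  ring
omit hne
lemma gg_single {p : Fin n × Fin n} (hp : p ∈ pairsP n) :
    gg z (Pi.single p 1) = (uu z p)⁻¹ := by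
  rw [gg, Finset.prod_eq_single p]
  · simp
  · intro q hq hqp
    rw [Pi.single_apply, if_neg hqp]
    simp
  · intro h; exact absurd hp h
lemma weight_add (w : Fin n × Fin n → ℕ) (m₁ m₂ : Fin n × Fin n → ℕ) :
    ∑ p ∈ pairsP n, (m₁ + m₂) p * w p
      = (∑ p ∈ pairsP n, m₁ p * w p) + ∑ p ∈ pairsP n, m₂ p * w p := by
  rw [← Finset.sum_add_distrib]
  apply Finset.sum_congr rfl
  intro p hp
  simp [Pi.add_apply, add_mul]
lemma weight_single (w : Fin n × Fin n → ℕ) {p : Fin n × Fin n} (hp : p ∈ pairsP n) :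
    ∑ q ∈ pairsP n, (Pi.single p 1 : Fin n × Fin n → ℕ) q * w q = w p := by
  rw [Finset.sum_eq_single p]
  · simp
  · intro q hq hqp
    rw [Pi.single_apply, if_neg hqp]
    simp
  · intro h; exact absurd hp h
lemma gg_succ_single {m : Fin n × Fin n → ℕ} {p : Fin n × Fin n} (hp : p ∈ pairsP n) :
    gg z (m + Pi.single p 1)
      = uu z p ^ (-(m p : ℤ) - 1) * ∏ q ∈ (pairsP n).erase p, uu z q ^ (-(m q : ℤ)) := by
  rw [gg, ← Finset.mul_prod_erase _ _ hp]
  congr 1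
  · congr 1
    simp only [Pi.add_apply, Pi.single_apply, if_pos rfl]
    push_cast
    ring
  · apply Finset.prod_congr rfl
    intro q hq
    congr 1
    have : q ≠ p := Finset.ne_of_mem_erase hq
    push_cast [Pi.add_apply, Pi.single_apply, if_neg this]
    ring

include hne in
lemma der_gg (d : Derivation F K K) (c : Fin n × Fin n → K)
    (hdu : ∀ p ∈ pairsP n, d (uu z p) = c p) (m : Fin n × Fin n → ℕ) :
    d (gg z m) = ∑ p ∈ pairsP n, (-(m p : K)) * c p * gg z (m + Pi.single p 1) := by
  rw [gg, d_prod_zpow d _ _ _ hne]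
  apply Finset.sum_congr rfl
  intro p hp
  rw [gg_succ_single hp, hdu p hp]
  push_cast
  ring
end s1

section memb
variable (W : Submodule F K)
variable (hne : ∀ p ∈ pairsP n, uu z p ≠ 0)
variable (hW1 : ∀ i : Fin n, ∀ x ∈ W, z i * x ∈ W)
lemma W_zsmul (c : ℤ) {x : K} (hx : x ∈ W) : (c : K) * x ∈ W := by
  rw [← zsmul_eq_mul]
  exact W.toAddSubgroup.zsmul_mem hx c
include hW1 in
lemma W_umul (p : Fin n × Fin n) {x : K} (hx : x ∈ W) : uu z p * x ∈ W := by
  rw [uu, sub_mul]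
  exact W.sub_mem (hW1 _ _ hx) (hW1 _ _ hx)
include hne hW1 in
lemma W_lower {m : Fin n × Fin n → ℕ} {p : Fin n × Fin n} (hp : p ∈ pairsP n)
    (h : gg z (m + Pi.single p 1) ∈ W) : gg z m ∈ W := by
  have h2 : uu z p * gg z (m + Pi.single p 1) = gg z m := by
    rw [gg_add hne, gg_single hp]
    field_simp
    exact mul_div_cancel_left₀ _ (hne p hp)
  exact h2 ▸ W_umul W hW1 p h

variable (hWf : gg z (fun _ => (1:ℕ)) ∈ W)

include hne hW1 hWf in
lemma W_base : ∀ (N : ℕ) (m : Fin n × Fin n → ℕ), (∀ p ∈ pairsP n, m p ≤ 1) →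
    (∑ p ∈ pairsP n, (1 - m p)) ≤ N → gg z m ∈ W := by
  intro N
  induction N with
  | zero =>
      intro m hm hsum
      have hall : ∀ p ∈ pairsP n, m p = 1 := by
        intro p hp
        by_contra hne1
        have h0 : m p = 0 := by have := hm p hp; omega
        have : (1 - m p) ≤ ∑ q ∈ pairsP n, (1 - m q) :=
          Finset.single_le_sum (f := fun q => 1 - m q) (fun q _ => Nat.zero_le _) hp
        omega
      rw [gg_congr (fun p hp => hall p hp)]
      exact hWf
  | succ N ih =>
      intro m hm hsum
      by_cases hall : ∀ p ∈ pairsP n, m p = 1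
      · rw [gg_congr (fun p hp => hall p hp)]
        exact hWf
      · push_neg at hall
        obtain ⟨p, hp, hne1⟩ := hall
        have h0 : m p = 0 := by have := hm p hp; omega
        apply W_lower W hne hW1 hp
        apply ih
        · intro q hq
          by_cases hqp : q = p
          · subst hqp; simp [Pi.add_apply, Pi.single_apply, h0]
          · simp [Pi.add_apply, Pi.single_apply, if_neg hqp]
            exact hm q hq
        · have e1 : ∑ q ∈ pairsP n, (1 - m q) = 1 + ∑ q ∈ (pairsP n).erase p, (1 - m q) := by
            rw [← Finset.add_sum_erase _ _ hp, h0]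
          have e2 : ∑ q ∈ pairsP n, (1 - (m + Pi.single p 1 : Fin n × Fin n → ℕ) q)
              = 0 + ∑ q ∈ (pairsP n).erase p, (1 - m q) := by
            rw [← Finset.add_sum_erase _ _ hp]
            congr 1
            · simp [Pi.add_apply, Pi.single_apply, h0]
            · apply Finset.sum_congr rfl
              intro q hq
              have : q ≠ p := Finset.ne_of_mem_erase hq
              simp [Pi.add_apply, Pi.single_apply, if_neg this]
          omega

lemma forest_congr {m₁ m₂ : Fin n × Fin n → ℕ} (hsupp : ∀ q, 0 < m₂ q → 0 < m₁ q)
    (h : Forest m₁) : Forest m₂ :=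
  fun p q hp hq hpq h1 h2 => h p q hp hq hpq (hsupp _ h1) (hsupp _ h2)

variable [CharZero K]
variable (DD : Fin n → Derivation F K K)
variable (hdu : ∀ (a : Fin n), ∀ p ∈ pairsP n, DD a (uu z p) = ((chi a p : ℤ) : K))
variable (hWD : ∀ i : Fin n, ∀ x ∈ W, DD i x ∈ W)

include hne hW1 hWf hdu hWD in
lemma W_forest : ∀ (N : ℕ) (m : Fin n × Fin n → ℕ), Forest m → phiW n m ≤ N → gg z m ∈ W := by
  intro N
  induction N with
  | zero =>
      intro m _ hphi
      apply W_base W hne hW1 hWf (∑ p ∈ pairsP n, (1 - m p)) m _ le_rfl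
      intro p hp
      by_contra hcon
      have h2 : 2 ≤ m p := by omega
      have hterm : m p * (2*n + 1 - (p.2:ℕ)) ≤ phiW n m :=
        Finset.single_le_sum (f := fun q => m q * (2*n + 1 - (q.2:ℕ)))
          (fun q _ => Nat.zero_le _) hp
      have hlt : (p.2 : ℕ) < n := p.2.isLt
      have : 0 < m p * (2*n + 1 - (p.2:ℕ)) := by
        apply Nat.mul_pos (by omega) (by omega)
      omega
  | succ N ih =>
      intro m hforest hphi
      by_cases hb : ∀ p ∈ pairsP n, m p ≤ 1
      · exact W_base W hne hW1 hWf (∑ p ∈ pairsP n, (1 - m p)) m hb le_rfl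
      · push_neg at hb
        obtain ⟨e, he, he1⟩ := hb
        have he2 : 2 ≤ m e := by omega
        have heP : e.1 < e.2 := mem_pairsP.mp he
        set m0 : Fin n × Fin n → ℕ := fun q => if q = e then m e - 1 else m q with hm0
        have hm0e : m0 e = m e - 1 := by rw [hm0]; simp
        have hm0q : ∀ q, q ≠ e → m0 q = m q := by
          intro q hq; rw [hm0]; exact if_neg hq
        have hm : m = m0 + Pi.single e 1 := by
          funext q
          by_cases hqe : q = e
          · subst hqe
            simp only [Pi.add_apply, Pi.single_apply, if_pos rfl, hm0e, if_true, eq_self_iff_true]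
            omega
          · simp only [Pi.add_apply, Pi.single_apply, if_neg hqe, hm0q q hqe, add_zero]
        have hforest0 : Forest m0 := by
          apply forest_congr _ hforest
          intro q hq
          by_cases hqe : q = e
          · rw [hqe] at hq ⊢
            rw [hm0e] at hq
            omega
          · rwa [hm0q q hqe] at hq
        have hwe : 1 ≤ 2*n + 1 - (e.2 : ℕ) := by
          have := e.2.isLt; omega
        have hw : phiW n m = phiW n m0 + (2*n + 1 - ((e.2 : Fin n) : ℕ)) := by
          conv_lhs => rw [hm]
          unfold phiW
          rw [weight_add (fun p => 2*n + 1 - ((p.2 : Fin n) : ℕ)) m0 (Pi.single e 1),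
            weight_single (fun p => 2*n + 1 - ((p.2 : Fin n) : ℕ)) he]
        have hg0 : gg z m0 ∈ W := ih m0 hforest0 (by omega)
        have hde := der_gg hne (DD e.2) (fun p => ((chi e.2 p : ℤ) : K))
          (fun p hp => hdu e.2 p hp) m0
        have key : ((m e - 1 : ℕ) : K) * gg z m
            = DD e.2 (gg z m0) - ∑ p ∈ (pairsP n).erase e,
              ((-(m0 p : K)) * ((chi e.2 p : ℤ) : K) * gg z (m0 + Pi.single p 1)) := by
          rw [hde, ← Finset.add_sum_erase _ _ he]
          have h1 : gg z (m0 + Pi.single e 1) = gg z m := by rw [← hm]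
          have h2 : ((chi e.2 e : ℤ) : K) = -1 := by
            have hne12 : e.2 ≠ e.1 := (ne_of_lt heP).symm
            simp [chi, if_neg hne12]
          rw [h1, h2, hm0e]
          have : ((m e - 1 : ℕ) : K) = ((m e : ℕ) : K) - 1 := by
            push_cast [Nat.cast_sub (by omega : 1 ≤ m e)]
            ring
          rw [this]
          push_cast [Nat.cast_sub (by omega : 1 ≤ m e)]
          ring
        have hrhs : DD e.2 (gg z m0) - ∑ p ∈ (pairsP n).erase e,
              ((-(m0 p : K)) * ((chi e.2 p : ℤ) : K) * gg z (m0 + Pi.single p 1)) ∈ W := by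
          apply W.sub_mem (hWD _ _ hg0)
          apply Submodule.sum_mem
          intro p hp'
          have hpP : p ∈ pairsP n := Finset.mem_of_mem_erase hp'
          have hpe : p ≠ e := Finset.ne_of_mem_erase hp'
          have hpP' : p.1 < p.2 := mem_pairsP.mp hpP
          by_cases h0 : m0 p = 0
          · simp only [h0, Nat.cast_zero, neg_zero, zero_mul]
            exact W.zero_mem
          by_cases hchi : chi e.2 p = 0
          · simp only [hchi, Int.cast_zero, mul_zero, zero_mul]
            exact W.zero_mem
          have hcase : e.2 = p.1 ∨ e.2 = p.2 := by
            by_contra hcon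
            push_neg at hcon
            simp [chi, if_neg hcon.1, if_neg hcon.2] at hchi
          rcases hcase with hcase | hcase
          · -- e.2 = p.1 : good case
            have hchi1 : chi e.2 p = 1 := by
              have hne2 : e.2 ≠ p.2 := by
                rw [hcase]; exact ne_of_lt hpP'
              simp [chi, if_pos hcase, if_neg hne2]
            have hppos : 0 < m p := by
              have := hm0q p hpe; omega
            have hforest' : Forest (m0 + Pi.single p 1) := by
              apply forest_congr _ hforest
              intro q hq
              by_cases hqe : q = e
              · rw [hqe] at hq ⊢
                have hep : e ≠ p := Ne.symm hpe
                simp only [Pi.add_apply, Pi.single_apply, if_neg hep, add_zero, hm0e] at hq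
                omega
              · by_cases hqp : q = p
                · subst hqp; exact hppos
                · simp only [Pi.add_apply, Pi.single_apply, if_neg hqp, add_zero,
                    hm0q q hqe] at hq
                  exact hq
            have hw' : phiW n (m0 + Pi.single p 1) = phiW n m0 + (2*n + 1 - ((p.2 : Fin n) : ℕ)) := by
              unfold phiW
              rw [weight_add (fun p => 2*n + 1 - ((p.2 : Fin n) : ℕ)) m0 (Pi.single p 1),
                weight_single (fun p => 2*n + 1 - ((p.2 : Fin n) : ℕ)) hpP]
            have hlt : (e.2 : ℕ) < (p.2 : ℕ) := by
              rw [hcase]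
              exact hpP'
            have hg' : gg z (m0 + Pi.single p 1) ∈ W := by
              apply ih _ hforest'
              have h21 := p.2.isLt
              omega
            rw [hchi1]
            have := W_zsmul W (-(m0 p : ℤ)) hg'
            push_cast at this
            convert this using 1
            push_cast
            ring
          · -- e.2 = p.2 : contradiction with forest
            exfalso
            have hppos : 0 < m p := by
              have := hm0q p hpe; omega
            exact hpe (hforest p e hpP' heP hcase.symm hppos (by omega))
        have hNe : ((m e - 1 : ℕ) : K) ≠ 0 := Nat.cast_ne_zero.mpr (by omega)
        have hfin : gg z m = (((m e - 1 : ℕ) : F))⁻¹ • (((m e - 1 : ℕ) : K) * gg z m) := by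
          rw [Algebra.smul_def, map_inv₀, map_natCast, ← mul_assoc,
            inv_mul_cancel₀ hNe, one_mul]
        rw [hfin, key]
        exact W.smul_mem _ hrhs


include hne in
lemma W_tri {m : Fin n × Fin n → ℕ} {p q : Fin n × Fin n}
    (hp : p.1 < p.2) (hq : q.1 < q.2) (hpq2 : p.2 = q.2) (h12 : p.1 < q.1)
    (hmp : 0 < m p) (hmq : 0 < m q) :
    ∃ m1 m2 : Fin n × Fin n → ℕ, gg z m = gg z m1 - gg z m2 ∧
      psiW n m1 < psiW n m ∧ psiW n m2 < psiW n m := by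
  have hpq : p ≠ q := by
    intro h; rw [h] at h12; exact lt_irrefl _ h12
  have hpP : p ∈ pairsP n := mem_pairsP.mpr hp
  have hqP : q ∈ pairsP n := mem_pairsP.mpr hq
  set r : Fin n × Fin n := (p.1, q.1) with hr
  have hrP : r ∈ pairsP n := mem_pairsP.mpr h12
  set m'' : Fin n × Fin n → ℕ :=
    fun s => if s = p then m p - 1 else if s = q then m q - 1 else m s with hm''
  have hmsplit : m = m'' + Pi.single p 1 + Pi.single q 1 := by
    funext s
    simp only [Pi.add_apply, Pi.single_apply, hm'']
    by_cases hsp : s = p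
    · subst hsp
      rw [if_pos rfl, if_pos rfl, if_neg hpq]
      omega
    · rw [if_neg hsp, if_neg hsp]
      by_cases hsq : s = q
      · subst hsq
        rw [if_pos rfl, if_pos rfl]
        omega
      · rw [if_neg hsq, if_neg hsq]
        omega
  refine ⟨m'' + Pi.single q 1 + Pi.single r 1, m'' + Pi.single p 1 + Pi.single r 1, ?_, ?_, ?_⟩
  · -- the partial fraction identity
    have e0 : gg z m = gg z m'' * ((uu z p)⁻¹ * (uu z q)⁻¹) := by
      rw [hmsplit, gg_add hne, gg_add hne, gg_single hpP, gg_single hqP]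
      ring
    have e1 : gg z (m'' + Pi.single q 1 + Pi.single r 1)
        = gg z m'' * ((uu z r)⁻¹ * (uu z q)⁻¹) := by
      rw [gg_add hne, gg_add hne, gg_single hqP, gg_single hrP]
      ring
    have e2 : gg z (m'' + Pi.single p 1 + Pi.single r 1)
        = gg z m'' * ((uu z r)⁻¹ * (uu z p)⁻¹) := by
      rw [gg_add hne, gg_add hne, gg_single hpP, gg_single hrP]
      ring
    rw [e0, e1, e2, ← mul_sub]
    congr 1
    have hup : uu z p ≠ 0 := hne p hpP
    have huq : uu z q ≠ 0 := hne q hqP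
    have hur : uu z r ≠ 0 := hne r hrP
    have hzq : uu z q = z q.1 - z p.2 := by rw [uu, hpq2]
    have hzr : uu z r = z p.1 - z q.1 := rfl
    rw [uu] at hup ⊢
    rw [hzq] at huq ⊢
    rw [hzr] at hur ⊢
    field_simp
    ring
  · -- psi bound 1
    have w1 : psiW n m = psiW n m'' + 4^((p.2 : Fin n):ℕ) + 4^((q.2 : Fin n):ℕ) := by
      conv_lhs => rw [hmsplit]
      unfold psiW
      rw [weight_add (fun s => 4^((s.2 : Fin n):ℕ)) _ (Pi.single q 1),
        weight_add (fun s => 4^((s.2 : Fin n):ℕ)) m'' (Pi.single p 1),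
        weight_single _ hpP, weight_single _ hqP]
    have w2 : psiW n (m'' + Pi.single q 1 + Pi.single r 1)
        = psiW n m'' + 4^((q.2 : Fin n):ℕ) + 4^((q.1 : Fin n):ℕ) := by
      unfold psiW
      rw [weight_add (fun s => 4^((s.2 : Fin n):ℕ)) _ (Pi.single r 1),
        weight_add (fun s => 4^((s.2 : Fin n):ℕ)) m'' (Pi.single q 1),
        weight_single _ hqP, weight_single _ hrP]
    have hlt : (4:ℕ)^((q.1 : Fin n):ℕ) < 4^((p.2 : Fin n):ℕ) := by
      apply Nat.pow_lt_pow_right (by norm_num)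
      rw [hpq2]; exact hq
    omega
  · -- psi bound 2
    have w1 : psiW n m = psiW n m'' + 4^((p.2 : Fin n):ℕ) + 4^((q.2 : Fin n):ℕ) := by
      conv_lhs => rw [hmsplit]
      unfold psiW
      rw [weight_add (fun s => 4^((s.2 : Fin n):ℕ)) _ (Pi.single q 1),
        weight_add (fun s => 4^((s.2 : Fin n):ℕ)) m'' (Pi.single p 1),
        weight_single _ hpP, weight_single _ hqP]
    have w2 : psiW n (m'' + Pi.single p 1 + Pi.single r 1)
        = psiW n m'' + 4^((p.2 : Fin n):ℕ) + 4^((q.1 : Fin n):ℕ) := by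
      unfold psiW
      rw [weight_add (fun s => 4^((s.2 : Fin n):ℕ)) _ (Pi.single r 1),
        weight_add (fun s => 4^((s.2 : Fin n):ℕ)) m'' (Pi.single p 1),
        weight_single _ hpP, weight_single _ hrP]
    have hlt : (4:ℕ)^((q.1 : Fin n):ℕ) < 4^((q.2 : Fin n):ℕ) := by
      apply Nat.pow_lt_pow_right (by norm_num)
      exact hq
    omega

include hne hW1 hWf hdu hWD in
lemma W_all : ∀ (N : ℕ) (m : Fin n × Fin n → ℕ), psiW n m ≤ N → gg z m ∈ W := by
  intro N
  induction N with
  | zero =>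
      intro m hpsi
      refine W_forest W hne hW1 hWf DD hdu hWD (phiW n m) m ?_ le_rfl
      intro p q hp hq hpq2 hmp hmq
      exfalso
      have : m p * 4^((p.2 : Fin n):ℕ) ≤ psiW n m :=
        Finset.single_le_sum (f := fun s => m s * 4^((s.2 : Fin n):ℕ))
          (fun s _ => Nat.zero_le _) (mem_pairsP.mpr hp)
      have h4 : 0 < (4:ℕ)^((p.2 : Fin n):ℕ) := Nat.pow_pos (by norm_num)
      have : 0 < m p * 4^((p.2 : Fin n):ℕ) := Nat.mul_pos hmp h4
      omega
  | succ N ih =>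
      intro m hpsi
      by_cases hf : Forest m
      · exact W_forest W hne hW1 hWf DD hdu hWD (phiW n m) m hf le_rfl
      · rw [Forest] at hf
        push_neg at hf
        obtain ⟨p, q, hp, hq, hpq2, hmp, hmq, hpq⟩ := hf
        have h11 : p.1 ≠ q.1 := by
          intro h
          exact hpq (Prod.ext h hpq2)
        rcases lt_or_gt_of_ne h11 with h12 | h12
        · obtain ⟨m1, m2, hid, h1, h2⟩ := W_tri hne hp hq hpq2 h12 hmp hmq
          rw [hid]
          exact W.sub_mem (ih m1 (by omega)) (ih m2 (by omega))
        · obtain ⟨m1, m2, hid, h1, h2⟩ := W_tri hne hq hp hpq2.symm h12 hmq hmp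
          rw [hid]
          exact W.sub_mem (ih m1 (by omega)) (ih m2 (by omega))

end memb

section glue
variable (W : Submodule F K)
variable (hW1 : ∀ i : Fin n, ∀ x ∈ W, z i * x ∈ W)

include hW1 in
lemma W_polyMul {r : K} (hr : r ∈ Algebra.adjoin F (Set.range z)) :
    ∀ x ∈ W, r * x ∈ W := by
  induction hr using Algebra.adjoin_induction with
  | mem y hy =>
      obtain ⟨i, rfl⟩ := hy
      exact hW1 i
  | algebraMap c =>
      intro x hx
      rw [← Algebra.smul_def]
      exact W.smul_mem c hx
  | add a b ha hb iha ihb =>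
      intro x hx
      rw [add_mul]
      exact W.add_mem (iha x hx) (ihb x hx)
  | mul a b ha hb iha ihb =>
      intro x hx
      rw [mul_assoc]
      exact iha _ (ihb x hx)

-- the span over the polynomial subalgebra
include hW1 in
lemma A_le_W (hne : ∀ p ∈ pairsP n, uu z p ≠ 0)
    (hgg : ∀ m : Fin n × Fin n → ℕ, gg z m ∈ W) :
    ∀ x ∈ Algebra.adjoin F
      (Set.range z ∪ {x : K | ∃ i j : Fin n, i < j ∧ x = (z i - z j)⁻¹}), x ∈ W := by
  set R' := Algebra.adjoin F (Set.range z)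
  set V : Submodule R' K := Submodule.span R' (Set.range (gg z)) with hV
  have hmulV : ∀ x ∈ V, ∀ y ∈ V, x * y ∈ V := by
    intro x hx y hy
    have hle : V * V ≤ V := by
      rw [hV, Submodule.span_mul_span]
      apply Submodule.span_le.mpr
      intro w hw
      obtain ⟨a, ⟨ma, rfl⟩, b, ⟨mb, rfl⟩, rfl⟩ := hw
      show gg z ma * gg z mb ∈ _
      rw [← gg_add hne]
      exact Submodule.subset_span ⟨ma + mb, rfl⟩
    exact hle (Submodule.mul_mem_mul hx hy)
  have h1V : (1 : K) ∈ V := by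
    rw [← gg_zero]
    exact Submodule.subset_span ⟨_, rfl⟩
  have hAV : ∀ x ∈ Algebra.adjoin F
      (Set.range z ∪ {x : K | ∃ i j : Fin n, i < j ∧ x = (z i - z j)⁻¹}), x ∈ V := by
    intro x hx
    induction hx using Algebra.adjoin_induction with
    | mem y hy =>
        rcases hy with ⟨i, rfl⟩ | ⟨i, j, hij, rfl⟩
        · have : z i = (⟨z i, Algebra.subset_adjoin (Set.mem_range_self i)⟩ : R') • (1 : K) := by
            rw [Algebra.smul_def, mul_one]
            rfl
          rw [this]
          exact V.smul_mem _ h1V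
        · have hij' : (i, j) ∈ pairsP n := mem_pairsP.mpr hij
          have : (z i - z j)⁻¹ = gg z (Pi.single (i, j) 1) := by
            rw [gg_single hij']
            rfl
          rw [this]
          exact Submodule.subset_span ⟨_, rfl⟩
    | algebraMap c =>
        rw [Algebra.algebraMap_eq_smul_one]
        exact V.smul_of_tower_mem c h1V
    | add a b ha hb iha ihb => exact V.add_mem iha ihb
    | mul a b ha hb iha ihb => exact hmulV a iha b ihb
  intro x hx
  have hxV := hAV x hx
  clear hx
  induction hxV using Submodule.span_induction with
  | mem y hy =>
      obtain ⟨m, rfl⟩ := hy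
      exact hgg m
  | zero => exact W.zero_mem
  | add a b ha hb iha ihb => exact W.add_mem iha ihb
  | smul a y hy ihy =>
      have : a • y = (a : K) * y := by
        rw [Algebra.smul_def]
        rfl
      rw [this]
      exact W_polyMul W hW1 a.2 y ihy

end glue

lemma A_D (DD : Fin n → Derivation F K K)
    (hdz : ∀ i j : Fin n, DD i (z j) = if i = j then (1:K) else 0)
    (i : Fin n) :
    ∀ x ∈ Algebra.adjoin F
      (Set.range z ∪ {x : K | ∃ i j : Fin n, i < j ∧ x = (z i - z j)⁻¹}), DD i x ∈
      Algebra.adjoin F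
      (Set.range z ∪ {x : K | ∃ i j : Fin n, i < j ∧ x = (z i - z j)⁻¹}) := by
  set AA := Algebra.adjoin F
      (Set.range z ∪ {x : K | ∃ i j : Fin n, i < j ∧ x = (z i - z j)⁻¹}) with hAA
  intro x hx
  induction hx using Algebra.adjoin_induction with
  | mem y hy =>
      rcases hy with ⟨j, rfl⟩ | ⟨a, b, hab, rfl⟩
      · rw [hdz]
        split_ifs
        · exact one_mem _
        · exact zero_mem _
      · rw [Derivation.leibniz_inv]
        have hmem : (z a - z b)⁻¹ ∈ AA := Algebra.subset_adjoin (Or.inr ⟨a, b, hab, rfl⟩)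
        have hd : DD i (z a - z b) ∈ AA := by
          rw [map_sub, hdz, hdz]
          apply sub_mem
          · split_ifs
            · exact one_mem _
            · exact zero_mem _
          · split_ifs
            · exact one_mem _
            · exact zero_mem _
        rw [smul_eq_mul]
        exact mul_mem (neg_mem (pow_mem hmem 2)) hd
  | algebraMap c =>
      rw [Derivation.map_algebraMap]
      exact zero_mem _
  | add a b _ _ iha ihb =>
      rw [map_add]
      exact add_mem iha ihb
  | mul a b haA hbA iha ihb =>
      rw [Derivation.leibniz, smul_eq_mul, smul_eq_mul]
      exact add_mem (mul_mem haA ihb) (mul_mem hbA iha)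

end DiagCyclic

open DiagCyclic in
/-- **Lemma 5.1 of Bakalov–De Sole–Heluani–Kac (due to P. Etingof)**: let `F` be a field
of characteristic `0` and let `K = F(z_1,…,z_n)` be the field of rational functions in
`n ≥ 1` variables, formalized as a field extension `K` of `F` together with an
algebraically independent family `z : Fin n → K` generating `K` as a field over `F`.
Let `D i` be the partial derivative `∂_{z_i}`, i.e. the `F`-linear derivation of `K`
with `D i (z j) = δ_{ij}`. Then the function `f = ∏_{i<j} (z_i - z_j)⁻¹` is a cyclic
vector of the module of rational functions regular away from the diagonals: the smallest
`F`-linear subspace of `K` containing `f` and stable under multiplication by each `z_i`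
and under each `∂_{z_i}` equals
`O*_n = F[z_1,…,z_n][(z_i - z_j)⁻¹ : i < j]`. -/
theorem diag_product_is_cyclic_vector
    (F K : Type*) [Field F] [CharZero F] [Field K] [Algebra F K]
    (n : ℕ) (hn : 1 ≤ n) (z : Fin n → K)
    (hz : AlgebraicIndependent F z)
    (hgen : IntermediateField.adjoin F (Set.range z) = ⊤)
    (D : Fin n → (K →ₗ[F] K))
    (hLeib : ∀ (i : Fin n) (x y : K), D i (x * y) = x * D i y + D i x * y)
    (hDz : ∀ i j : Fin n, D i (z j) = if i = j then 1 else 0) :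
    sInf {W : Submodule F K |
        (∏ p ∈ Finset.univ.filter (fun p : Fin n × Fin n => p.1 < p.2),
          (z p.1 - z p.2)⁻¹) ∈ W ∧
        (∀ i : Fin n, ∀ x ∈ W, z i * x ∈ W) ∧
        (∀ i : Fin n, ∀ x ∈ W, D i x ∈ W)} =
      Subalgebra.toSubmodule (Algebra.adjoin F
        (Set.range z ∪ {x : K | ∃ i j : Fin n, i < j ∧ x = (z i - z j)⁻¹})) := by
  haveI : CharZero K := charZero_of_injective_algebraMap (algebraMap F K).injective
  -- the derivations as `Derivation`s
  have hD1 : ∀ i : Fin n, D i 1 = 0 := by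
    intro i
    have h := hLeib i 1 1
    simp only [one_mul, mul_one] at h
    have h2 : D i 1 + D i 1 = D i 1 + 0 := by rw [add_zero]; exact h.symm
    exact add_left_cancel h2
  let DD : Fin n → Derivation F K K := fun i =>
    ⟨D i, hD1 i, fun a b => by rw [smul_eq_mul, smul_eq_mul, hLeib i a b]; ring⟩
  have hDD : ∀ (i : Fin n) (x : K), DD i x = D i x := fun _ _ => rfl
  have hne : ∀ p ∈ pairsP n, uu z p ≠ 0 := by
    intro p hp
    exact sub_ne_zero.mpr (fun h => absurd (hz.injective h) (ne_of_lt (mem_pairsP.mp hp)))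
  have hdz' : ∀ i j : Fin n, DD i (z j) = if i = j then (1:K) else 0 := by
    intro i j
    rw [hDD, hDz]
  have hdu : ∀ (a : Fin n), ∀ p ∈ pairsP n, DD a (uu z p) = ((chi a p : ℤ) : K) := by
    intro a p hp
    rw [uu, map_sub, hdz', hdz', chi]
    split_ifs <;> norm_num
  have hf_eq : (∏ p ∈ Finset.univ.filter (fun p : Fin n × Fin n => p.1 < p.2),
      (z p.1 - z p.2)⁻¹) = gg z (fun _ => 1) := by
    rw [gg]
    apply Finset.prod_congr rfl
    intro p hp
    rw [uu]
    norm_num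
  apply le_antisymm
  · apply sInf_le
    refine ⟨?_, ?_, ?_⟩
    · rw [Subalgebra.mem_toSubmodule]
      apply prod_mem
      intro p hp
      have hp' : p.1 < p.2 := (Finset.mem_filter.mp hp).2
      exact Algebra.subset_adjoin (Or.inr ⟨p.1, p.2, hp', rfl⟩)
    · intro i x hx
      rw [Subalgebra.mem_toSubmodule] at hx ⊢
      exact mul_mem (Algebra.subset_adjoin (Or.inl (Set.mem_range_self i))) hx
    · intro i x hx
      rw [Subalgebra.mem_toSubmodule] at hx ⊢
      exact hDD i x ▸ A_D DD hdz' i x hx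
  · apply le_sInf
    rintro W ⟨hfW, hW1, hWD⟩
    intro x hx
    rw [Subalgebra.mem_toSubmodule] at hx
    have hWf : gg z (fun _ => (1:ℕ)) ∈ W := by
      rw [← hf_eq]; exact hfW
    have hWD' : ∀ i : Fin n, ∀ y ∈ W, DD i y ∈ W := by
      intro i y hy
      rw [hDD]
      exact hWD i y hy
    have hgg : ∀ m : Fin n × Fin n → ℕ, gg z m ∈ W := by
      intro m
      exact W_all W hne hW1 hWf DD hdu hWD' (psiW n m) m le_rfl
    exact A_le_W W hW1 hne hgg x hx
end

section
/- Let F be a field of characteristic 0, n ≥ 1, and let E be a forest of oriented edges on {1,…,n}. Then the F-linear span in K = F(z_1,…,z_n) of all iterated partial derivatives ∂_{z_1}^{a_1}⋯∂_{z_n}^{a_n} p_E (a_1,…,a_n ≥ 0) equals the F-linear span of the set { ∏_{(i,j) ∈ E} (z_i − z_j)^{−m_{ij}} : m_{ij} ≥ 1 for every (i,j) ∈ E }. Equivalently, the F[∂_{z_1},…,∂_{z_n}]-submodule of K generated by p_E coincides with F[(z_i − z_j)^{−1} : (i,j) ∈ E]·p_E. -/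
section Aux

open SimpleGraph

variable {F K : Type*} [Field F] [Field K] [Algebra F K]


lemma der_one (d : Module.End F K) (hL : ∀ x y : K, d (x * y) = x * d y + d x * y) :
    d 1 = 0 := by
  have h := hL 1 1
  rw [one_mul, one_mul, mul_one] at h
  exact (left_eq_add.mp h)

lemma der_inv (d : Module.End F K) (hL : ∀ x y : K, d (x * y) = x * d y + d x * y)
    {x : K} (hx : x ≠ 0) : d x⁻¹ = -(x⁻¹ * x⁻¹ * d x) := by
  have h1 : d (x * x⁻¹) = 0 := by rw [mul_inv_cancel₀ hx]; exact der_one d hL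
  rw [hL] at h1
  have h2 : x * d x⁻¹ = -(d x * x⁻¹) := by linear_combination h1
  apply mul_left_cancel₀ hx
  rw [h2]
  field_simp

lemma der_pow (d : Module.End F K) (hL : ∀ x y : K, d (x * y) = x * d y + d x * y)
    (x : K) : ∀ m : ℕ, d (x ^ (m + 1)) = ((m : K) + 1) * x ^ m * d x := by
  intro m
  induction m with
  | zero => simp
  | succ m ih =>
    have : x ^ (m + 2) = x * x ^ (m + 1) := by ring
    rw [this, hL, ih]
    push_cast
    ring

lemma der_prod (d : Module.End F K) (hL : ∀ x y : K, d (x * y) = x * d y + d x * y)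
    {α : Type*} [DecidableEq α] (s : Finset α) (f : α → K) :
    d (∏ e ∈ s, f e) = ∑ e ∈ s, d (f e) * ∏ e' ∈ s.erase e, f e' := by
  induction s using Finset.induction_on with
  | empty => simp [der_one d hL]
  | @insert a s ha ih =>
    rw [Finset.prod_insert ha, hL, ih, Finset.sum_insert ha, Finset.erase_insert ha,
      Finset.mul_sum, add_comm]
    congr 1
    apply Finset.sum_congr rfl
    intro e hes
    have hea : e ≠ a := fun h => ha (h ▸ hes)
    rw [Finset.erase_insert_of_ne hea.symm,
      Finset.prod_insert (fun h => ha (Finset.mem_of_mem_erase h))]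
    ring




lemma der_vanish {n : ℕ} (z : Fin n → K)
    (hgen : IntermediateField.adjoin F (Set.range z) = ⊤)
    (d : Module.End F K) (hL : ∀ x y : K, d (x * y) = x * d y + d x * y)
    (h0 : ∀ j, d (z j) = 0) (x : K) : d x = 0 := by
  let S : IntermediateField F K :=
  { carrier := {x : K | d x = 0}
    mul_mem' := fun {a b} ha hb => by
      simp only [Set.mem_setOf_eq] at *
      rw [hL, ha, hb]; ring
    one_mem' := der_one d hL
    add_mem' := fun {a b} ha hb => by
      simp only [Set.mem_setOf_eq] at *
      rw [map_add, ha, hb, add_zero]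
    zero_mem' := by simp only [Set.mem_setOf_eq, map_zero]
    algebraMap_mem' := fun c => by
      simp only [Set.mem_setOf_eq, Algebra.algebraMap_eq_smul_one, map_smul,
        der_one d hL, smul_zero]
    inv_mem' := fun x hx => by
      rcases eq_or_ne x 0 with rfl | hx0
      · simp only [Set.mem_setOf_eq, inv_zero, map_zero]
      · simp only [Set.mem_setOf_eq] at *
        rw [der_inv d hL hx0, hx]; ring }
  have hsub : Set.range z ⊆ ↑S := by rintro _ ⟨j, rfl⟩; exact h0 j
  have htop : (⊤ : IntermediateField F K) ≤ S := hgen ▸ IntermediateField.adjoin_le_iff.mpr hsub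
  exact htop (IntermediateField.mem_top)

lemma mul_listOfFn_prod {M : Type*} [Monoid M] :
    ∀ {k : ℕ} (f : Fin k → M) (i : Fin k) (c : M), (∀ j, Commute c (f j)) →
      c * (List.ofFn f).prod = (List.ofFn (Function.update f i (c * f i))).prod := by
  intro k
  induction k with
  | zero => exact fun f i => i.elim0
  | succ k ih =>
    intro f i c hc
    rw [List.ofFn_succ, List.ofFn_succ, List.prod_cons, List.prod_cons]
    induction i using Fin.cases with
    | zero =>
      have htail : (fun j : Fin k => Function.update f 0 (c * f 0) j.succ)
          = fun j : Fin k => f j.succ := by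
        funext j; rw [Function.update_of_ne (Fin.succ_ne_zero j)]
      rw [Function.update_self, htail, mul_assoc]
    | succ j =>
      have hhead : Function.update f j.succ (c * f j.succ) 0 = f 0 :=
        Function.update_of_ne (Fin.succ_ne_zero j).symm _ _
      have htail : (fun k' : Fin k => Function.update f j.succ (c * f j.succ) k'.succ)
          = Function.update (fun k' : Fin k => f k'.succ) j (c * f j.succ) := by
        funext k'
        rcases eq_or_ne k' j with rfl | hne
        · rw [Function.update_self, Function.update_self]
        · rw [Function.update_of_ne (fun h => hne (Fin.succ_injective _ h)),
            Function.update_of_ne hne]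
      rw [hhead, htail, ← ih (fun k' => f k'.succ) j c (fun k' => hc k'.succ),
        ← mul_assoc, ← mul_assoc, (hc 0).eq]




lemma key_formula {n : ℕ} (z : Fin n → K) (d : Module.End F K)
    (hL : ∀ x y : K, d (x * y) = x * d y + d x * y)
    (E : Finset (Fin n × Fin n)) (hne0 : ∀ e ∈ E, z e.1 - z e.2 ≠ 0)
    (c : Fin n × Fin n → F)
    (hc : ∀ e ∈ E, d (z e.1 - z e.2) = -(algebraMap F K (c e)))
    (m : Fin n × Fin n → ℕ) (hm : ∀ e ∈ E, 1 ≤ m e) :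
    d (∏ e ∈ E, ((z e.1 - z e.2)⁻¹) ^ m e)
      = ∑ e ∈ E, (c e * (m e : F)) •
          ∏ e' ∈ E, ((z e'.1 - z e'.2)⁻¹) ^ (Function.update m e (m e + 1)) e' := by
  classical
  rw [der_prod d hL E (fun e => ((z e.1 - z e.2)⁻¹) ^ m e)]
  apply Finset.sum_congr rfl
  intro e he
  have hupd : ∏ e' ∈ E, ((z e'.1 - z e'.2)⁻¹) ^ (Function.update m e (m e + 1)) e'
      = ((z e.1 - z e.2)⁻¹) ^ (m e + 1) * ∏ e' ∈ E.erase e, ((z e'.1 - z e'.2)⁻¹) ^ m e' := by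
    rw [← Finset.mul_prod_erase E (fun e' => ((z e'.1 - z e'.2)⁻¹) ^ (Function.update m e (m e + 1)) e') he]
    congr 1
    · rw [Function.update_self]
    · exact Finset.prod_congr rfl fun e' he' => by
        rw [Function.update_of_ne (Finset.ne_of_mem_erase he')]
  rw [hupd]
  obtain ⟨k, hk⟩ : ∃ k, m e = k + 1 := ⟨m e - 1, by have := hm e he; omega⟩
  rw [hk, der_pow d hL _ k, der_inv d hL (hne0 e he), hc e he, Algebra.smul_def,
    map_mul, map_natCast]
  push_cast
  ring



lemma forest_exists_leaf {n : ℕ} (E : Finset (Fin n × Fin n))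
    (hE : ∀ e ∈ E, e.1 ≠ e.2)
    (hE' : ∀ a b : Fin n, (a, b) ∈ E → (b, a) ∉ E)
    (hforest : (SimpleGraph.fromRel fun a b : Fin n => (a, b) ∈ E).IsAcyclic)
    (hne : E.Nonempty) :
    ∃ e ∈ E, ∃ v : Fin n, (v = e.1 ∨ v = e.2) ∧
      ∀ e' ∈ E, e' ≠ e → v ≠ e'.1 ∧ v ≠ e'.2 := by
  classical
  set G := (SimpleGraph.fromRel fun a b : Fin n => (a, b) ∈ E) with hG
  obtain ⟨e₀, he₀⟩ := hne
  have hadj₀ : G.Adj e₀.1 e₀.2 := by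
    rw [hG, SimpleGraph.fromRel_adj]
    exact ⟨hE e₀ he₀, Or.inl (by simpa using he₀)⟩
  obtain ⟨⟨u, v, p⟩, -, hmax⟩ := Finset.exists_max_image
    (Finset.univ : Finset (Σ u : Fin n, Σ v : Fin n, G.Path u v))
    (fun t => (t.2.2 : G.Walk t.1 t.2.1).length)
    ⟨⟨e₀.1, e₀.2, SimpleGraph.Path.singleton hadj₀⟩, Finset.mem_univ _⟩
  have hp : (p : G.Walk u v).IsPath := p.2
  have hlen : 1 ≤ (p : G.Walk u v).length := by
    have := hmax ⟨e₀.1, e₀.2, SimpleGraph.Path.singleton hadj₀⟩ (Finset.mem_univ _)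
    simpa [SimpleGraph.Path.singleton] using this
  have hvu : v ≠ u := by
    rintro rfl
    have h := SimpleGraph.Path.loop_eq p
    rw [h] at hlen
    simp [SimpleGraph.Path.nil] at hlen
  obtain ⟨x, hvx, q, hq⟩ := SimpleGraph.Walk.exists_eq_cons_of_ne hvu ((p : G.Walk u v).reverse)
  have hrp : ((p : G.Walk u v).reverse).IsPath := hp.reverse
  rw [hq] at hrp
  have hqpath : q.IsPath := hrp.of_cons
  have hvq : v ∉ q.support := ((SimpleGraph.Walk.cons_isPath_iff _ _).mp hrp).2
  have hnb : ∀ c, G.Adj v c → c = x := by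
    intro c hvc
    by_contra hcx
    by_cases hcs : c ∈ q.support
    · set r := q.takeUntil c hcs with hr
      have hrpath : r.IsPath := hqpath.takeUntil hcs
      have hvr : v ∉ r.support := fun hmem =>
        hvq (SimpleGraph.Walk.support_takeUntil_subset _ hcs hmem)
      have hspath : (SimpleGraph.Walk.cons hvx r).IsPath :=
        (SimpleGraph.Walk.cons_isPath_iff _ _).mpr ⟨hrpath, hvr⟩
      have hcyc : (SimpleGraph.Walk.cons hvc.symm (SimpleGraph.Walk.cons hvx r)).IsCycle := by
        rw [SimpleGraph.Walk.cons_isCycle_iff]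
        refine ⟨hspath, ?_⟩
        simp only [SimpleGraph.Walk.edges_cons, List.mem_cons]
        rintro (h | h)
        · rw [Sym2.eq_iff] at h
          rcases h with ⟨h1, h2⟩ | ⟨h1, h2⟩
          · exact hvc.ne' h1
          · exact hcx h1
        · exact hvr (SimpleGraph.Walk.snd_mem_support_of_mem_edges r h)
      exact hforest _ hcyc
    · have hcp : c ∉ ((p : G.Walk u v).reverse).support := by
        rw [hq]
        simp only [SimpleGraph.Walk.support_cons, List.mem_cons]
        rintro (rfl | h)
        · exact hvc.ne' rfl
        · exact hcs h
      have hnew : (SimpleGraph.Walk.cons hvc.symm (p : G.Walk u v).reverse).IsPath :=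
        (SimpleGraph.Walk.cons_isPath_iff _ _).mpr ⟨hp.reverse, hcp⟩
      have := hmax ⟨c, u, ⟨_, hnew⟩⟩ (Finset.mem_univ _)
      simp only [SimpleGraph.Walk.length_cons, SimpleGraph.Walk.length_reverse] at this
      omega
  have hvadj : G.Adj v x := hvx
  rw [hG, SimpleGraph.fromRel_adj] at hvadj
  obtain ⟨hvxne, hmem | hmem⟩ := hvadj
  · refine ⟨(v, x), hmem, v, Or.inl rfl, ?_⟩
    intro e' he' hne'
    constructor
    · intro h1
      have hadj' : G.Adj v e'.2 := by
        rw [hG, SimpleGraph.fromRel_adj]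
        exact ⟨h1 ▸ hE e' he', Or.inl (by rw [h1]; simpa using he')⟩
      have hx2 : e'.2 = x := hnb _ hadj'
      exact hne' (by rw [Prod.ext_iff]; exact ⟨h1.symm, hx2⟩)
    · intro h2
      have hadj' : G.Adj v e'.1 := by
        rw [hG, SimpleGraph.fromRel_adj]
        refine ⟨fun h => (hE e' he') (h.symm.trans h2), Or.inr (by rw [h2]; simpa using he')⟩
      have hx1 : e'.1 = x := hnb _ hadj'
      apply hE' v x hmem
      have : e' = (x, v) := by rw [Prod.ext_iff]; exact ⟨hx1, h2.symm⟩
      exact this ▸ he'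
  · refine ⟨(x, v), hmem, v, Or.inr rfl, ?_⟩
    intro e' he' hne'
    constructor
    · intro h1
      have hadj' : G.Adj v e'.2 := by
        rw [hG, SimpleGraph.fromRel_adj]
        exact ⟨h1 ▸ hE e' he', Or.inl (by rw [h1]; simpa using he')⟩
      have hx2 : e'.2 = x := hnb _ hadj'
      apply hE' x v hmem
      have : e' = (v, x) := by rw [Prod.ext_iff]; exact ⟨h1.symm, hx2⟩
      exact this ▸ he'
    · intro h2
      have hadj' : G.Adj v e'.1 := by
        rw [hG, SimpleGraph.fromRel_adj]
        refine ⟨fun h => (hE e' he') (h.symm.trans h2), Or.inr (by rw [h2]; simpa using he')⟩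
      have hx1 : e'.1 = x := hnb _ hadj'
      exact hne' (by rw [Prod.ext_iff]; exact ⟨hx1, h2.symm⟩)



lemma forest_exists_ord {n : ℕ} : ∀ (N : ℕ) (E : Finset (Fin n × Fin n)),
    E.card ≤ N →
    (∀ e ∈ E, e.1 ≠ e.2) →
    (∀ a b : Fin n, (a, b) ∈ E → (b, a) ∉ E) →
    (SimpleGraph.fromRel fun a b : Fin n => (a, b) ∈ E).IsAcyclic →
    ∃ (ord : Fin n × Fin n → ℕ) (v : Fin n × Fin n → Fin n),
      ∀ e ∈ E, (v e = e.1 ∨ v e = e.2) ∧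
        ∀ e' ∈ E, e' ≠ e → (v e = e'.1 ∨ v e = e'.2) → ord e' < ord e := by
  intro N
  induction N with
  | zero =>
    intro E hcard _ _ _
    have : E = ∅ := Finset.card_eq_zero.mp (Nat.le_zero.mp hcard)
    subst this
    exact ⟨fun _ => 0, fun e => e.1, fun e he => absurd he (by simp)⟩
  | succ N ih =>
    intro E hcard hE hE' hforest
    rcases eq_or_ne E ∅ with rfl | hEne
    · exact ⟨fun _ => 0, fun e => e.1, fun e he => absurd he (by simp)⟩
    · obtain ⟨e₀, he₀, v₀, hv₀, hleaf⟩ := forest_exists_leaf E hE hE' hforest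
        (Finset.nonempty_of_ne_empty hEne)
      set E' := E.erase e₀ with hE'def
      have hsub : ∀ e ∈ E', e ∈ E := fun e he => Finset.mem_of_mem_erase he
      have hle : (SimpleGraph.fromRel fun a b : Fin n => (a, b) ∈ E') ≤
          SimpleGraph.fromRel fun a b : Fin n => (a, b) ∈ E := by
        intro a b hab
        rw [SimpleGraph.fromRel_adj] at hab ⊢
        exact ⟨hab.1, hab.2.imp (hsub _) (hsub _)⟩
      have hforest' : (SimpleGraph.fromRel fun a b : Fin n => (a, b) ∈ E').IsAcyclic :=
        fun w c hc => hforest (c.mapLe hle) (hc.mapLe hle)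
      have hcard' : E'.card ≤ N := by
        have h1 : E'.card = E.card - 1 := by rw [hE'def]; exact Finset.card_erase_of_mem he₀
        have h2 : 0 < E.card := Finset.card_pos.mpr ⟨e₀, he₀⟩
        omega
      obtain ⟨ord', v', hord'⟩ := ih E' hcard' (fun e he => hE e (hsub e he))
        (fun a b hab => fun h => hE' a b (hsub _ hab) (hsub _ h)) hforest'
      refine ⟨fun e => if e = e₀ then 0 else ord' e + 1,
              fun e => if e = e₀ then v₀ else v' e, ?_⟩
      intro e he
      rcases eq_or_ne e e₀ with rfl | hee₀
      · refine ⟨by simpa using hv₀, ?_⟩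
        intro e' he' hne' hinc
        simp only [if_pos rfl] at hinc
        exact absurd hinc (by
          have := hleaf e' he' hne'
          tauto)
      · have heE' : e ∈ E' := Finset.mem_erase.mpr ⟨hee₀, he⟩
        obtain ⟨hv'e, hlt⟩ := hord' e heE'
        refine ⟨by simpa [if_neg hee₀] using hv'e, ?_⟩
        intro e' he' hne' hinc
        simp only [if_neg hee₀] at hinc ⊢
        rcases eq_or_ne e' e₀ with rfl | he'e₀
        · simp
        · have he'E' : e' ∈ E' := Finset.mem_erase.mpr ⟨he'e₀, he'⟩
          simp only [if_neg he'e₀]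
          have := hlt e' he'E' hne' hinc
          omega


end Aux





/-- **Lemma 6.2 of Bakalov–De Sole–Heluani–Kac**: let `F` be a field of characteristic
`0` and `K = F(z_1,…,z_n)` the rational function field in `n ≥ 1` variables (formalized
as a field extension generated by an algebraically independent family `z`), with partial
derivatives `D i = ∂_{z_i}`. Let `E` be a forest of oriented edges on `{1,…,n}`: a finite
set of ordered pairs of distinct indices whose underlying undirected simple graph is
acyclic and which contains no two pairs with the same underlying unordered pair, and let
`p_E = ∏_{(i,j) ∈ E} (z_i - z_j)⁻¹`. Then the `F`-linear span of all iterated partial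
derivatives of `p_E` equals the `F`-linear span of the functions
`∏_{(i,j) ∈ E} (z_i - z_j)^{-m_{ij}}` with all `m_{ij} ≥ 1`. -/
theorem span_derivatives_forest
    (F K : Type*) [Field F] [CharZero F] [Field K] [Algebra F K]
    (n : ℕ) (hn : 1 ≤ n) (z : Fin n → K)
    (hz : AlgebraicIndependent F z)
    (hgen : IntermediateField.adjoin F (Set.range z) = ⊤)
    (D : Fin n → Module.End F K)
    (hLeib : ∀ (i : Fin n) (x y : K), D i (x * y) = x * D i y + D i x * y)
    (hDz : ∀ i j : Fin n, D i (z j) = if i = j then 1 else 0)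
    (E : Finset (Fin n × Fin n))
    (hE : ∀ e ∈ E, e.1 ≠ e.2)
    (hE' : ∀ a b : Fin n, (a, b) ∈ E → (b, a) ∉ E)
    (hforest : (SimpleGraph.fromRel fun a b : Fin n => (a, b) ∈ E).IsAcyclic) :
    Submodule.span F {x : K | ∃ a : Fin n → ℕ,
        x = ((List.ofFn fun i => D i ^ a i).prod)
          (∏ e ∈ E, (z e.1 - z e.2)⁻¹)} =
      Submodule.span F {x : K | ∃ m : Fin n × Fin n → ℕ,
        (∀ e ∈ E, 1 ≤ m e) ∧ x = ∏ e ∈ E, ((z e.1 - z e.2)⁻¹) ^ m e} := by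
  classical
  have hzne : ∀ a b : Fin n, a ≠ b → z a ≠ z b := by
    intro a b hab h
    have h1 := hDz a a
    rw [if_pos rfl] at h1
    have h2 := hDz a b
    rw [if_neg hab, ← h, h1] at h2
    exact one_ne_zero h2
  have hne0 : ∀ e ∈ E, z e.1 - z e.2 ≠ 0 := fun e he => sub_ne_zero.mpr (hzne _ _ (hE e he))
  -- commutation of the partial derivatives
  have hcomm : ∀ i j : Fin n, Commute (D i) (D j) := by
    intro i j
    set Δ : Module.End F K := D i * D j - D j * D i with hΔ
    have hL2 : ∀ x y : K, Δ (x * y) = x * Δ y + Δ x * y := by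
      intro x y
      simp only [hΔ, LinearMap.sub_apply, Module.End.mul_apply]
      rw [hLeib j x y, map_add, hLeib i x (D j y), hLeib i (D j x) y,
        hLeib i x y, map_add, hLeib j x (D i y), hLeib j (D i x) y]
      ring
    have h0 : ∀ k0 : Fin n, Δ (z k0) = 0 := by
      intro k0
      simp only [hΔ, LinearMap.sub_apply, Module.End.mul_apply, hDz]
      split_ifs <;>
        simp [der_one (D i) (hLeib i), der_one (D j) (hLeib j)]
    have hv := der_vanish z hgen Δ hL2 h0
    have hΔ0 : Δ = 0 := LinearMap.ext fun x => hv x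
    rw [hΔ] at hΔ0
    exact sub_eq_zero.mp hΔ0
  -- derivative of the generating differences
  have hccd : ∀ (i : Fin n), ∀ e ∈ E, D i (z e.1 - z e.2)
      = -(algebraMap F K ((if i = e.2 then (1:F) else 0) - (if i = e.1 then (1:F) else 0))) := by
    intro i e _
    rw [map_sub, hDz, hDz, map_sub, apply_ite (algebraMap F K), apply_ite (algebraMap F K),
      map_one, map_zero]
    ring
  set SL : Set K := {x : K | ∃ a : Fin n → ℕ,
      x = ((List.ofFn fun i => D i ^ a i).prod) (∏ e ∈ E, (z e.1 - z e.2)⁻¹)} with hSL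
  set SR : Set K := {x : K | ∃ m : Fin n × Fin n → ℕ,
      (∀ e ∈ E, 1 ≤ m e) ∧ x = ∏ e ∈ E, ((z e.1 - z e.2)⁻¹) ^ m e} with hSR
  -- closure of the right span under D i
  have hRD : ∀ (i : Fin n), ∀ x ∈ Submodule.span F SR, D i x ∈ Submodule.span F SR := by
    intro i
    have hgenR : SR ⊆ ↑(Submodule.comap (D i) (Submodule.span F SR)) := by
      rintro x ⟨m, hm, rfl⟩
      simp only [SetLike.mem_coe, Submodule.mem_comap]
      rw [key_formula z (D i) (hLeib i) E hne0 _ (hccd i) m hm]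
      apply Submodule.sum_mem
      intro e he
      apply Submodule.smul_mem
      apply Submodule.subset_span
      refine ⟨Function.update m e (m e + 1), fun e' he' => ?_, rfl⟩
      rcases eq_or_ne e' e with rfl | hne
      · rw [Function.update_self]; omega
      · rw [Function.update_of_ne hne]; exact hm e' he'
    intro x hx
    exact (Submodule.span_le.mpr hgenR) hx
  have hpER : (∏ e ∈ E, (z e.1 - z e.2)⁻¹) ∈ Submodule.span F SR := by
    apply Submodule.subset_span
    exact ⟨fun _ => 1, fun e _ => le_refl 1, by simp⟩
  have hpow : ∀ (i : Fin n) (k : ℕ), ∀ y ∈ Submodule.span F SR,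
      (D i ^ k) y ∈ Submodule.span F SR := by
    intro i k
    induction k with
    | zero => intro y hy; simpa using hy
    | succ k ihk =>
      intro y hy
      rw [pow_succ, Module.End.mul_apply]
      exact ihk _ (hRD i y hy)
  have hfwd : Submodule.span F SL ≤ Submodule.span F SR := by
    rw [Submodule.span_le]
    rintro x ⟨a, rfl⟩
    have hlist : ∀ (l : List (Module.End F K)),
        (∀ f ∈ l, ∀ y ∈ Submodule.span F SR, f y ∈ Submodule.span F SR) →
        ∀ y ∈ Submodule.span F SR, l.prod y ∈ Submodule.span F SR := by
      intro l
      induction l with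
      | nil => intro _ y hy; simpa using hy
      | cons f l ihl =>
        intro hf y hy
        rw [List.prod_cons, Module.End.mul_apply]
        exact hf f (List.mem_cons_self (a := f) (l := l)) _
          (ihl (fun g hg => hf g (List.mem_cons_of_mem f hg)) y hy)
    apply hlist
    · intro f hf
      rw [List.mem_ofFn] at hf
      obtain ⟨i, rfl⟩ := hf
      exact fun y hy => hpow i (a i) y hy
    · exact hpER
  -- backward direction
  have hDprodD : ∀ (i : Fin n) (a : Fin n → ℕ),
      D i * (List.ofFn fun j => D j ^ a j).prod
        = (List.ofFn fun j => D j ^ (Function.update a i (a i + 1)) j).prod := by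
    intro i a
    rw [mul_listOfFn_prod (fun j => D j ^ a j) i (D i) (fun j => (hcomm i j).pow_right (a j))]
    have hupdf : Function.update (fun j => D j ^ a j) i (D i * D i ^ a i)
        = fun j => D j ^ (Function.update a i (a i + 1)) j := by
      funext j
      rcases eq_or_ne j i with rfl | hji
      · rw [Function.update_self, Function.update_self, pow_succ']
      · rw [Function.update_of_ne hji, Function.update_of_ne hji]
    rw [hupdf]
  have hLD : ∀ (i : Fin n), ∀ x ∈ Submodule.span F SL, D i x ∈ Submodule.span F SL := by
    intro i
    have hgenL : SL ⊆ ↑(Submodule.comap (D i) (Submodule.span F SL)) := by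
      rintro x ⟨a, rfl⟩
      simp only [SetLike.mem_coe, Submodule.mem_comap]
      apply Submodule.subset_span
      refine ⟨Function.update a i (a i + 1), ?_⟩
      rw [← hDprodD i a, Module.End.mul_apply]
    intro x hx
    exact (Submodule.span_le.mpr hgenL) hx
  obtain ⟨ord, vv, hord⟩ := forest_exists_ord E.card E le_rfl hE hE' hforest
  have hsum_upd : ∀ (m : Fin n × Fin n → ℕ) (e : Fin n × Fin n), e ∈ E →
      ∑ e' ∈ E, (ord e' + 1) * (Function.update m e (m e + 1)) e'
        = (∑ e' ∈ E, (ord e' + 1) * m e') + (ord e + 1) := by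
    intro m e he
    rw [← Finset.add_sum_erase E _ he, ← Finset.add_sum_erase E (fun e' => (ord e' + 1) * m e') he,
      Function.update_self]
    have hrest : ∑ e' ∈ E.erase e, (ord e' + 1) * (Function.update m e (m e + 1)) e'
        = ∑ e' ∈ E.erase e, (ord e' + 1) * m e' :=
      Finset.sum_congr rfl fun e' he' => by rw [Function.update_of_ne (Finset.ne_of_mem_erase he')]
    rw [hrest, Nat.mul_succ]
    omega
  have hone : (List.ofFn fun i : Fin n => D i ^ (0:ℕ)).prod = (1 : Module.End F K) := by
    simp [pow_zero, List.ofFn_const, List.prod_replicate]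
  have hbase : (∏ e ∈ E, (z e.1 - z e.2)⁻¹) ∈ Submodule.span F SL := by
    apply Submodule.subset_span
    refine ⟨fun _ => 0, ?_⟩
    rw [hone]
    simp
  have hmain : ∀ (N : ℕ) (m : Fin n × Fin n → ℕ), (∀ e ∈ E, 1 ≤ m e) →
      (∑ e ∈ E, (ord e + 1) * m e) ≤ N →
      (∏ e ∈ E, ((z e.1 - z e.2)⁻¹) ^ m e) ∈ Submodule.span F SL := by
    intro N
    induction N with
    | zero =>
      intro m hm hsum
      rcases Finset.eq_empty_or_nonempty E with rfl | ⟨e, he⟩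
      · simpa using hbase
      · exfalso
        have h1 : 1 * 1 ≤ (ord e + 1) * m e := Nat.mul_le_mul (by omega) (hm e he)
        have h2 : (ord e + 1) * m e ≤ ∑ x ∈ E, (ord x + 1) * m x :=
          Finset.single_le_sum (f := fun x => (ord x + 1) * m x) (fun e _ => Nat.zero_le _) he
        omega
    | succ N ih =>
      intro m hm hsum
      by_cases hall : ∀ e ∈ E, m e = 1
      · have heq : ∏ e ∈ E, ((z e.1 - z e.2)⁻¹) ^ m e = ∏ e ∈ E, (z e.1 - z e.2)⁻¹ :=
          Finset.prod_congr rfl fun e he => by rw [hall e he, pow_one]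
        rw [heq]; exact hbase
      · push_neg at hall
        obtain ⟨t, ht, htm⟩ := hall
        have ht2 : 2 ≤ m t := by have := hm t ht; omega
        set m' := Function.update m t (m t - 1) with hm'def
        have hm'1 : ∀ e ∈ E, 1 ≤ m' e := by
          intro e he
          rcases eq_or_ne e t with rfl | hne
          · rw [hm'def, Function.update_self]; omega
          · rw [hm'def, Function.update_of_ne hne]; exact hm e he
        have hupdm : Function.update m' t (m' t + 1) = m := by
          funext e
          rcases eq_or_ne e t with rfl | hne
          · rw [Function.update_self, hm'def, Function.update_self]; omega
          · rw [Function.update_of_ne hne, hm'def, Function.update_of_ne hne]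
        have hS : ∑ e' ∈ E, (ord e' + 1) * m e'
            = (∑ e' ∈ E, (ord e' + 1) * m' e') + (ord t + 1) := by
          conv_lhs => rw [← hupdm]
          rw [hsum_upd m' t ht]
        have hsum' : (∑ e' ∈ E, (ord e' + 1) * m' e') ≤ N := by omega
        have hPm' := ih m' hm'1 hsum'
        have hD := hLD (vv t) _ hPm'
        rw [key_formula z (D (vv t)) (hLeib (vv t)) E hne0
          (fun e => (if vv t = e.2 then (1:F) else 0) - (if vv t = e.1 then (1:F) else 0))
          (hccd (vv t)) m' hm'1] at hD
        rw [← Finset.add_sum_erase E _ ht, hupdm] at hD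
        have hrest : (∑ e ∈ E.erase t,
            (((if vv t = e.2 then (1:F) else 0) - (if vv t = e.1 then (1:F) else 0)) * (m' e : F)) •
              ∏ e' ∈ E, ((z e'.1 - z e'.2)⁻¹) ^ (Function.update m' e (m' e + 1)) e')
            ∈ Submodule.span F SL := by
          apply Submodule.sum_mem
          intro e he
          by_cases hinc : vv t = e.1 ∨ vv t = e.2
          · apply Submodule.smul_mem
            refine ih (Function.update m' e (m' e + 1)) (fun e' he' => ?_) ?_
            · rcases eq_or_ne e' e with rfl | hne
              · rw [Function.update_self]; omega
              · rw [Function.update_of_ne hne]; exact hm'1 e' he'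
            · rw [hsum_upd m' e (Finset.mem_of_mem_erase he)]
              have hlt := (hord t ht).2 e (Finset.mem_of_mem_erase he)
                (Finset.ne_of_mem_erase he) hinc
              omega
          · push_neg at hinc
            have hz0 : ((if vv t = e.2 then (1:F) else 0) - (if vv t = e.1 then (1:F) else 0)) = 0 := by
              rw [if_neg hinc.2, if_neg hinc.1, sub_zero]
            rw [hz0, zero_mul, zero_smul]
            exact Submodule.zero_mem _
        have hAt : ((((if vv t = t.2 then (1:F) else 0) - (if vv t = t.1 then (1:F) else 0))
              * (m' t : F)) •
            (∏ e ∈ E, ((z e.1 - z e.2)⁻¹) ^ m e)) ∈ Submodule.span F SL := by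
          have hsub := Submodule.sub_mem _ hD hrest
          simpa using hsub
        have hcne : (((if vv t = t.2 then (1:F) else 0) - (if vv t = t.1 then (1:F) else 0))
            * (m' t : F)) ≠ 0 := by
          have hm't : (m' t : F) ≠ 0 := by
            rw [hm'def, Function.update_self]
            exact Nat.cast_ne_zero.mpr (by omega)
          rcases (hord t ht).1 with hv | hv
          · rw [hv, if_neg (Ne.symm (fun h => hE t ht h.symm)), if_pos rfl]
            exact mul_ne_zero (by norm_num) hm't
          · rw [hv, if_pos rfl, if_neg (fun h => hE t ht h.symm)]
            exact mul_ne_zero (by norm_num) hm't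
        have hfin := Submodule.smul_mem _
          ((((if vv t = t.2 then (1:F) else 0) - (if vv t = t.1 then (1:F) else 0))
            * (m' t : F)))⁻¹ hAt
        rw [smul_smul, inv_mul_cancel₀ hcne, one_smul] at hfin
        exact hfin
  have hbwd : Submodule.span F SR ≤ Submodule.span F SL := by
    rw [Submodule.span_le]
    rintro x ⟨m, hm, rfl⟩
    exact hmain _ m hm le_rfl
  exact le_antisymm hfwd hbwd
end

section
/- Let F be a field of characteristic 0, n ≥ 1 and r ≥ 0. Then fil^r equals the smallest F-linear subspace of K = F(z_1,…,z_n) that contains p_E for every forest E of oriented edges on {1,…,n} with at most r edges and that is stable under multiplication by each difference z_i − z_j (1 ≤ i < j ≤ n) and under each partial derivation ∂_{z_1},…,∂_{z_n}. In other words, the filtration component fil^r of the algebra of translation-invariant rational functions regular away from the diagonals is generated, as a module over the translation-invariant polynomial-coefficient differential operators, by the functions p_E attached to acyclic graphs with at most r edges. -/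
set_option linter.unusedSectionVars false

section aux
variable {F K : Type*} [Field F] [Field K] [Algebra F K]
variable (d : Module.End F K) (hL : ∀ x y : K, d (x * y) = x * d y + d x * y)

include hL

lemma D_one' : d 1 = 0 := by
  have h := hL 1 1
  simp only [mul_one, one_mul] at h
  have : d 1 + d 1 = d 1 + 0 := by rw [add_zero]; exact h.symm
  exact add_left_cancel this

lemma D_algebraMap' (c : F) : d (algebraMap F K c) = 0 := by
  rw [Algebra.algebraMap_eq_smul_one, map_smul, D_one' d hL, smul_zero]

lemma D_inv' (x : K) (hx : x ≠ 0) : d x⁻¹ = -(x⁻¹ * x⁻¹ * d x) := by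
  have h := hL x x⁻¹
  rw [mul_inv_cancel₀ hx, D_one' d hL] at h
  have hx' : x * d x⁻¹ = -(d x * x⁻¹) := by linear_combination -h
  calc d x⁻¹ = x⁻¹ * (x * d x⁻¹) := by
        rw [← mul_assoc, inv_mul_cancel₀ hx, one_mul]
    _ = -(x⁻¹ * x⁻¹ * d x) := by rw [hx']; ring

lemma D_pow_succ' (y : K) (k : ℕ) : d (y ^ (k + 1)) = ((k : K) + 1) * y ^ k * d y := by
  induction k with
  | zero => simp
  | succ k ih =>
    have h : y ^ (k + 2) = y * y ^ (k + 1) := by ring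
    rw [h, hL, ih]
    push_cast
    ring

lemma D_invpow' (x : K) (hx : x ≠ 0) (k : ℕ) :
    d ((x⁻¹) ^ k) = -(k : K) * (x⁻¹) ^ (k + 1) * d x := by
  cases k with
  | zero => simp [D_one' d hL]
  | succ k =>
    rw [D_pow_succ' d hL, D_inv' d hL x hx]
    push_cast
    ring

lemma D_prod' {ι : Type*} [DecidableEq ι] (s : Finset ι) (f : ι → K) :
    d (∏ t ∈ s, f t) = ∑ t ∈ s, (∏ t' ∈ s.erase t, f t') * d (f t) := by
  induction s using Finset.induction_on with
  | empty => simp [D_one' d hL]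
  | insert a s' ha ih =>
    rw [Finset.prod_insert ha, hL, ih, Finset.sum_insert ha, Finset.erase_insert ha,
      Finset.mul_sum]
    rw [add_comm]
    congr 1
    · ring
    apply Finset.sum_congr rfl
    intro t ht
    rw [Finset.erase_insert_of_ne (by rintro rfl; exact ha ht),
      Finset.prod_insert (fun h => ha (Finset.erase_subset _ _ h))]
    ring

end aux

open Finset

section comb
variable {F M : Type*} [Field F] [AddCommGroup M] [Module F M]
variable {n : ℕ}

lemma finset_pair_eq {a b c d : Fin n} (hab : a ≠ b) :
    ({a, b} : Finset (Fin n)) = {c, d} ↔ (a = c ∧ b = d) ∨ (a = d ∧ b = c) := by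
  constructor
  · intro h
    have ha : a ∈ ({c, d} : Finset (Fin n)) := h ▸ (by simp)
    have hb : b ∈ ({c, d} : Finset (Fin n)) := h ▸ (by simp)
    have hc : c ∈ ({a, b} : Finset (Fin n)) := h ▸ (by simp)
    have hd : d ∈ ({a, b} : Finset (Fin n)) := h ▸ (by simp)
    simp only [mem_insert, mem_singleton] at ha hb hc hd
    rcases ha with h1 | h1 <;> rcases hb with h2 | h2
    · exact absurd (h1.trans h2.symm) hab
    · exact Or.inl ⟨h1, h2⟩
    · exact Or.inr ⟨h1, h2⟩
    · exact absurd (h1.trans h2.symm) hab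
  · rintro (⟨rfl, rfl⟩ | ⟨rfl, rfl⟩)
    · rfl
    · exact Finset.pair_comm a b

/-- In an `F`-linearly independent family of "difference" vectors, there is a leaf:
an edge `t0` with an endpoint `a` belonging to no other edge. -/
lemma exists_leaf {ι : Type*} [Fintype ι] [Nonempty ι] [DecidableEq ι]
    (u : Fin n → M) (i j : ι → Fin n) (hij : ∀ t, i t ≠ j t)
    (hli : LinearIndependent F (fun t => u (i t) - u (j t))) :
    ∃ (t0 : ι) (a : Fin n), (a = i t0 ∨ a = j t0) ∧
      ∀ t, t ≠ t0 → a ≠ i t ∧ a ≠ j t := by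
  classical
  set V : Finset (Fin n) := (univ.image i) ∪ (univ.image j) with hV
  have hiV : ∀ t, i t ∈ V := fun t => mem_union_left _ (mem_image_of_mem i (mem_univ t))
  have hjV : ∀ t, j t ∈ V := fun t => mem_union_right _ (mem_image_of_mem j (mem_univ t))
  have hVne : V.Nonempty := ⟨i (Classical.arbitrary ι), hiV _⟩
  obtain ⟨a0, ha0⟩ := hVne
  set S : Finset M := (V.erase a0).image (fun a => u a - u a0) with hS
  have hq : ∀ a ∈ V, u a - u a0 ∈ Submodule.span F (S : Set M) := by
    intro a ha
    by_cases h : a = a0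
    · subst h; simp
    · exact Submodule.subset_span (by
        exact_mod_cast mem_image_of_mem _ (mem_erase.mpr ⟨h, ha⟩))
  have hmem : ∀ t, u (i t) - u (j t) ∈ Submodule.span F (S : Set M) := by
    intro t
    rw [← sub_sub_sub_cancel_right (u (i t)) (u (j t)) (u a0)]
    exact sub_mem (hq _ (hiV t)) (hq _ (hjV t))
  -- card ι ≤ S.card ≤ V.card - 1
  have hcard1 : Fintype.card ι ≤ V.card - 1 := by
    have hli' : LinearIndependent F
        (fun t => (⟨u (i t) - u (j t), hmem t⟩ : Submodule.span F (S : Set M))) :=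
      LinearIndependent.of_comp (Submodule.span F (S : Set M)).subtype hli
    have h1 : Fintype.card ι ≤ Module.finrank F (Submodule.span F (S : Set M)) :=
      hli'.fintype_card_le_finrank
    have h2 : Module.finrank F (Submodule.span F (S : Set M)) ≤ S.card :=
      finrank_span_finset_le_card S
    have h3 : S.card ≤ (V.erase a0).card := card_image_le
    have h4 : (V.erase a0).card = V.card - 1 := card_erase_of_mem ha0
    omega
  -- degree sum
  have hdeg : ∑ a ∈ V, (univ.filter fun t => i t = a ∨ j t = a).card
      = 2 * Fintype.card ι := by
    have : ∀ a ∈ V, (univ.filter fun t => i t = a ∨ j t = a).card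
        = ∑ t : ι, if i t = a ∨ j t = a then 1 else 0 := by
      intro a _; rw [Finset.card_filter]
    rw [Finset.sum_congr rfl this, Finset.sum_comm]
    have : ∀ t : ι, ∑ a ∈ V, (if i t = a ∨ j t = a then 1 else 0) = 2 := by
      intro t
      have hfeq : (V.filter fun a => i t = a ∨ j t = a) = {i t, j t} := by
        ext a
        simp only [mem_filter, mem_insert, mem_singleton]
        constructor
        · rintro ⟨_, h | h⟩ <;> [exact Or.inl h.symm; exact Or.inr h.symm]
        · rintro (rfl | rfl)
          · exact ⟨hiV t, Or.inl rfl⟩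
          · exact ⟨hjV t, Or.inr rfl⟩
      rw [← Finset.card_filter, hfeq, card_insert_of_notMem (by simp [hij t]),
        card_singleton]
    rw [Finset.sum_congr rfl (fun t _ => this t), Finset.sum_const, card_univ,
      smul_eq_mul, mul_comm]
  by_contra hcon
  push_neg at hcon
  have h2deg : ∀ a ∈ V, 2 ≤ (univ.filter fun t => i t = a ∨ j t = a).card := by
    intro a ha
    have h1 : ∃ t1, i t1 = a ∨ j t1 = a := by
      simp only [hV, mem_union, mem_image, mem_univ, true_and] at ha
      rcases ha with ⟨t, ht⟩ | ⟨t, ht⟩ <;> exact ⟨t, by tauto⟩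
    obtain ⟨t1, ht1⟩ := h1
    obtain ⟨t2, ht2ne, ht2⟩ := hcon t1 a (by tauto)
    apply Finset.one_lt_card.mpr
    refine ⟨t1, by simp [ht1], t2, by simp; tauto, fun h => ht2ne (h ▸ rfl)⟩
  have : 2 * V.card ≤ 2 * Fintype.card ι := by
    rw [← hdeg]
    calc 2 * V.card = ∑ _a ∈ V, 2 := by rw [Finset.sum_const, smul_eq_mul, mul_comm]
    _ ≤ _ := Finset.sum_le_sum h2deg
  have hVpos : 1 ≤ V.card := Finset.card_pos.mpr ⟨a0, ha0⟩
  omega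

end comb

section comb2
variable {F M : Type*} [Field F] [AddCommGroup M] [Module F M] {n : ℕ}

/-- Elimination ordering for a linearly independent family of difference vectors. -/
lemma exists_elim {ι : Type*} [Fintype ι] [DecidableEq ι]
    (u : Fin n → M) (i j : ι → Fin n) (hij : ∀ t, i t ≠ j t) :
    ∀ (N : ℕ) (T : Finset ι), T.card ≤ N →
      LinearIndependent F (fun t : T => u (i t) - u (j t)) →
      ∃ (w : ι → ℕ) (av : ι → Fin n), ∀ t ∈ T, (av t = i t ∨ av t = j t) ∧
        ∀ t' ∈ T, t' ≠ t → (av t = i t' ∨ av t = j t') → w t' < w t := by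
  intro N
  induction N with
  | zero =>
    intro T hT _
    have : T = ∅ := Finset.card_eq_zero.mp (le_antisymm hT (Nat.zero_le _))
    subst this
    exact ⟨fun _ => 0, fun t => i t, fun t ht => absurd ht (Finset.notMem_empty t)⟩
  | succ N ih =>
    intro T hT hli
    rcases Finset.eq_empty_or_nonempty T with rfl | hTne
    · exact ⟨fun _ => 0, fun t => i t, fun t ht => absurd ht (Finset.notMem_empty t)⟩
    have : Nonempty ↥T := Finset.Nonempty.coe_sort hTne
    obtain ⟨t0, a, ha, hleaf⟩ := exists_leaf (F := F) u (fun t : T => i t) (fun t : T => j t)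
      (fun t => hij t) hli
    set T' : Finset ι := T.erase ↑t0 with hT'
    have hsub : ∀ t : ↥T', (t : ι) ∈ T := fun t => Finset.mem_of_mem_erase t.2
    have hcard : T'.card ≤ N := by
      have h1 : T'.card = T.card - 1 := Finset.card_erase_of_mem t0.2
      have h2 : 1 ≤ T.card := Finset.card_pos.mpr hTne
      omega
    have hli' : LinearIndependent F (fun t : T' => u (i t) - u (j t)) := by
      exact hli.comp (fun t : T' => (⟨(t : ι), hsub t⟩ : ↥T))
        (fun x y hxy => by
          simp only [Subtype.mk.injEq] at hxy
          exact Subtype.ext hxy)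
    obtain ⟨w', av', hrec⟩ := ih T' hcard hli'
    refine ⟨fun t => if t = ↑t0 then 0 else w' t + 1, Function.update av' ↑t0 a, ?_⟩
    intro t ht
    by_cases htt0 : t = ↑t0
    · subst htt0
      rw [Function.update_self]
      refine ⟨ha, ?_⟩
      intro t' ht' hne hav
      exfalso
      have hne' : (⟨t', ht'⟩ : ↥T) ≠ t0 := fun hh => hne (congrArg Subtype.val hh)
      have := hleaf ⟨t', ht'⟩ hne'
      rcases hav with h | h <;> [exact this.1 h; exact this.2 h]
    · have htT' : t ∈ T' := Finset.mem_erase.mpr ⟨htt0, ht⟩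
      rw [Function.update_of_ne htt0]
      obtain ⟨h1, h2⟩ := hrec t htT'
      refine ⟨h1, ?_⟩
      intro t' ht' hne hav
      show (if t' = ↑t0 then 0 else w' t' + 1) < (if t = ↑t0 then 0 else w' t + 1)
      by_cases ht'0 : t' = ↑t0
      · rw [if_pos ht'0, if_neg htt0]
        exact Nat.succ_pos _
      · rw [if_neg ht'0, if_neg htt0]
        exact Nat.succ_lt_succ (h2 t' (Finset.mem_erase.mpr ⟨ht'0, ht'⟩) hne hav)

lemma telescope {V : Type*} {G : SimpleGraph V} (u : V → M) :
    ∀ {x y : V} (p : G.Walk x y),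
      (p.darts.map (fun dd => u dd.fst - u dd.snd)).sum = u x - u y := by
  intro x y p
  induction p with
  | nil => simp
  | cons h q ih =>
    rw [SimpleGraph.Walk.darts_cons, List.map_cons, List.sum_cons, ih]
    abel

lemma listsum_smul {α : Type*} (l : List α) (f : α → F) (x : M) :
    (l.map f).sum • x = (l.map fun a => f a • x).sum := by
  induction l with
  | nil => simp
  | cons a l ih => simp [add_smul, ih]

end comb2

section cyc
variable {F M : Type*} [Field F] [AddCommGroup M] [Module F M] {n : ℕ}

lemma sum_listsum_swap {ι α : Type*} (T : Finset ι) (l : List α) (h : ι → α → M) :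
    ∑ t ∈ T, (l.map (h t)).sum = (l.map fun d => ∑ t ∈ T, h t d).sum := by
  induction l with
  | nil => simp
  | cons a l ih => simp [Finset.sum_add_distrib, ih]

lemma acyclic_of_li {ι : Type*} [Fintype ι] [DecidableEq ι]
    (u : Fin n → M) (i j : ι → Fin n) (hij : ∀ t, i t ≠ j t)
    (hdist : ∀ t t', ({i t, j t} : Finset (Fin n)) = {i t', j t'} → t = t')
    (hli : LinearIndependent F fun t => u (i t) - u (j t)) :
    (SimpleGraph.fromRel fun a b => ∃ t, a = i t ∧ b = j t).IsAcyclic := by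
  classical
  set G := SimpleGraph.fromRel fun a b : Fin n => ∃ t, a = i t ∧ b = j t with hG
  intro v p hp
  set ε : G.Dart → ι → F := fun dd t =>
    (if dd.fst = i t ∧ dd.snd = j t then 1 else 0)
      - (if dd.snd = i t ∧ dd.fst = j t then 1 else 0) with hε
  have hpair : ∀ (dd : G.Dart) (t : ι), ε dd t ≠ 0 →
      ({i t, j t} : Finset (Fin n)) = {dd.fst, dd.snd} := by
    intro dd t hne
    rw [hε] at hne
    by_cases h1 : dd.fst = i t ∧ dd.snd = j t
    · rw [h1.1, h1.2]
    · by_cases h2 : dd.snd = i t ∧ dd.fst = j t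
      · rw [h2.1, h2.2]; exact Finset.pair_comm _ _
      · simp [h1, h2] at hne
  have hkey : ∀ dd : G.Dart, ∃ t1 : ι,
      ε dd t1 • (u (i t1) - u (j t1)) = u dd.fst - u dd.snd ∧ ε dd t1 ≠ 0 := by
    intro dd
    have hadj := dd.adj
    simp only [hG, SimpleGraph.fromRel_adj] at hadj
    obtain ⟨hfs, h | h⟩ := hadj
    · obtain ⟨t1, h1, h2⟩ := h
      have hnot : ¬(dd.snd = i t1 ∧ dd.fst = j t1) := by
        rintro ⟨h3, h4⟩
        exact hij t1 (h1.symm.trans h4)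
      have hv : ε dd t1 = 1 := by
        rw [hε]; simp only; rw [if_pos ⟨h1, h2⟩, if_neg hnot, sub_zero]
      refine ⟨t1, ?_, by rw [hv]; exact one_ne_zero⟩
      rw [hv, one_smul, h1, h2]
    · obtain ⟨t1, h1, h2⟩ := h
      have hnot : ¬(dd.fst = i t1 ∧ dd.snd = j t1) := by
        rintro ⟨h3, h4⟩
        exact hij t1 (h3.symm.trans h2)
      have hv : ε dd t1 = -1 := by
        rw [hε]; simp only; rw [if_neg hnot, if_pos ⟨h1, h2⟩, zero_sub]
      refine ⟨t1, ?_, by rw [hv]; exact neg_ne_zero.mpr one_ne_zero⟩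
      rw [hv, ← h1, ← h2, neg_smul, one_smul, neg_sub]
  have huniq : ∀ (dd : G.Dart) (t1 t : ι), ε dd t1 ≠ 0 → ε dd t ≠ 0 → t = t1 :=
    fun dd t1 t h1 h2 => hdist t t1 ((hpair dd t h2).trans (hpair dd t1 h1).symm)
  have hdart : ∀ dd : G.Dart,
      ∑ t : ι, ε dd t • (u (i t) - u (j t)) = u dd.fst - u dd.snd := by
    intro dd
    obtain ⟨t1, hsmul, hne0⟩ := hkey dd
    rw [Finset.sum_eq_single t1]
    · exact hsmul
    · intro t _ htne
      by_cases h : ε dd t = 0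
      · rw [h, zero_smul]
      · exact absurd (huniq dd t1 t hne0 h) htne
    · intro h; exact absurd (Finset.mem_univ t1) h
  -- the coefficient function
  set g : ι → F := fun t => (p.darts.map (fun dd => ε dd t)).sum with hg
  have hzero : ∑ t : ι, g t • (u (i t) - u (j t)) = 0 := by
    calc ∑ t : ι, g t • (u (i t) - u (j t))
        = ∑ t : ι, (p.darts.map (fun dd => ε dd t • (u (i t) - u (j t)))).sum := by
          apply Finset.sum_congr rfl
          intro t _
          rw [hg]
          exact listsum_smul _ _ _
      _ = (p.darts.map fun dd => ∑ t : ι, ε dd t • (u (i t) - u (j t))).sum := by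
          rw [← sum_listsum_swap]
      _ = (p.darts.map fun dd => u dd.fst - u dd.snd).sum := by
          congr 1; exact List.map_congr_left (fun dd _ => hdart dd)
      _ = 0 := by rw [telescope u p, sub_self]
  -- nonvanishing at the first dart
  obtain ⟨dd0, rest, hdarts⟩ : ∃ dd0 rest, p.darts = dd0 :: rest := by
    cases p with
    | nil => exact absurd rfl hp.ne_nil
    | cons h q => exact ⟨_, _, SimpleGraph.Walk.darts_cons _ _⟩
  obtain ⟨t0, _, hne0⟩ := hkey dd0
  have hrest : ∀ dd ∈ rest, ε dd t0 = 0 := by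
    intro dd hdd
    by_contra h
    have h1 := hpair dd t0 h
    have h2 := hpair dd0 t0 hne0
    -- same unordered edge, but edges of a cycle are distinct
    have hedge : dd.edge = dd0.edge := by
      have e12 : ({dd.fst, dd.snd} : Finset (Fin n)) = {dd0.fst, dd0.snd} :=
        h1.symm.trans h2
      rw [finset_pair_eq (dd.fst_ne_snd)] at e12
      show s(dd.fst, dd.snd) = s(dd0.fst, dd0.snd)
      rcases e12 with ⟨ha, hb⟩ | ⟨ha, hb⟩
      · rw [Sym2.eq_iff]; exact Or.inl ⟨ha, hb⟩
      · rw [Sym2.eq_iff]; exact Or.inr ⟨ha, hb⟩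
    have hnodup := hp.edges_nodup
    rw [SimpleGraph.Walk.edges, hdarts, List.map_cons, List.nodup_cons] at hnodup
    exact hnodup.1 (hedge ▸ List.mem_map_of_mem hdd)
  have hgne : g t0 ≠ 0 := by
    rw [hg]
    simp only [hdarts, List.map_cons, List.sum_cons]
    rw [List.sum_eq_zero (by
      intro x hx
      obtain ⟨dd, hdd, rfl⟩ := List.mem_map.mp hx
      exact hrest dd hdd), add_zero]
    exact hne0
  exact Fintype.not_linearIndependent_iff.mpr ⟨g, hzero, t0, hgne⟩ hli

end cyc

open Finset

section prodhelp
variable {K : Type*} [Field K] {s : ℕ}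

lemma Pupd (d : Fin s → K) (m : Fin s → ℕ) (t0 : Fin s) (k : ℕ) :
    ∏ t, (d t)⁻¹ ^ (Function.update m t0 k t)
      = (d t0)⁻¹ ^ k * ∏ t ∈ univ.erase t0, (d t)⁻¹ ^ m t := by
  rw [← Finset.mul_prod_erase univ _ (mem_univ t0), Function.update_self]
  congr 1
  exact Finset.prod_congr rfl fun t ht => by
    rw [Function.update_of_ne (Finset.mem_erase.mp ht).1]

lemma Psplit (d : Fin s → K) (m : Fin s → ℕ) (t0 : Fin s) :
    ∏ t, (d t)⁻¹ ^ m t = (d t0)⁻¹ ^ (m t0) * ∏ t ∈ univ.erase t0, (d t)⁻¹ ^ m t :=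
  (Finset.mul_prod_erase univ _ (mem_univ t0)).symm

lemma Pmul (d : Fin s → K) (m : Fin s → ℕ) (t0 : Fin s) (hd : d t0 ≠ 0) (hm : 1 ≤ m t0) :
    d t0 * ∏ t, (d t)⁻¹ ^ m t = ∏ t, (d t)⁻¹ ^ (Function.update m t0 (m t0 - 1) t) := by
  rw [Psplit d m t0, Pupd d m t0]
  obtain ⟨k, hk⟩ : ∃ k, m t0 = k + 1 := ⟨m t0 - 1, by omega⟩
  rw [hk]
  simp only [Nat.add_sub_cancel]
  rw [pow_succ', ← mul_assoc, ← mul_assoc, mul_inv_cancel₀ hd, one_mul]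

lemma supp_update {m : Fin s → ℕ} {t0 : Fin s} {k : ℕ} (h : k ≠ 0 ↔ m t0 ≠ 0) :
    (univ.filter fun t => Function.update m t0 k t ≠ 0) = (univ.filter fun t => m t ≠ 0) := by
  ext t
  simp only [mem_filter, mem_univ, true_and]
  by_cases ht : t = t0
  · subst ht; rw [Function.update_self]; exact h
  · rw [Function.update_of_ne ht]

end prodhelp


section derivP
variable {F K : Type*} [Field F] [Field K] [Algebra F K] {n : ℕ}

lemma DP (z : Fin n → K) (hzne : ∀ a b : Fin n, a ≠ b → z a - z b ≠ 0)
    (D : Fin n → Module.End F K)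
    (hLeib : ∀ (i : Fin n) (x y : K), D i (x * y) = x * D i y + D i x * y)
    (hDz : ∀ i j : Fin n, D i (z j) = if i = j then 1 else 0)
    {s : ℕ} (i j : Fin s → Fin n) (hij : ∀ t, i t ≠ j t) (a : Fin n) (μ : Fin s → ℕ) :
    D a (∏ t, ((z (i t) - z (j t))⁻¹) ^ μ t)
      = ∑ t, (-(μ t : K) * algebraMap F K
            ((if a = i t then 1 else 0) - (if a = j t then 1 else 0)))
          * ∏ t', ((z (i t') - z (j t'))⁻¹) ^ (Function.update μ t (μ t + 1) t') := by
  rw [D_prod' (D a) (hLeib a)]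
  apply Finset.sum_congr rfl
  intro t _
  rw [D_invpow' (D a) (hLeib a) _ (hzne _ _ (hij t)),
    Pupd (fun t' => z (i t') - z (j t')) μ t (μ t + 1)]
  have hDd : (D a) (z (i t) - z (j t))
      = algebraMap F K ((if a = i t then (1:F) else 0) - (if a = j t then 1 else 0)) := by
    rw [map_sub, hDz, hDz, map_sub]
    congr 1 <;> split_ifs <;> simp
  rw [hDd]
  ring

end derivP

section mainmem
variable {F K : Type*} [Field F] [CharZero F] [Field K] [Algebra F K] {n : ℕ}

lemma main_mem (z : Fin n → K) (hzne : ∀ a b : Fin n, a ≠ b → z a - z b ≠ 0)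
    (D : Fin n → Module.End F K)
    (hLeib : ∀ (i : Fin n) (x y : K), D i (x * y) = x * D i y + D i x * y)
    (hDz : ∀ i j : Fin n, D i (z j) = if i = j then 1 else 0)
    (r : ℕ) (W : Submodule F K)
    (HF : ∀ E : Finset (Fin n × Fin n),
      (∀ e ∈ E, e.1 ≠ e.2) →
      (∀ a b : Fin n, (a, b) ∈ E → (b, a) ∉ E) →
      (SimpleGraph.fromRel fun a b : Fin n => (a, b) ∈ E).IsAcyclic →
      E.card ≤ r →
      (∏ e ∈ E, (z e.1 - z e.2)⁻¹) ∈ W)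
    (HD : ∀ i : Fin n, ∀ x ∈ W, D i x ∈ W)
    {s : ℕ} (i j : Fin s → Fin n) (hij : ∀ t, i t ≠ j t)
    (hdist : ∀ t t' : Fin s, t ≠ t' → ({i t, j t} : Finset (Fin n)) ≠ {i t', j t'}) :
    ∀ (m : Fin s → ℕ), (univ.filter fun t => m t ≠ 0).card ≤ r →
      (∏ t, ((z (i t) - z (j t))⁻¹) ^ m t) ∈ W := by
  classical
  set d : Fin s → K := fun t => z (i t) - z (j t) with hd_def
  have hd : ∀ t, d t ≠ 0 := fun t => hzne _ _ (hij t)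
  have hdistinj : ∀ t t' : Fin s, ({i t, j t} : Finset (Fin n)) = {i t', j t'} → t = t' := by
    intro t t' h
    by_contra hne
    exact hdist t t' hne h
  suffices key : ∀ (A : ℕ) (m : Fin s → ℕ), (univ.filter fun t => m t ≠ 0).card ≤ A →
      (univ.filter fun t => m t ≠ 0).card ≤ r →
      (∏ t, (d t)⁻¹ ^ m t) ∈ W by
    intro m hm
    exact key _ m le_rfl hm
  intro A
  induction A with
  | zero =>
    intro m hmA _
    have hflt : (univ.filter fun t => m t ≠ 0) = ∅ := Finset.card_eq_zero.mp (le_antisymm hmA (Nat.zero_le _))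
    have hm0 : ∀ t, m t = 0 := by
      intro t
      by_contra h
      have : t ∈ (univ.filter fun t => m t ≠ 0) := Finset.mem_filter.mpr ⟨mem_univ t, h⟩
      rw [hflt] at this
      exact absurd this (Finset.notMem_empty t)
    have h1 : (∏ t, (d t)⁻¹ ^ m t) = 1 := Finset.prod_eq_one fun t _ => by rw [hm0 t, pow_zero]
    rw [h1]
    have := HF ∅ (by simp) (by simp) ?_ (by simp)
    · simpa using this
    · intro v p hp
      cases p with
      | nil => exact hp.ne_nil rfl
      | cons h q =>
        rw [SimpleGraph.fromRel_adj] at h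
        simp at h
  | succ A ihA =>
    intro m hmA hmr
    set T := univ.filter fun t => m t ≠ 0 with hT
    by_cases hli : LinearIndependent F (fun t : ↥(univ.filter fun t => m t ≠ 0) => d ↑t)
    · -- independent case
      obtain ⟨w, av, helim⟩ := exists_elim (F := F) z i j hij
        (univ.filter fun t => m t ≠ 0).card (univ.filter fun t => m t ≠ 0) le_rfl hli
      set lam : (Fin s → ℕ) → ℕ := fun μ => ∑ t, (μ t - 1) * 2 ^ (w t) with hlam
      have lamupd : ∀ (μ : Fin s → ℕ) (t0 : Fin s) (k : ℕ),
          lam (Function.update μ t0 k) + (μ t0 - 1) * 2 ^ (w t0)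
            = lam μ + (k - 1) * 2 ^ (w t0) := by
        intro μ t0 k
        rw [hlam]
        simp only
        rw [← Finset.add_sum_erase univ _ (mem_univ t0),
          ← Finset.add_sum_erase univ (fun t => (μ t - 1) * 2 ^ w t) (mem_univ t0)]
        have herase : ∑ t ∈ univ.erase t0, (Function.update μ t0 k t - 1) * 2 ^ w t
            = ∑ t ∈ univ.erase t0, (μ t - 1) * 2 ^ w t :=
          Finset.sum_congr rfl fun t ht => by
            rw [Function.update_of_ne (Finset.mem_erase.mp ht).1]
        rw [herase, Function.update_self]
        ring
      have base : ∀ μ : Fin s → ℕ, (univ.filter fun t => μ t ≠ 0) = T → lam μ = 0 →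
          (∏ t, (d t)⁻¹ ^ μ t) ∈ W := by
        intro μ hsupp h0
        have hall := Finset.sum_eq_zero_iff.mp h0
        have hμle : ∀ t, μ t ≤ 1 := by
          intro t
          have := hall t (mem_univ t)
          have h2 : (0:ℕ) < 2 ^ w t := Nat.pow_pos (by norm_num)
          rcases Nat.mul_eq_zero.mp this with h | h
          · omega
          · omega
        set E := T.image (fun t => (i t, j t)) with hE
        have hinj : ∀ t ∈ T, ∀ t' ∈ T, (i t, j t) = (i t', j t') → t = t' := by
          intro t _ t' _ h
          rw [Prod.mk.injEq] at h
          exact hdistinj t t' (by rw [h.1, h.2])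
        have hprod : (∏ t, (d t)⁻¹ ^ μ t) = ∏ e ∈ E, (z e.1 - z e.2)⁻¹ := by
          rw [hE, Finset.prod_image hinj, ← hsupp,
            ← Finset.prod_filter_mul_prod_filter_not univ (fun t => μ t ≠ 0) (fun t => (d t)⁻¹ ^ μ t)]
          have h2 : ∏ t ∈ univ.filter (fun t => ¬ μ t ≠ 0), (d t)⁻¹ ^ μ t = 1 := by
            apply Finset.prod_eq_one
            intro t ht
            have := (Finset.mem_filter.mp ht).2
            push_neg at this
            rw [this, pow_zero]
          rw [h2, mul_one]
          apply Finset.prod_congr rfl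
          intro t ht
          have h1 : μ t = 1 := by
            have := (Finset.mem_filter.mp ht).2
            have := hμle t
            omega
          rw [h1, pow_one]
        rw [hprod]
        have hEmem : ∀ a b : Fin n, ((a,b) ∈ E ↔ ∃ t : ↥T, a = i ↑t ∧ b = j ↑t) := by
          intro a b
          rw [hE]
          simp only [Finset.mem_image]
          constructor
          · rintro ⟨t, ht, heq⟩
            rw [Prod.mk.injEq] at heq
            exact ⟨⟨t, ht⟩, heq.1.symm, heq.2.symm⟩
          · rintro ⟨⟨t, ht⟩, h1, h2⟩
            exact ⟨t, ht, by rw [← h1, ← h2]⟩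
        apply HF
        · rintro ⟨a, b⟩ he
          obtain ⟨t, _, heq⟩ := Finset.mem_image.mp he
          rw [Prod.mk.injEq] at heq
          rw [← heq.1, ← heq.2]
          exact hij t
        · intro a b hab hba
          obtain ⟨t, ht, heq⟩ := Finset.mem_image.mp hab
          obtain ⟨t', ht', heq'⟩ := Finset.mem_image.mp hba
          rw [Prod.mk.injEq] at heq heq'
          by_cases htt : t = t'
          · subst htt
            exact hij t (heq.1.trans (heq'.2.symm))
          · refine hdist t t' htt ?_
            rw [heq.1, heq.2, heq'.1, heq'.2]
            exact Finset.pair_comm _ _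
        · have hacy := acyclic_of_li (F := F) z (fun t : ↥T => i ↑t) (fun t : ↥T => j ↑t)
            (fun t => hij ↑t)
            (fun t t' h => Subtype.ext (hdistinj _ _ h)) hli
          have hgeq : (SimpleGraph.fromRel fun a b : Fin n => (a,b) ∈ E)
              = (SimpleGraph.fromRel fun a b : Fin n => ∃ t : ↥T, a = i ↑t ∧ b = j ↑t) := by
            ext a b
            rw [SimpleGraph.fromRel_adj, SimpleGraph.fromRel_adj]
            rw [hEmem a b, hEmem b a]
          rw [hgeq]
          exact hacy
        · exact le_trans Finset.card_image_le hmr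
      have inner : ∀ (L : ℕ) (μ : Fin s → ℕ), (univ.filter fun t => μ t ≠ 0) = T →
          lam μ ≤ L → (∏ t, (d t)⁻¹ ^ μ t) ∈ W := by
        intro L
        induction L with
        | zero =>
          intro μ hsupp h0
          exact base μ hsupp (le_antisymm h0 (Nat.zero_le _))
        | succ L ihL =>
          intro μ hsupp hL
          by_cases h0 : lam μ = 0
          · exact base μ hsupp h0
          obtain ⟨t0, ht0⟩ : ∃ t0, 2 ≤ μ t0 := by
            by_contra hcon
            push_neg at hcon
            apply h0
            rw [hlam]
            apply Finset.sum_eq_zero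
            intro t _
            have := hcon t
            have h1 : μ t - 1 = 0 := by omega
            rw [h1, zero_mul]
          have ht0T : t0 ∈ T := by
            rw [← hsupp]
            exact Finset.mem_filter.mpr ⟨mem_univ _, by omega⟩
          obtain ⟨hav0, hwmax⟩ := helim t0 ht0T
          set a := av t0 with ha_def
          set μ' := Function.update μ t0 (μ t0 - 1) with hμ'
          have hμ't0 : μ' t0 = μ t0 - 1 := by rw [hμ', Function.update_self]
          have hμ'ne : ∀ t, t ≠ t0 → μ' t = μ t := fun t ht => by
            rw [hμ', Function.update_of_ne ht]
          have hsupp' : (univ.filter fun t => μ' t ≠ 0) = T := by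
            rw [hμ', supp_update (by constructor <;> intro <;> omega), hsupp]
          have hDP := DP z hzne D hLeib hDz i j hij a μ'
          rw [← Finset.add_sum_erase univ _ (mem_univ t0)] at hDP
          have hupd0 : Function.update μ' t0 (μ' t0 + 1) = μ := by
            funext t
            by_cases ht : t = t0
            · subst ht; rw [Function.update_self, hμ't0]; omega
            · rw [Function.update_of_ne ht, hμ'ne t ht]
          rw [hupd0] at hDP
          set cF : F := -((μ t0 - 1 : ℕ) : F)
            * ((if a = i t0 then (1:F) else 0) - (if a = j t0 then 1 else 0)) with hcF
          have he0ne : ((if a = i t0 then (1:F) else 0) - (if a = j t0 then 1 else 0)) ≠ 0 := by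
            rcases hav0 with h | h
            · rw [if_pos h, if_neg (by rw [h]; exact hij t0), sub_zero]
              exact one_ne_zero
            · rw [if_neg (fun hh => hij t0 (hh.symm.trans h)), if_pos h, zero_sub]
              exact neg_ne_zero.mpr one_ne_zero
          have hcFne : cF ≠ 0 := by
            rw [hcF]
            apply mul_ne_zero _ he0ne
            rw [neg_ne_zero, Nat.cast_ne_zero]
            omega
          have hcoef : (-(μ' t0 : K) * algebraMap F K
              ((if a = i t0 then (1:F) else 0) - (if a = j t0 then 1 else 0)))
              = algebraMap F K cF := by
            rw [hcF, map_mul, map_neg, map_natCast, hμ't0]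
          rw [hcoef] at hDP
          have hamne : algebraMap F K cF ≠ 0 :=
            fun h => hcFne ((algebraMap F K).injective (by rw [h, map_zero]))
          have hsolve : (∏ t, (d t)⁻¹ ^ μ t) = cF⁻¹ • (D a (∏ t, (d t)⁻¹ ^ μ' t)
              - ∑ t ∈ univ.erase t0, (-(μ' t : K) * algebraMap F K
                  ((if a = i t then (1:F) else 0) - (if a = j t then 1 else 0)))
                * ∏ t', (d t')⁻¹ ^ (Function.update μ' t (μ' t + 1) t')) := by
            rw [hDP, add_sub_cancel_right, Algebra.smul_def, map_inv₀, ← mul_assoc,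
              inv_mul_cancel₀ hamne, one_mul]
          -- arithmetic facts about lam
          have hX1 : (1:ℕ) ≤ 2 ^ w t0 := Nat.one_le_two_pow
          have hlamμ' : lam μ' + 2 ^ w t0 = lam μ := by
            have h1 := lamupd μ t0 (μ t0 - 1)
            rw [← hμ'] at h1
            have h2 : (μ t0 - 1) * 2 ^ w t0 = (μ t0 - 1 - 1) * 2 ^ w t0 + 2 ^ w t0 := by
              have h3 : μ t0 - 1 = (μ t0 - 1 - 1) + 1 := by omega
              conv_lhs => rw [h3]
              ring
            rw [h2] at h1
            linarith
          rw [hsolve]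
          apply Submodule.smul_mem
          apply sub_mem
          · exact HD a _ (ihL μ' hsupp' (by linarith))
          · apply Submodule.sum_mem
            intro t ht
            have htne : t ≠ t0 := (Finset.mem_erase.mp ht).1
            by_cases hμ't : μ' t = 0
            · rw [hμ't]
              simpa using W.zero_mem
            by_cases heps : ((if a = i t then (1:F) else 0) - (if a = j t then 1 else 0)) = 0
            · rw [heps, map_zero, mul_zero, zero_mul]
              exact W.zero_mem
            have haedge : a = i t ∨ a = j t := by
              by_contra hcon
              push_neg at hcon
              apply heps
              rw [if_neg hcon.1, if_neg hcon.2, sub_zero]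
            have htT : t ∈ T := by
              rw [← hsupp]
              refine Finset.mem_filter.mpr ⟨mem_univ _, ?_⟩
              rw [← hμ'ne t htne]
              exact hμ't
            have hwlt : w t < w t0 := hwmax t htT htne haedge
            have hsupp'' : (univ.filter fun t' => Function.update μ' t (μ' t + 1) t' ≠ 0) = T := by
              rw [supp_update (by constructor <;> intro <;> omega), hsupp']
            have hlam'' : lam (Function.update μ' t (μ' t + 1)) ≤ L := by
              have h1 := lamupd μ' t (μ' t + 1)
              have h2 : (μ' t + 1 - 1) * 2 ^ w t = (μ' t - 1) * 2 ^ w t + 2 ^ w t := by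
                have h3 : μ' t + 1 - 1 = (μ' t - 1) + 1 := by omega
                conv_lhs => rw [h3]
                ring
              rw [h2] at h1
              have h4 : 2 ^ w t < 2 ^ w t0 := Nat.pow_lt_pow_right (by norm_num) hwlt
              linarith
            have hmem := ihL _ hsupp'' hlam''
            have hcoef2 : (-(μ' t : K) * algebraMap F K
                ((if a = i t then (1:F) else 0) - (if a = j t then 1 else 0)))
                = algebraMap F K (-((μ' t : ℕ) : F)
                    * ((if a = i t then (1:F) else 0) - (if a = j t then 1 else 0))) := by
              rw [map_mul, map_neg, map_natCast]
            rw [hcoef2, ← Algebra.smul_def]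
            exact Submodule.smul_mem _ _ hmem
      exact inner (lam m) m rfl le_rfl
    · -- dependent case
      obtain ⟨c, hcsum, tstar0, hcstar0⟩ := Fintype.not_linearIndependent_iff.mp hli
      obtain ⟨tstar, htsT⟩ := tstar0
      set cc : Fin s → F := fun t => if h : t ∈ T then c ⟨t, h⟩ else 0 with hcc
      have hccT : ∀ (t : Fin s) (h : t ∈ T), cc t = c ⟨t, h⟩ := fun t h => by
        rw [hcc]; simp only; rw [dif_pos h]
      have hccsum : ∑ t, cc t • d t = 0 := by
        have h1 : ∑ t ∈ T, cc t • d t = ∑ t, cc t • d t := by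
          apply Finset.sum_subset (Finset.subset_univ T)
          intro t _ htT
          rw [hcc]; simp only; rw [dif_neg htT, zero_smul]
        rw [← h1]
        have h2 : ∑ t ∈ T, cc t • d t = ∑ t : ↥T, cc ↑t • d ↑t :=
          (Finset.sum_coe_sort T (fun t => cc t • d t)).symm
        rw [h2]
        rw [← hcsum]
        apply Finset.sum_congr rfl
        intro t _
        rw [hccT ↑t t.2]
      have hccst : cc tstar ≠ 0 := by
        rw [hccT tstar htsT]
        exact hcstar0
      have hamne' : algebraMap F K (cc tstar) ≠ 0 :=
        fun h => hccst ((algebraMap F K).injective (by rw [h, map_zero]))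
      have hsplit : algebraMap F K (cc tstar) * d tstar
          = - ∑ t ∈ univ.erase tstar, algebraMap F K (cc t) * d t := by
        have h1 : ∑ t, algebraMap F K (cc t) * d t = 0 := by
          rw [← hccsum]
          exact Finset.sum_congr rfl fun t _ => (Algebra.smul_def _ _).symm
        rw [← Finset.add_sum_erase univ _ (mem_univ tstar)] at h1
        exact eq_neg_of_add_eq_zero_left h1
      set nu : (Fin s → ℕ) → ℕ :=
        fun μ => ∑ t ∈ univ.erase tstar, (if cc t ≠ 0 then μ t else 0) with hnu
      have hccmem : ∀ t, cc t ≠ 0 → t ∈ T := by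
        intro t h
        by_contra htT
        apply h
        rw [hcc]; simp only; rw [dif_neg htT]
      have hnext : ∃ t1, t1 ≠ tstar ∧ cc t1 ≠ 0 := by
        by_contra hcon
        push_neg at hcon
        have h1 : ∑ t, cc t • d t = cc tstar • d tstar := by
          rw [← Finset.add_sum_erase univ _ (mem_univ tstar),
            Finset.sum_eq_zero (fun t ht => by
              rw [hcon t (Finset.mem_erase.mp ht).1, zero_smul]), add_zero]
        rw [hccsum] at h1
        rcases smul_eq_zero.mp h1.symm with h | h
        · exact hccst h
        · exact hd tstar h
      have inner : ∀ (N : ℕ) (μ : Fin s → ℕ), (univ.filter fun t => μ t ≠ 0) = T →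
          nu μ ≤ N → (∏ t, (d t)⁻¹ ^ μ t) ∈ W := by
        intro N
        induction N with
        | zero =>
          intro μ hsupp hN
          exfalso
          obtain ⟨t1, ht1ne, ht1cc⟩ := hnext
          have ht1T : t1 ∈ T := hccmem t1 ht1cc
          have hμt1 : μ t1 ≠ 0 := by
            have : t1 ∈ univ.filter fun t => μ t ≠ 0 := by rw [hsupp]; exact ht1T
            exact (Finset.mem_filter.mp this).2
          have hle : (if cc t1 ≠ 0 then μ t1 else 0) ≤ nu μ := by
            rw [hnu]
            exact Finset.single_le_sum (f := fun t => if cc t ≠ 0 then μ t else 0)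
              (fun t _ => Nat.zero_le _)
              (Finset.mem_erase.mpr ⟨ht1ne, mem_univ t1⟩)
          rw [if_pos ht1cc] at hle
          omega
        | succ N ihN =>
          intro μ hsupp hN
          have hμts : μ tstar ≠ 0 := by
            have : tstar ∈ univ.filter fun t => μ t ≠ 0 := by rw [hsupp]; exact htsT
            exact (Finset.mem_filter.mp this).2
          set ub := Function.update μ tstar (μ tstar + 1) with hub
          have hubts : ub tstar = μ tstar + 1 := by rw [hub, Function.update_self]
          have hubne : ∀ t, t ≠ tstar → ub t = μ t := fun t ht => by
            rw [hub, Function.update_of_ne ht]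
          have hPμ : (∏ t, (d t)⁻¹ ^ μ t) = d tstar * ∏ t, (d t)⁻¹ ^ ub t := by
            have h1 := Pmul d ub tstar (hd tstar) (by rw [hubts]; omega)
            have h2 : Function.update ub tstar (ub tstar - 1) = μ := by
              funext t
              by_cases ht : t = tstar
              · subst ht; rw [Function.update_self, hubts]; omega
              · rw [Function.update_of_ne ht, hubne t ht]
            rw [h2] at h1
            exact h1.symm
          have hsupp_ub : (univ.filter fun t => ub t ≠ 0) = T := by
            rw [hub, supp_update (by constructor <;> intro <;> omega), hsupp]
          have hPμ2 : (∏ t, (d t)⁻¹ ^ μ t) = (cc tstar)⁻¹ •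
              (- ∑ t ∈ univ.erase tstar,
                algebraMap F K (cc t) * (d t * ∏ t', (d t')⁻¹ ^ ub t')) := by
            rw [hPμ]
            have h1 : d tstar * ∏ t, (d t)⁻¹ ^ ub t
                = (cc tstar)⁻¹ • (algebraMap F K (cc tstar)
                    * d tstar * ∏ t, (d t)⁻¹ ^ ub t) := by
              rw [Algebra.smul_def, map_inv₀, ← mul_assoc, ← mul_assoc,
                inv_mul_cancel₀ hamne', one_mul]
            rw [h1, hsplit]
            congr 1
            rw [neg_mul, Finset.sum_mul, neg_inj]
            apply Finset.sum_congr rfl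
            intro t _
            ring
          rw [hPμ2]
          apply Submodule.smul_mem
          apply Submodule.neg_mem
          apply Submodule.sum_mem
          intro t ht
          have htne := (Finset.mem_erase.mp ht).1
          by_cases hcct : cc t = 0
          · rw [hcct, map_zero, zero_mul]
            exact W.zero_mem
          have htT : t ∈ T := hccmem t hcct
          have hμt : μ t ≠ 0 := by
            have : t ∈ univ.filter fun t' => μ t' ≠ 0 := by rw [hsupp]; exact htT
            exact (Finset.mem_filter.mp this).2
          have hubt : ub t = μ t := hubne t htne
          have h1 := Pmul d ub t (hd t) (by rw [hubt]; omega)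
          rw [h1, ← Algebra.smul_def]
          apply Submodule.smul_mem
          set μ2 := Function.update ub t (ub t - 1) with hμ2
          have hμ2t : μ2 t = μ t - 1 := by rw [hμ2, Function.update_self, hubt]
          have hμ2ne : ∀ t', t' ≠ t → μ2 t' = ub t' := fun t' ht' => by
            rw [hμ2, Function.update_of_ne ht']
          by_cases hμt1 : μ t = 1
          · -- support shrinks, use outer induction
            have hsupp2 : (univ.filter fun t' => μ2 t' ≠ 0) = T.erase t := by
              ext t'
              simp only [Finset.mem_filter, Finset.mem_erase, mem_univ, true_and]
              by_cases ht' : t' = t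
              · subst ht'
                rw [hμ2t, hμt1]
                simp
              · rw [hμ2ne t' ht']
                constructor
                · intro hh
                  refine ⟨ht', ?_⟩
                  have : t' ∈ univ.filter fun t'' => ub t'' ≠ 0 :=
                    Finset.mem_filter.mpr ⟨mem_univ _, hh⟩
                  rw [hsupp_ub] at this
                  exact this
                · rintro ⟨-, hh⟩
                  have : t' ∈ univ.filter fun t'' => ub t'' ≠ 0 := by
                    rw [hsupp_ub]; exact hh
                  exact (Finset.mem_filter.mp this).2
            apply ihA μ2
            · rw [hsupp2]
              have h3 : (T.erase t).card = T.card - 1 := Finset.card_erase_of_mem htT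
              omega
            · rw [hsupp2]
              exact le_trans (Finset.card_le_card (Finset.erase_subset _ _)) hmr
          · -- same support, use inner induction
            have hsupp2 : (univ.filter fun t' => μ2 t' ≠ 0) = T := by
              rw [hμ2, supp_update (by rw [hubt]; constructor <;> intro <;> omega), hsupp_ub]
            have hnu2 : nu μ2 ≤ N := by
              have hsp : ∀ ν : Fin s → ℕ, nu ν = (if cc t ≠ 0 then ν t else 0)
                  + ∑ t' ∈ (univ.erase tstar).erase t, (if cc t' ≠ 0 then ν t' else 0) := by
                intro ν
                rw [hnu]
                exact (Finset.add_sum_erase _ _ ht).symm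
              have h2 := hsp μ2
              have h3 := hsp μ
              have h4 : ∑ t' ∈ (univ.erase tstar).erase t, (if cc t' ≠ 0 then μ2 t' else 0)
                  = ∑ t' ∈ (univ.erase tstar).erase t, (if cc t' ≠ 0 then μ t' else 0) := by
                apply Finset.sum_congr rfl
                intro t' ht'
                have h5 := (Finset.mem_erase.mp ht').1
                have h6 := (Finset.mem_erase.mp (Finset.mem_erase.mp ht').2).1
                rw [hμ2ne t' h5, hubne t' h6]
              rw [if_pos hcct, hμ2t] at h2
              rw [if_pos hcct] at h3
              rw [h4] at h2
              omega
            exact ihN μ2 hsupp2 hnu2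
      exact inner (nu m) m rfl le_rfl

end mainmem



/-- The pole filtration of the algebra of rational functions regular away from the
diagonals: `fil F K z r` is the `F`-linear span of all elements
`g · (z_{i_1} - z_{j_1})^{-m_1} ⋯ (z_{i_s} - z_{j_s})^{-m_s}` with `s ≤ r` divisors,
distinct underlying unordered pairs `{i_t, j_t}`, exponents `m_t ≥ 1`, and `g` a
polynomial in the differences `z_i - z_j`. -/
noncomputable def fil (F : Type*) {K : Type*} [Field F] [Field K] [Algebra F K]
    {n : ℕ} (z : Fin n → K) (r : ℕ) : Submodule F K :=
  Submodule.span F {x : K | ∃ s : ℕ, s ≤ r ∧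
    ∃ (i j : Fin s → Fin n) (m : Fin s → ℕ) (g : K),
      (∀ t, i t ≠ j t) ∧
      (∀ t t' : Fin s, t ≠ t' → ({i t, j t} : Finset (Fin n)) ≠ {i t', j t'}) ∧
      (∀ t, 1 ≤ m t) ∧
      g ∈ Algebra.adjoin F {y : K | ∃ a b : Fin n, y = z a - z b} ∧
      x = g * ∏ t, ((z (i t) - z (j t))⁻¹) ^ m t}

/-- **Lemma 6.3 of Bakalov–De Sole–Heluani–Kac**: let `F` be a field of characteristic
`0` and `K = F(z_1,…,z_n)` the rational function field in `n ≥ 1` variables (formalized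
as a field extension generated by an algebraically independent family `z`), with partial
derivatives `D i = ∂_{z_i}`. For every `r ≥ 0`, the filtration component `fil^r` equals
the smallest `F`-linear subspace of `K` containing `p_E = ∏_{(i,j) ∈ E} (z_i - z_j)⁻¹`
for every forest `E` of oriented edges with at most `r` edges, and stable under
multiplication by each difference `z_i - z_j` (`i < j`) and under each `∂_{z_i}`. -/
theorem fil_eq_span_forests
    (F K : Type*) [Field F] [CharZero F] [Field K] [Algebra F K]
    (n : ℕ) (hn : 1 ≤ n) (z : Fin n → K)
    (hz : AlgebraicIndependent F z)
    (hgen : IntermediateField.adjoin F (Set.range z) = ⊤)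
    (D : Fin n → Module.End F K)
    (hLeib : ∀ (i : Fin n) (x y : K), D i (x * y) = x * D i y + D i x * y)
    (hDz : ∀ i j : Fin n, D i (z j) = if i = j then 1 else 0)
    (r : ℕ) :
    fil F z r =
      sInf {W : Submodule F K |
        (∀ E : Finset (Fin n × Fin n),
          (∀ e ∈ E, e.1 ≠ e.2) →
          (∀ a b : Fin n, (a, b) ∈ E → (b, a) ∉ E) →
          (SimpleGraph.fromRel fun a b : Fin n => (a, b) ∈ E).IsAcyclic →
          E.card ≤ r →
          (∏ e ∈ E, (z e.1 - z e.2)⁻¹) ∈ W) ∧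
        (∀ a b : Fin n, a < b → ∀ x ∈ W, (z a - z b) * x ∈ W) ∧
        (∀ i : Fin n, ∀ x ∈ W, D i x ∈ W)} := by
  classical
  have hzinj : Function.Injective z := hz.injective
  have hzne : ∀ a b : Fin n, a ≠ b → z a - z b ≠ 0 :=
    fun a b h => sub_ne_zero_of_ne (fun hh => h (hzinj hh))
  apply le_antisymm
  · -- hard direction: fil ≤ every stable subspace
    apply le_sInf
    rintro W ⟨HF, Hmul, HD⟩
    rw [fil]
    apply Submodule.span_le.mpr
    rintro x ⟨s, hs, i, j, m, g, hij, hdist, hm, hg, rfl⟩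
    have hP : (∏ t, ((z (i t) - z (j t))⁻¹) ^ m t) ∈ W := by
      apply main_mem z hzne D hLeib hDz r W HF HD i j hij hdist m
      calc (univ.filter fun t => m t ≠ 0).card ≤ (univ : Finset (Fin s)).card :=
            Finset.card_filter_le _ _
        _ = s := by rw [Finset.card_univ, Fintype.card_fin]
        _ ≤ r := hs
    -- multiplication by elements of the adjoined algebra preserves W-membership
    have hmulW : ∀ y ∈ W, g * y ∈ W := by
      induction hg using Algebra.adjoin_induction with
      | mem u hu =>
        obtain ⟨a, b, rfl⟩ := hu
        intro y hy
        rcases lt_trichotomy a b with h | h | h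
        · exact Hmul a b h y hy
        · subst h; rw [sub_self, zero_mul]; exact W.zero_mem
        · have h1 := Hmul b a h y hy
          have heq : (z a - z b) * y = (-1 : F) • ((z b - z a) * y) := by
            rw [neg_one_smul]
            ring
          rw [heq]
          exact W.smul_mem _ h1
      | algebraMap c =>
        intro y hy
        rw [← Algebra.smul_def]
        exact W.smul_mem _ hy
      | add g1 g2 hg1 hg2 ih1 ih2 =>
        intro y hy
        rw [add_mul]
        exact W.add_mem (ih1 y hy) (ih2 y hy)
      | mul g1 g2 hg1 hg2 ih1 ih2 =>
        intro y hy
        rw [mul_assoc]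
        exact ih1 _ (ih2 y hy)
    exact hmulW _ hP
  · -- easy direction: fil itself is such a subspace
    apply sInf_le
    refine ⟨?_, ?_, ?_⟩
    · -- forests are in fil
      intro E hE1 hE2 _ hEcard
      apply Submodule.subset_span
      refine ⟨E.card, hEcard, ?_⟩
      set f : Fin E.card ≃ ↥E := (Fintype.equivFinOfCardEq (Fintype.card_coe E)).symm with hf
      refine ⟨fun t => ((f t : ↥E) : Fin n × Fin n).1, fun t => ((f t : ↥E) : Fin n × Fin n).2,
        fun _ => 1, 1, ?_, ?_, fun _ => le_rfl, one_mem _, ?_⟩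
      · intro t
        exact hE1 _ (f t).2
      · intro t t' htt' hpair
        have hij : ((f t : ↥E) : Fin n × Fin n).1 ≠ ((f t : ↥E) : Fin n × Fin n).2 :=
          hE1 _ (f t).2
        rw [finset_pair_eq hij] at hpair
        rcases hpair with ⟨h1, h2⟩ | ⟨h1, h2⟩
        · apply htt'
          have : (f t : ↥E) = (f t' : ↥E) := by
            apply Subtype.ext
            exact Prod.ext h1 h2
          exact f.injective this
        · -- (a,b) and (b,a) both in E
          exfalso
          have hmem1 : (((f t : ↥E) : Fin n × Fin n).1, ((f t : ↥E) : Fin n × Fin n).2) ∈ E := by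
            simpa using (f t).2
          have hmem2 : (((f t : ↥E) : Fin n × Fin n).2, ((f t : ↥E) : Fin n × Fin n).1) ∈ E := by
            have : (((f t' : ↥E) : Fin n × Fin n).1, ((f t' : ↥E) : Fin n × Fin n).2) ∈ E := by
              simpa using (f t').2
            have h1' : ((f t : ↥E) : Fin n × Fin n).1 = ((f t' : ↥E) : Fin n × Fin n).2 := h1
            have h2' : ((f t : ↥E) : Fin n × Fin n).2 = ((f t' : ↥E) : Fin n × Fin n).1 := h2
            rw [← h1', ← h2'] at this
            exact this
          exact hE2 _ _ hmem1 hmem2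
      · rw [one_mul]
        have h1 : ∀ t : Fin E.card,
            ((z (((f t : ↥E) : Fin n × Fin n).1) - z (((f t : ↥E) : Fin n × Fin n).2))⁻¹) ^ (1:ℕ)
            = (fun e : ↥E => (z ((e : Fin n × Fin n).1) - z ((e : Fin n × Fin n).2))⁻¹) (f t) := by
          intro t
          rw [pow_one]
        calc ∏ e ∈ E, (z e.1 - z e.2)⁻¹
            = ∏ e : ↥E, (z ((e : Fin n × Fin n).1) - z ((e : Fin n × Fin n).2))⁻¹ :=
              (Finset.prod_coe_sort E _).symm
          _ = ∏ t : Fin E.card, ((z (((f t : ↥E) : Fin n × Fin n).1)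
                - z (((f t : ↥E) : Fin n × Fin n).2))⁻¹) ^ (1:ℕ) := by
              rw [Finset.prod_congr rfl fun t _ => h1 t]
              exact (Equiv.prod_comp f _).symm
    · -- stability under multiplication by differences
      intro a b _ x hx
      rw [fil] at hx ⊢
      induction hx using Submodule.span_induction with
      | mem u hu =>
        obtain ⟨s, hs, i, j, m, g, hij, hdist, hm, hg, rfl⟩ := hu
        apply Submodule.subset_span
        refine ⟨s, hs, i, j, m, (z a - z b) * g, hij, hdist, hm, ?_, by ring⟩
        exact mul_mem (Algebra.subset_adjoin ⟨a, b, rfl⟩) hg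
      | zero => rw [mul_zero]; exact Submodule.zero_mem _
      | add u v hu hv ihu ihv => rw [mul_add]; exact Submodule.add_mem _ ihu ihv
      | smul c u hu ihu => rw [mul_smul_comm]; exact Submodule.smul_mem _ _ ihu
    · -- stability under the derivations
      intro a x hx
      rw [fil] at hx ⊢
      induction hx using Submodule.span_induction with
      | mem u hu =>
        obtain ⟨s, hs, i, j, m, g, hij, hdist, hm, hg, rfl⟩ := hu
        rw [hLeib]
        apply Submodule.add_mem
        · -- g * D a (prod)
          rw [DP z hzne D hLeib hDz i j hij a m, Finset.mul_sum]
          apply Submodule.sum_mem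
          intro t _
          apply Submodule.subset_span
          refine ⟨s, hs, i, j, Function.update m t (m t + 1),
            g * (-(m t : K) * algebraMap F K
              ((if a = i t then 1 else 0) - (if a = j t then 1 else 0))), hij, hdist, ?_, ?_, by ring⟩
          · intro t'
            by_cases ht' : t' = t
            · subst ht'; rw [Function.update_self]; omega
            · rw [Function.update_of_ne ht']; exact hm t'
          · apply mul_mem hg
            have hcast : (-(m t : K) * algebraMap F K
                ((if a = i t then 1 else 0) - (if a = j t then 1 else 0)))
                = algebraMap F K (-(m t : F)
                  * ((if a = i t then 1 else 0) - (if a = j t then 1 else 0))) := by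
              rw [map_mul, map_neg, map_natCast]
            rw [hcast]
            exact Subalgebra.algebraMap_mem _ _
        · -- D a g * prod
          apply Submodule.subset_span
          refine ⟨s, hs, i, j, m, D a g, hij, hdist, hm, ?_, rfl⟩
          -- the adjoined algebra is stable under D a
          clear hm hdist hij hs
          induction hg using Algebra.adjoin_induction with
          | mem u hu =>
            obtain ⟨a', b', rfl⟩ := hu
            rw [map_sub, hDz, hDz]
            have : (if a = a' then (1:K) else 0) - (if a = b' then 1 else 0)
                = algebraMap F K ((if a = a' then 1 else 0) - (if a = b' then 1 else 0)) := by
              rw [map_sub]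
              congr 1 <;> split_ifs <;> simp
            rw [this]
            exact Subalgebra.algebraMap_mem _ _
          | algebraMap c =>
            rw [D_algebraMap' (D a) (hLeib a)]
            exact Subalgebra.zero_mem _
          | add g1 g2 hg1 hg2 ih1 ih2 =>
            rw [map_add]
            exact Subalgebra.add_mem _ ih1 ih2
          | mul g1 g2 hg1 hg2 ih1 ih2 =>
            rw [hLeib]
            exact Subalgebra.add_mem _ (mul_mem hg1 ih2) (mul_mem ih1 hg2)
      | zero => rw [map_zero]; exact Submodule.zero_mem _
      | add u v hu hv ihu ihv => rw [map_add]; exact Submodule.add_mem _ ihu ihv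
      | smul c u hu ihu => rw [map_smul]; exact Submodule.smul_mem _ _ ihu
end

section
/- Cycle relation for the pole filtration: let F be a field of characteristic 0 and n ≥ 1. For every s ≥ 2 and every cyclic sequence i_1, i_2, …, i_s, i_{s+1} = i_1 of elements of {1,…,n} with i_t ≠ i_{t+1} for all t, the rational function ∏_{t=1}^{s} (z_{i_t} − z_{i_{t+1}})^{−1} lies in fil^{s−1}. Consequently, if a finite multiset E of oriented edges on {1,…,n} has r elements and contains an oriented cycle, then ∏_{(i,j) ∈ E} (z_i − z_j)^{−1} ∈ fil^{r−1}. -/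
section aux
variable {F K : Type*} [Field F] [Field K] [Algebra F K] {n : ℕ} {z : Fin n → K}

lemma mul_inv_mem_fil {r : ℕ} {x : K} (hx : x ∈ fil F z r) {a b : Fin n} (hab : a ≠ b) :
    x * (z a - z b)⁻¹ ∈ fil F z (r + 1) := by
  induction hx using Submodule.span_induction with
  | zero => simpa using zero_mem _
  | add u v _ _ hu' hv' => rw [add_mul]; exact add_mem hu' hv'
  | smul c u _ hu' => rw [smul_mul_assoc]; exact Submodule.smul_mem _ _ hu'
  | mem x hxm =>
    obtain ⟨s, hs, i, j, m, g, hij, hdist, hm, hg, rfl⟩ := hxm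
    by_cases hex : ∃ t0 : Fin s, ({i t0, j t0} : Finset (Fin n)) = {a, b}
    · obtain ⟨t0, ht0⟩ := hex
      have key : ∀ g' : K, g' ∈ Algebra.adjoin F {y : K | ∃ a b : Fin n, y = z a - z b} →
          g' * (∏ t, ((z (i t) - z (j t))⁻¹) ^ m t) * (z (i t0) - z (j t0))⁻¹
            ∈ fil F z (r + 1) := by
        intro g' hg'
        apply Submodule.subset_span
        refine ⟨s, hs.trans (Nat.le_succ r), i, j,
          fun t => m t + if t = t0 then 1 else 0, g', hij, hdist,
          fun t => le_add_right (hm t), hg', ?_⟩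
        have hprod : (∏ t, ((z (i t) - z (j t))⁻¹) ^ (m t + if t = t0 then 1 else 0))
            = (∏ t, ((z (i t) - z (j t))⁻¹) ^ m t) * (z (i t0) - z (j t0))⁻¹ := by
          simp only [pow_add]
          rw [Finset.prod_mul_distrib]
          congr 1
          rw [show (∏ t, ((z (i t) - z (j t))⁻¹) ^ (if t = t0 then 1 else 0))
              = ∏ t, (if t = t0 then (z (i t) - z (j t))⁻¹ else 1) from
            Finset.prod_congr rfl (fun t _ => by split_ifs <;> simp)]
          rw [Finset.prod_ite_eq']
          simp
        rw [hprod]; ring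
      have h1 : i t0 ∈ ({a, b} : Finset (Fin n)) := ht0 ▸ Finset.mem_insert_self _ _
      have h2 : j t0 ∈ ({a, b} : Finset (Fin n)) :=
        ht0 ▸ Finset.mem_insert_of_mem (Finset.mem_singleton_self _)
      simp only [Finset.mem_insert, Finset.mem_singleton] at h1 h2
      rcases h1 with h1 | h1 <;> rcases h2 with h2 | h2
      · exact absurd (h1.trans h2.symm) (hij t0)
      · -- i t0 = a, j t0 = b
        rw [show (z a - z b)⁻¹ = (z (i t0) - z (j t0))⁻¹ by rw [h1, h2]]
        exact key g hg
      · -- i t0 = b, j t0 = a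
        rw [show (z a - z b)⁻¹ = -(z (i t0) - z (j t0))⁻¹ by
          rw [h1, h2, show z a - z b = -(z b - z a) by ring, inv_neg]]
        rw [show g * (∏ t, ((z (i t) - z (j t))⁻¹) ^ m t) * -(z (i t0) - z (j t0))⁻¹
            = (-g) * (∏ t, ((z (i t) - z (j t))⁻¹) ^ m t) * (z (i t0) - z (j t0))⁻¹ by ring]
        exact key (-g) (neg_mem hg)
      · exact absurd (h1.trans h2.symm) (hij t0)
    · push_neg at hex
      apply Submodule.subset_span
      refine ⟨s + 1, Nat.succ_le_succ hs, Fin.snoc i a, Fin.snoc j b, Fin.snoc m 1, g,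
        ?_, ?_, ?_, hg, ?_⟩
      · intro t
        rcases Fin.eq_castSucc_or_eq_last t with ⟨u, rfl⟩ | rfl <;>
          simp only [Fin.snoc_castSucc, Fin.snoc_last]
        · exact hij u
        · exact hab
      · intro t t' htt'
        rcases Fin.eq_castSucc_or_eq_last t with ⟨u, rfl⟩ | rfl <;>
          rcases Fin.eq_castSucc_or_eq_last t' with ⟨u', rfl⟩ | rfl <;>
            simp only [Fin.snoc_castSucc, Fin.snoc_last]
        · exact hdist u u' (fun h => htt' (by rw [h]))
        · exact hex u
        · exact fun h => hex u' h.symm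
        · exact absurd rfl htt'
      · intro t
        rcases Fin.eq_castSucc_or_eq_last t with ⟨u, rfl⟩ | rfl <;>
          simp only [Fin.snoc_castSucc, Fin.snoc_last]
        · exact hm u
        · exact le_refl 1
      · rw [Fin.prod_univ_castSucc]
        simp only [Fin.snoc_castSucc, Fin.snoc_last, pow_one]
        ring

lemma prod_edges_mem {r : ℕ} {x : K} (hx : x ∈ fil F z r) :
    ∀ (D : Multiset (Fin n × Fin n)), (∀ e ∈ D, e.1 ≠ e.2) →
    x * (D.map fun e => (z e.1 - z e.2)⁻¹).prod ∈ fil F z (r + Multiset.card D) := by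
  intro D
  induction D using Multiset.induction with
  | empty => intro _; simpa using hx
  | cons e D ihD =>
    intro hD
    have h1 := ihD (fun e' he' => hD e' (Multiset.mem_cons_of_mem he'))
    have h2 := mul_inv_mem_fil h1 (hD e (Multiset.mem_cons_self e D))
    rw [Multiset.map_cons, Multiset.prod_cons]
    simp only [Multiset.card_cons]
    rw [show x * ((z e.1 - z e.2)⁻¹ * (Multiset.map (fun e => (z e.1 - z e.2)⁻¹) D).prod)
        = x * (Multiset.map (fun e => (z e.1 - z e.2)⁻¹) D).prod * (z e.1 - z e.2)⁻¹ by ring]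
    exact h2

end aux

/-- **Cycle relation for the pole filtration** (from the proof of Lemma 7.4 of
Bakalov–De Sole–Heluani–Kac): let `F` be a field of characteristic `0` and
`K = F(z_1,…,z_n)` the rational function field in `n ≥ 1` variables (formalized as a
field extension generated by an algebraically independent family `z`). First, for every
`s ≥ 2` and every cyclic sequence `c 0, c 1, …, c (s-1), c s = c 0` of indices with
consecutive entries distinct, the function `∏_{t=0}^{s-1} (z_{c t} - z_{c (t+1)})⁻¹`
lies in `fil^{s-1}`. Consequently, if a finite multiset `E` of oriented edges (ordered
pairs of distinct indices) has `r` elements and contains an oriented cycle, then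
`∏_{(i,j) ∈ E} (z_i - z_j)⁻¹ ∈ fil^{r-1}`. -/
theorem cycle_relation_fil
    (F K : Type*) [Field F] [CharZero F] [Field K] [Algebra F K]
    (n : ℕ) (hn : 1 ≤ n) (z : Fin n → K)
    (hz : AlgebraicIndependent F z)
    (hgen : IntermediateField.adjoin F (Set.range z) = ⊤) :
    (∀ s : ℕ, 2 ≤ s → ∀ c : ℕ → Fin n, c s = c 0 → (∀ t < s, c t ≠ c (t + 1)) →
      (∏ t ∈ Finset.range s, (z (c t) - z (c (t + 1)))⁻¹) ∈ fil F z (s - 1)) ∧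
    (∀ E : Multiset (Fin n × Fin n), (∀ e ∈ E, e.1 ≠ e.2) →
      (∃ s : ℕ, 2 ≤ s ∧ ∃ c : ℕ → Fin n, c s = c 0 ∧ (∀ t < s, c t ≠ c (t + 1)) ∧
        ((Finset.range s).val.map fun t => (c t, c (t + 1))) ≤ E) →
      (E.map fun e => (z e.1 - z e.2)⁻¹).prod ∈ fil F z (Multiset.card E - 1)) := by
  classical
  have zinj : Function.Injective z := hz.injective
  have part1 : ∀ s : ℕ, 2 ≤ s → ∀ c : ℕ → Fin n, c s = c 0 → (∀ t < s, c t ≠ c (t + 1)) →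
      (∏ t ∈ Finset.range s, (z (c t) - z (c (t + 1)))⁻¹) ∈ fil F z (s - 1) := by
    intro s
    induction s using Nat.strong_induction_on with
    | _ s ih =>
      intro hs c hc hne
      obtain ⟨m, rfl⟩ : ∃ m, s = m + 2 := ⟨s - 2, by omega⟩
      rcases Nat.eq_zero_or_pos m with rfl | hm
      · -- base case s = 2
        apply Submodule.subset_span
        refine ⟨1, le_refl 1, fun _ => c 0, fun _ => c 1, fun _ => 2, -1,
          fun _ => hne 0 (by omega), fun t t' h => absurd (Subsingleton.elim t t') h,
          fun _ => one_le_two, neg_mem (one_mem _), ?_⟩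
        rw [Finset.prod_range_succ, Finset.prod_range_one]
        rw [show c (1 + 1) = c 0 from hc]
        rw [show z (c 1) - z (c 0) = -(z (c 0) - z (c 1)) by ring, inv_neg]
        simp only [Fin.prod_univ_one]
        ring
      · by_cases h02 : c 0 = c 2
        · -- case A : repeated vertex, shrink by two
          have hm2 : 2 ≤ m := by
            rcases Nat.lt_or_ge m 2 with h | h
            · exfalso
              have hm1 : m = 1 := by omega
              subst hm1
              exact hne 2 (by omega) (h02.symm.trans hc.symm)
            · exact h
          have hcyc := ih m (by omega) (by omega) (fun t => c (t + 2))
            (hc.trans h02) (fun t ht => hne (t + 2) (by omega))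
          have h1 := mul_inv_mem_fil hcyc (hne 1 (by omega))
          have h2 := mul_inv_mem_fil h1 (hne 0 (by omega))
          rw [show m - 1 + 1 + 1 = m + 2 - 1 from by omega] at h2
          rw [show m + 2 = m + 1 + 1 from rfl, Finset.prod_range_succ' _ (m + 1),
            Finset.prod_range_succ']
          rw [show (∏ t ∈ Finset.range m, (z (c (t + 1 + 1)) - z (c (t + 1 + 1 + 1)))⁻¹)
              * (z (c (0 + 1)) - z (c (0 + 1 + 1)))⁻¹ * (z (c 0) - z (c (0 + 1)))⁻¹
            = (∏ t ∈ Finset.range m, (z (c (t + 2)) - z (c (t + 2 + 1)))⁻¹)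
              * (z (c 1) - z (c 2))⁻¹ * (z (c 0) - z (c 1))⁻¹ from rfl]
          exact h2
        · -- case B : merge the first two edges
          have hc'0 : (fun t => if t = 0 then c 0 else c (t + 1)) (m + 1)
              = (fun t => if t = 0 then c 0 else c (t + 1)) 0 := by
            simp only [Nat.succ_ne_zero, if_neg, if_pos rfl, reduceIte]
            exact hc
          have hne' : ∀ t < m + 1, (fun t => if t = 0 then c 0 else c (t + 1)) t
              ≠ (fun t => if t = 0 then c 0 else c (t + 1)) (t + 1) := by
            intro t ht
            rcases Nat.eq_zero_or_pos t with rfl | htpos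
            · simpa using h02
            · have ht0 : t ≠ 0 := by omega
              simp only [if_neg ht0, Nat.succ_ne_zero, reduceIte]
              exact hne (t + 1) (by omega)
          have hQ := ih (m + 1) (by omega) (by omega) _ hc'0 hne'
          have hQ' : (∏ t ∈ Finset.range (m + 1),
                (z (if t = 0 then c 0 else c (t + 1))
                  - z (if t + 1 = 0 then c 0 else c (t + 2)))⁻¹) ∈ fil F z m := hQ
          have hQeq : (∏ t ∈ Finset.range (m + 1),
                (z (if t = 0 then c 0 else c (t + 1))
                  - z (if t + 1 = 0 then c 0 else c (t + 2)))⁻¹)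
              = (∏ t ∈ Finset.range m, (z (c (t + 2)) - z (c (t + 3)))⁻¹)
                  * (z (c 0) - z (c 2))⁻¹ := by
            rw [Finset.prod_range_succ']
            have h1 : ∀ t ∈ Finset.range m,
                (z (if t + 1 = 0 then c 0 else c (t + 1 + 1))
                  - z (if t + 1 + 1 = 0 then c 0 else c (t + 1 + 2)))⁻¹
                = (z (c (t + 2)) - z (c (t + 3)))⁻¹ := by
              intro t _
              rw [if_neg (Nat.succ_ne_zero t), if_neg (Nat.succ_ne_zero (t + 1))]
            rw [Finset.prod_congr rfl h1]
            rw [if_pos rfl, if_neg (Nat.succ_ne_zero 0)]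
          rw [hQeq] at hQ'
          have hQ := hQ'
          have h01 := mul_inv_mem_fil hQ (hne 0 (by omega))
          have h12 := mul_inv_mem_fil hQ (hne 1 (by omega))
          have hd0 : z (c 0) - z (c 1) ≠ 0 :=
            sub_ne_zero.mpr (fun h => hne 0 (by omega) (zinj h))
          have hd1 : z (c 1) - z (c 2) ≠ 0 :=
            sub_ne_zero.mpr (fun h => hne 1 (by omega) (zinj h))
          have hw : z (c 0) - z (c 2) ≠ 0 := sub_ne_zero.mpr (fun h => h02 (zinj h))
          have base : (z (c 0) - z (c 1))⁻¹ * (z (c 1) - z (c 2))⁻¹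
              = (z (c 0) - z (c 2))⁻¹ * (z (c 0) - z (c 1))⁻¹
                + (z (c 0) - z (c 2))⁻¹ * (z (c 1) - z (c 2))⁻¹ := by
            have hsum : z (c 0) - z (c 2) = (z (c 0) - z (c 1)) + (z (c 1) - z (c 2)) := by
              ring
            rw [hsum] at hw ⊢
            field_simp
            ring
          have key : (∏ t ∈ Finset.range (m + 2), (z (c t) - z (c (t + 1)))⁻¹)
              = (∏ t ∈ Finset.range m, (z (c (t + 2)) - z (c (t + 3)))⁻¹)
                  * (z (c 0) - z (c 2))⁻¹ * (z (c 0) - z (c 1))⁻¹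
                + (∏ t ∈ Finset.range m, (z (c (t + 2)) - z (c (t + 3)))⁻¹)
                  * (z (c 0) - z (c 2))⁻¹ * (z (c 1) - z (c 2))⁻¹ := by
            rw [show m + 2 = m + 1 + 1 from rfl, Finset.prod_range_succ' _ (m + 1),
              Finset.prod_range_succ']
            rw [show (∏ t ∈ Finset.range m, (z (c (t + 1 + 1)) - z (c (t + 1 + 1 + 1)))⁻¹)
              = ∏ t ∈ Finset.range m, (z (c (t + 2)) - z (c (t + 3)))⁻¹ from rfl]
            rw [show c (0 + 1) = c 1 from rfl, show c (0 + 1 + 1) = c 2 from rfl]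
            linear_combination (∏ t ∈ Finset.range m, (z (c (t + 2)) - z (c (t + 3)))⁻¹) * base
          rw [key]
          exact add_mem h01 h12
  refine ⟨part1, ?_⟩
  rintro E hE ⟨s, hs, c, hc, hne, hle⟩
  set C : Multiset (Fin n × Fin n) := (Finset.range s).val.map (fun t => (c t, c (t + 1)))
    with hC
  have hEeq : E = (E - C) + C := (tsub_add_cancel_of_le hle).symm
  have hprod : (E.map fun e => (z e.1 - z e.2)⁻¹).prod
      = (∏ t ∈ Finset.range s, (z (c t) - z (c (t + 1)))⁻¹)
        * ((E - C).map fun e => (z e.1 - z e.2)⁻¹).prod := by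
    conv_lhs => rw [hEeq]
    rw [Multiset.map_add, Multiset.prod_add, mul_comm]
    congr 1
    rw [hC, Multiset.map_map]
    rfl
  have hD : ∀ e ∈ E - C, e.1 ≠ e.2 := fun e he => hE e (Multiset.mem_of_le tsub_le_self he)
  have hx := part1 s hs c hc hne
  have hfin := prod_edges_mem hx (E - C) hD
  have hcardC : Multiset.card C = s := by
    rw [hC, Multiset.card_map]; exact Finset.card_range s
  have hsle : s ≤ Multiset.card E := by
    have := Multiset.card_le_card hle
    rwa [hcardC] at this
  rw [show s - 1 + Multiset.card (E - C) = Multiset.card E - 1 from by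
    rw [Multiset.card_sub hle, hcardC]; omega] at hfin
  rw [hprod]
  exact hfin
end

section
/- Coassociativity of the cocomposition of graphs: let n ≥ 1, let m_1,…,m_n ≥ 1 with M_i = m_1+⋯+m_i, let ℓ_1,…,ℓ_{M_n} ≥ 1 with L_j = ℓ_1+⋯+ℓ_j, and set K_i = ℓ_{M_{i−1}+1}+⋯+ℓ_{M_i} for i = 1,…,n. Then for every L_{M_n}-graph Γ: (i) Δ_0^{m_1…m_n}(Δ_0^{ℓ_1…ℓ_{M_n}}(Γ)) = Δ_0^{K_1…K_n}(Γ) as n-graphs; (ii) for every 1 ≤ i ≤ n, Δ_i^{m_1…m_n}(Δ_0^{ℓ_1…ℓ_{M_n}}(Γ)) = Δ_0^{ℓ_{M_{i−1}+1}…ℓ_{M_i}}(Δ_i^{K_1…K_n}(Γ)) as m_i-graphs; (iii) for every 1 ≤ i ≤ n and 1 ≤ j ≤ m_i, Δ_{M_{i−1}+j}^{ℓ_1…ℓ_{M_n}}(Γ) = Δ_j^{ℓ_{M_{i−1}+1}…ℓ_{M_i}}(Δ_i^{K_1…K_n}(Γ)) as ℓ_{M_{i−1}+j}-graphs. -/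
open Equiv

/-- The `0`-th cocomposition `Δ_0^{m_1…m_n}(Γ)` of an `M`-graph `Γ` (a multiset of
oriented edges on `Fin M`, `M = ∑ m i`): the `n`-graph obtained by collapsing each of the
blocks of sizes `m_1,…,m_n` to a single vertex, keeping (with multiplicity) the edges
joining two different blocks. -/
def graphDelta0 {n : ℕ} (m : Fin n → ℕ)
    (Γ : Multiset (Fin (∑ i, m i) × Fin (∑ i, m i))) : Multiset (Fin n × Fin n) :=
  Γ.filterMap fun e =>
    if ((finSigmaEquiv n m).symm e.1).1 = ((finSigmaEquiv n m).symm e.2).1 then none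
    else some (((finSigmaEquiv n m).symm e.1).1, ((finSigmaEquiv n m).symm e.2).1)

/-- The `i`-th cocomposition `Δ_i^{m_1…m_n}(Γ)` of an `M`-graph `Γ`: the `m_i`-graph of
edges of `Γ` lying inside the `i`-th block, relabelled by the positions within the
block. -/
def graphDeltaI {n : ℕ} (m : Fin n → ℕ) (i : Fin n)
    (Γ : Multiset (Fin (∑ i, m i) × Fin (∑ i, m i))) : Multiset (Fin (m i) × Fin (m i)) :=
  Γ.filterMap fun e =>
    if h : ((finSigmaEquiv n m).symm e.1).1 = i ∧ ((finSigmaEquiv n m).symm e.2).1 = i then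
      some (Fin.cast (congrArg m h.1) ((finSigmaEquiv n m).symm e.1).2,
        Fin.cast (congrArg m h.2) ((finSigmaEquiv n m).symm e.2).2)
    else none

lemma sum_blocks {n : ℕ} (m : Fin n → ℕ) (ℓ : Fin (∑ i, m i) → ℕ) :
    (∑ j, ℓ j) = ∑ i, ∑ j : Fin (m i), ℓ (finSigmaEquiv n m ⟨i, j⟩) := by
  rw [← Equiv.sum_comp (finSigmaEquiv n m) ℓ, ← Finset.univ_sigma_univ, Finset.sum_sigma]


lemma fse_val : ∀ (n : ℕ) (m : Fin n → ℕ) (p : Σ i, Fin (m i)),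
    (finSigmaEquiv n m p : ℕ) = (∑ i', if i' < p.1 then m i' else 0) + p.2
  | 0, m, p => p.1.elim0
  | n + 1, m, ⟨i, j⟩ => by
    induction i using Fin.cases with
    | zero =>
      simp [finSigmaEquiv, sigmaFinSucc]
    | succ i =>
      have := fse_val n (fun k => m k.succ) ⟨i, j⟩
      simp only [finSigmaEquiv, sigmaFinSucc, Equiv.trans_apply, Equiv.coe_fn_mk,
        Fin.cases_succ, Equiv.sumCongr_apply, Sum.map_inr, finSumFinEquiv_apply_right,
        finCongr_apply, Fin.coe_cast, Fin.coe_natAdd] at *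
      rw [this, Fin.sum_univ_succ (fun i' => if i' < i.succ then m i' else 0)]
      simp [Fin.succ_lt_succ_iff, ← add_assoc]

lemma fse_S_mono {n : ℕ} (m : Fin n → ℕ) {i' i : Fin n} (h : i' < i) :
    (∑ k, if k < i' then m k else 0) + m i' ≤ ∑ k, if k < i then m k else 0 := by
  have : m i' = ∑ k, if k = i' then m k else 0 := by simp
  rw [this, ← Finset.sum_add_distrib]
  apply Finset.sum_le_sum
  intro k _
  rcases lt_trichotomy k i' with hk | hk | hk
  · simp only [if_pos hk, if_neg hk.ne, add_zero, if_pos (hk.trans h), le_refl]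
  · simp [hk, h]
  · simp only [if_neg (not_lt.mpr hk.le), if_neg hk.ne', zero_add]
    split <;> simp

lemma fse_lt_iff {n : ℕ} (m : Fin n → ℕ) (p q : Σ i, Fin (m i)) :
    finSigmaEquiv n m p < finSigmaEquiv n m q ↔
      p.1 < q.1 ∨ ∃ _ : p.1 = q.1, (p.2 : ℕ) < q.2 := by
  obtain ⟨i', j'⟩ := p; obtain ⟨i, j⟩ := q
  rw [Fin.lt_def, fse_val, fse_val]
  dsimp only
  constructor
  · intro hlt
    rcases lt_trichotomy i' i with hi | hi | hi
    · exact Or.inl hi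
    · subst hi
      exact Or.inr ⟨rfl, by omega⟩
    · exfalso
      have := fse_S_mono m hi
      have hj : (j : ℕ) < m i := j.2
      omega
  · rintro (hi | ⟨rfl, hj⟩)
    · have := fse_S_mono m hi
      have hj' : (j' : ℕ) < m i' := j'.2
      omega
    · omega

lemma fse_assoc {n : ℕ} (m : Fin n → ℕ) (ℓ : Fin (∑ i, m i) → ℕ)
    (i : Fin n) (j : Fin (m i)) (k : Fin (ℓ (finSigmaEquiv n m ⟨i, j⟩))) :
    ((finSigmaEquiv _ ℓ ⟨finSigmaEquiv n m ⟨i, j⟩, k⟩ : Fin (∑ j, ℓ j)) : ℕ) =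
      ((finSigmaEquiv n (fun i => ∑ j : Fin (m i), ℓ (finSigmaEquiv n m ⟨i, j⟩))
        ⟨i, finSigmaEquiv (m i) (fun j' => ℓ (finSigmaEquiv n m ⟨i, j'⟩)) ⟨j, k⟩⟩ : Fin _) : ℕ) := by
  rw [fse_val, fse_val, fse_val]
  dsimp only
  rw [← add_assoc]
  congr 1
  rw [← Equiv.sum_comp (finSigmaEquiv n m)
      (fun a => if a < finSigmaEquiv n m ⟨i, j⟩ then ℓ a else 0),
    ← Finset.univ_sigma_univ, Finset.sum_sigma]
  have key : ∀ i'' : Fin n, (∑ j'' : Fin (m i''),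
      if finSigmaEquiv n m ⟨i'', j''⟩ < finSigmaEquiv n m ⟨i, j⟩
      then ℓ (finSigmaEquiv n m ⟨i'', j''⟩) else 0) =
      (if i'' < i then ∑ j'' : Fin (m i''), ℓ (finSigmaEquiv n m ⟨i'', j''⟩) else 0)
      + (if i'' = i then ∑ j'' : Fin (m i), if (j'' : ℕ) < (j : ℕ)
          then ℓ (finSigmaEquiv n m ⟨i, j''⟩) else 0
        else 0) := by
    intro i''
    rcases lt_trichotomy i'' i with hi | hi | hi
    · rw [if_pos hi, if_neg hi.ne, add_zero]
      simp only [fse_lt_iff, hi, true_or, if_true]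
    · subst hi
      rw [if_neg (lt_irrefl _), if_pos rfl, zero_add]
      simp only [fse_lt_iff, lt_irrefl, false_or, exists_const]
    · rw [if_neg (not_lt.mpr hi.le), if_neg hi.ne', add_zero]
      have : ∀ j'' : Fin (m i''),
          ¬(finSigmaEquiv n m ⟨i'', j''⟩ < finSigmaEquiv n m ⟨i, j⟩) := by
        intro j''
        rw [fse_lt_iff]
        rintro (h | ⟨h, -⟩)
        exacts [absurd h (not_lt.mpr hi.le), absurd h.symm hi.ne]
      simp only [if_neg (this _), Finset.sum_const_zero]
  rw [Finset.sum_congr rfl (fun i'' _ => key i''), Finset.sum_add_distrib]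
  congr 1
  rw [Finset.sum_ite_eq' Finset.univ i, if_pos (Finset.mem_univ i)]
  simp only [Fin.lt_def]

lemma fse_assoc' {n : ℕ} (m : Fin n → ℕ) (ℓ : Fin (∑ i, m i) → ℕ)
    (i : Fin n) (j : Fin (m i)) (k : Fin (ℓ (finSigmaEquiv n m ⟨i, j⟩))) :
    Fin.cast (sum_blocks m ℓ) (finSigmaEquiv _ ℓ ⟨finSigmaEquiv n m ⟨i, j⟩, k⟩) =
      finSigmaEquiv n (fun i => ∑ j : Fin (m i), ℓ (finSigmaEquiv n m ⟨i, j⟩))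
        ⟨i, finSigmaEquiv (m i) (fun j' => ℓ (finSigmaEquiv n m ⟨i, j'⟩)) ⟨j, k⟩⟩ :=
  Fin.ext (fse_assoc m ℓ i j k)

lemma delta0_fun_eval {n : ℕ} (m : Fin n → ℕ) (x y : Σ i, Fin (m i)) :
    (if ((finSigmaEquiv n m).symm (finSigmaEquiv n m x)).1 =
        ((finSigmaEquiv n m).symm (finSigmaEquiv n m y)).1 then none
    else some (((finSigmaEquiv n m).symm (finSigmaEquiv n m x)).1,
      ((finSigmaEquiv n m).symm (finSigmaEquiv n m y)).1)) =
    if x.1 = y.1 then none else some (x.1, y.1) := by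
  rw [Equiv.symm_apply_apply, Equiv.symm_apply_apply]

lemma deltaI_fun_eval {n : ℕ} (m : Fin n → ℕ) (i : Fin n) (x y : Σ i, Fin (m i)) :
    (if h : ((finSigmaEquiv n m).symm (finSigmaEquiv n m x)).1 = i ∧
        ((finSigmaEquiv n m).symm (finSigmaEquiv n m y)).1 = i then
      some (Fin.cast (congrArg m h.1) ((finSigmaEquiv n m).symm (finSigmaEquiv n m x)).2,
        Fin.cast (congrArg m h.2) ((finSigmaEquiv n m).symm (finSigmaEquiv n m y)).2)
    else none) =
    if h : x.1 = i ∧ y.1 = i then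
      some (Fin.cast (congrArg m h.1) x.2, Fin.cast (congrArg m h.2) y.2)
    else none := by
  rw [Equiv.symm_apply_apply, Equiv.symm_apply_apply]

lemma deltaI_fun_eval' {n : ℕ} (m : Fin n → ℕ) (i : Fin n) {x y : Σ i, Fin (m i)}
    {a b : Fin (∑ i, m i)} (ha : a = finSigmaEquiv n m x) (hb : b = finSigmaEquiv n m y) :
    (if h : ((finSigmaEquiv n m).symm a).1 = i ∧ ((finSigmaEquiv n m).symm b).1 = i then
        some (Fin.cast (congrArg m h.1) ((finSigmaEquiv n m).symm a).2,
          Fin.cast (congrArg m h.2) ((finSigmaEquiv n m).symm b).2)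
      else none) =
      if h : x.1 = i ∧ y.1 = i then
        some (Fin.cast (congrArg m h.1) x.2, Fin.cast (congrArg m h.2) y.2)
      else none := by
  subst ha hb
  exact deltaI_fun_eval m i x y

/-- **Coassociativity of the cocomposition of graphs** (Proposition 6.4 of
Bakalov–De Sole–Heluani–Kac): given block sizes `m_1,…,m_n` and, for each vertex of
`Fin (∑ m i)`, further block sizes `ℓ`, set `K i = ∑_{j} ℓ` (the total size of the `i`-th
composite block). Then for every graph `Γ` on `Fin (∑ j, ℓ j)` (identified with
`Fin (∑ i, K i)` by the value-preserving cast):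
(i)   `Δ_0^{m}(Δ_0^{ℓ}(Γ)) = Δ_0^{K}(Γ)`;
(ii)  `Δ_i^{m}(Δ_0^{ℓ}(Γ)) = Δ_0^{ℓ_i}(Δ_i^{K}(Γ))` for `1 ≤ i ≤ n`;
(iii) `Δ_{M_{i-1}+j}^{ℓ}(Γ) = Δ_j^{ℓ_i}(Δ_i^{K}(Γ))` for `1 ≤ i ≤ n`, `1 ≤ j ≤ m_i`,
where `ℓ_i` is the restriction of `ℓ` to the `i`-th block. -/
theorem graph_cocomposition_coassoc
    (n : ℕ) (hn : 1 ≤ n) (m : Fin n → ℕ) (hm : ∀ i, 1 ≤ m i)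
    (ℓ : Fin (∑ i, m i) → ℕ) (hℓ : ∀ j, 1 ≤ ℓ j)
    (Γ : Multiset (Fin (∑ j, ℓ j) × Fin (∑ j, ℓ j)))
    (hΓ : ∀ e ∈ Γ, e.1 ≠ e.2) :
    (graphDelta0 m (graphDelta0 ℓ Γ) =
      graphDelta0 (fun i => ∑ j : Fin (m i), ℓ (finSigmaEquiv n m ⟨i, j⟩))
        (Γ.map fun e =>
          (Fin.cast (sum_blocks m ℓ) e.1, Fin.cast (sum_blocks m ℓ) e.2))) ∧
    (∀ i : Fin n,
      graphDeltaI m i (graphDelta0 ℓ Γ) =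
        graphDelta0 (fun j : Fin (m i) => ℓ (finSigmaEquiv n m ⟨i, j⟩))
          (graphDeltaI (fun i => ∑ j : Fin (m i), ℓ (finSigmaEquiv n m ⟨i, j⟩)) i
            (Γ.map fun e =>
              (Fin.cast (sum_blocks m ℓ) e.1, Fin.cast (sum_blocks m ℓ) e.2)))) ∧
    (∀ (i : Fin n) (j : Fin (m i)),
      graphDeltaI ℓ (finSigmaEquiv n m ⟨i, j⟩) Γ =
        graphDeltaI (fun j' : Fin (m i) => ℓ (finSigmaEquiv n m ⟨i, j'⟩)) j
          (graphDeltaI (fun i => ∑ j : Fin (m i), ℓ (finSigmaEquiv n m ⟨i, j⟩)) i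
            (Γ.map fun e =>
              (Fin.cast (sum_blocks m ℓ) e.1, Fin.cast (sum_blocks m ℓ) e.2)))) := by
  refine ⟨?_, ?_, ?_⟩
  · -- part (i)
    simp only [graphDelta0, Multiset.filterMap_filterMap, Multiset.filterMap_map]
    refine congrArg (fun f => Multiset.filterMap f Γ) (funext fun e => ?_)
    obtain ⟨v1, v2⟩ := e
    obtain ⟨⟨a1, k1⟩, rfl⟩ := (finSigmaEquiv _ ℓ).surjective v1
    obtain ⟨⟨i1, j1⟩, rfl⟩ := (finSigmaEquiv n m).surjective a1
    obtain ⟨⟨a2, k2⟩, rfl⟩ := (finSigmaEquiv _ ℓ).surjective v2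
    obtain ⟨⟨i2, j2⟩, rfl⟩ := (finSigmaEquiv n m).surjective a2
    simp only [Function.comp, Equiv.symm_apply_apply, fse_assoc']
    by_cases hi : i1 = i2
    · subst hi
      by_cases hj : j1 = j2
      · subst hj
        simp
      · rw [if_neg (by simp [hj]), if_pos rfl]
        simp [Option.bind]
    · rw [if_neg (by simp [hi]), if_neg hi]
      simp [Option.bind, Equiv.symm_apply_apply, hi]
  · -- part (ii)
    intro i
    simp only [graphDelta0, graphDeltaI, Multiset.filterMap_filterMap, Multiset.filterMap_map,
      Function.comp]
    refine congrArg (fun f => Multiset.filterMap f Γ) (funext fun e => ?_)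
    obtain ⟨v1, v2⟩ := e
    obtain ⟨⟨a1, k1⟩, rfl⟩ := (finSigmaEquiv _ ℓ).surjective v1
    obtain ⟨⟨i1, j1⟩, rfl⟩ := (finSigmaEquiv n m).surjective a1
    obtain ⟨⟨a2, k2⟩, rfl⟩ := (finSigmaEquiv _ ℓ).surjective v2
    obtain ⟨⟨i2, j2⟩, rfl⟩ := (finSigmaEquiv n m).surjective a2
    dsimp only
    rw [delta0_fun_eval ℓ ⟨finSigmaEquiv n m ⟨i1, j1⟩, k1⟩ ⟨finSigmaEquiv n m ⟨i2, j2⟩, k2⟩,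
      deltaI_fun_eval' (fun i => ∑ j : Fin (m i), ℓ (finSigmaEquiv n m ⟨i, j⟩)) i (ha := fse_assoc' m ℓ i1 j1 k1) (hb := fse_assoc' m ℓ i2 j2 k2)]
    dsimp only
    by_cases hI : i1 = i ∧ i2 = i
    · obtain ⟨hi1, hi2⟩ := hI
      subst hi1
      subst hi2
      rw [dif_pos ⟨rfl, rfl⟩]
      simp only [Fin.cast_refl, id_eq]
      rw [Option.bind_some]
      dsimp only
      rw [delta0_fun_eval (fun j' => ℓ (finSigmaEquiv n m ⟨i2, j'⟩)) ⟨j1, k1⟩ ⟨j2, k2⟩]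
      dsimp only
      by_cases hj : j1 = j2
      · subst hj
        rw [if_pos rfl, if_pos rfl, Option.bind_none]
      · rw [if_neg (by simp [hj]), Option.bind_some]
        dsimp only
        rw [deltaI_fun_eval m i2 ⟨i2, j1⟩ ⟨i2, j2⟩, dif_pos ⟨rfl, rfl⟩, if_neg hj]
        simp
    · rw [dif_neg hI, Option.bind_none]
      by_cases he : finSigmaEquiv n m ⟨i1, j1⟩ = finSigmaEquiv n m ⟨i2, j2⟩
      · rw [if_pos he, Option.bind_none]
      · rw [if_neg he, Option.bind_some]
        dsimp only
        rw [deltaI_fun_eval m i ⟨i1, j1⟩ ⟨i2, j2⟩, dif_neg hI]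
  · -- part (iii)
    intro i j
    simp only [graphDelta0, graphDeltaI, Multiset.filterMap_filterMap, Multiset.filterMap_map,
      Function.comp]
    refine congrArg (fun f => Multiset.filterMap f Γ) (funext fun e => ?_)
    obtain ⟨v1, v2⟩ := e
    obtain ⟨⟨a1, k1⟩, rfl⟩ := (finSigmaEquiv _ ℓ).surjective v1
    obtain ⟨⟨i1, j1⟩, rfl⟩ := (finSigmaEquiv n m).surjective a1
    obtain ⟨⟨a2, k2⟩, rfl⟩ := (finSigmaEquiv _ ℓ).surjective v2
    obtain ⟨⟨i2, j2⟩, rfl⟩ := (finSigmaEquiv n m).surjective a2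
    dsimp only
    rw [deltaI_fun_eval ℓ (finSigmaEquiv n m ⟨i, j⟩)
        ⟨finSigmaEquiv n m ⟨i1, j1⟩, k1⟩ ⟨finSigmaEquiv n m ⟨i2, j2⟩, k2⟩,
      deltaI_fun_eval' (fun i => ∑ j : Fin (m i), ℓ (finSigmaEquiv n m ⟨i, j⟩)) i (ha := fse_assoc' m ℓ i1 j1 k1) (hb := fse_assoc' m ℓ i2 j2 k2)]
    dsimp only
    by_cases hI : i1 = i ∧ i2 = i
    · obtain ⟨hi1, hi2⟩ := hI
      subst hi1
      subst hi2
      conv_rhs => rw [dif_pos ⟨rfl, rfl⟩]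
      simp only [Fin.cast_refl, id_eq]
      rw [Option.bind_some]
      dsimp only
      rw [deltaI_fun_eval (fun j' => ℓ (finSigmaEquiv n m ⟨i2, j'⟩)) j ⟨j1, k1⟩ ⟨j2, k2⟩]
      dsimp only
      by_cases hJ : j1 = j ∧ j2 = j
      · obtain ⟨hj1, hj2⟩ := hJ
        subst hj1
        subst hj2
        rw [dif_pos ⟨rfl, rfl⟩, dif_pos ⟨rfl, rfl⟩]
      · conv_rhs => rw [dif_neg hJ]
        rw [dif_neg (by
          simp only [EmbeddingLike.apply_eq_iff_eq, Sigma.mk.inj_iff, heq_eq_eq, true_and]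
          exact hJ)]
    · rw [dif_neg (by
        simp only [EmbeddingLike.apply_eq_iff_eq, Sigma.mk.inj_iff]
        exact fun h => hI ⟨h.1.1, h.2.1⟩), dif_neg hI, Option.bind_none]
end
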